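/- arXiv:1602.04763 — 7 statements merged into one kernel-verified Lean document; each statement's English description precedes it below -/
import Mathlib

section
/- Let E be a finite set, 0 ≤ r ≤ |E|, let G = J(E,r) be the Johnson graph, let K be a set of vertices of G, and let C₁, …, C_k be the connected components of the subgraph of G induced on K. Then the following are equivalent: (1) the complement of K in the vertex set of G is the set of bases of a matroid on E of rank r; (2) for each i ∈ {1,…,k}, the complement of C_i in the vertex set of G is the set of bases of a matroid on E of rank r. -/
open Filter Set

/-- The rank of a matroid `M`: the (common) cardinality of a base of `M`. -/
noncomputable def Matroid.rkt {α : Type*} (M : Matroid α) : ℕ :=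
  sSup {k | ∃ B, M.IsBase B ∧ B.ncard = k}

/-- A circuit of a matroid: a minimal dependent set. -/
def Matroid.IsCircuit' {α : Type*} (M : Matroid α) (C : Set α) : Prop :=
  M.Dep C ∧ ∀ D, D ⊂ C → ¬ M.Dep D

/-- A hyperplane of a matroid: a maximal proper flat. -/
def Matroid.IsHyperplane {α : Type*} (M : Matroid α) (H : Set α) : Prop :=
  M.IsFlat H ∧ H ⊂ M.E ∧ ∀ F, M.IsFlat F → H ⊂ F → F = M.E

/-- A circuit-hyperplane of a matroid: a set that is both a circuit and a hyperplane. -/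
def Matroid.IsCircuitHyperplane {α : Type*} (M : Matroid α) (X : Set α) : Prop :=
  M.IsCircuit' X ∧ M.IsHyperplane X

/-- `W(M)`: the set of circuit-hyperplanes of `M`. -/
def matroidW {α : Type*} (M : Matroid α) : Set (Set α) :=
  {X | M.IsCircuitHyperplane X}

/-- `U(M)`: the dependent subsets of the ground set of cardinality `rk(M)`
that are not circuit-hyperplanes. -/
def matroidU {α : Type*} (M : Matroid α) : Set (Set α) :=
  {X | X.ncard = M.rkt ∧ M.Dep X ∧ ¬ M.IsCircuitHyperplane X}

/-- The set of matroids with ground set `{1, …, n}` (modelled as `Fin n`). -/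
def matroidsOn (n : ℕ) : Set (Matroid (Fin n)) := {M | M.E = Set.univ}

/-- The set of matroids with ground set `{1, …, n}` and rank `r`. -/
def matroidsOnRank (n r : ℕ) : Set (Matroid (Fin n)) :=
  {M | M.E = Set.univ ∧ M.rkt = r}

/-- The Johnson graph `J(E,r)`: vertices are the `r`-element subsets of `E`, and two
vertices `X, Y` are adjacent iff `|X ∩ Y| = r − 1`. -/
def johnsonGraph (α : Type*) [DecidableEq α] (r : ℕ) :
    SimpleGraph {X : Finset α // X.card = r} :=
  SimpleGraph.fromRel (fun X Y => ((X : Finset α) ∩ (Y : Finset α)).card = r - 1)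

/-- `B` is the set of bases of a matroid of rank `r` on the (finite) ground set `α`. -/
def IsBaseSetOf {α : Type*} [Fintype α] (r : ℕ) (B : Set {X : Finset α // X.card = r}) :
    Prop :=
  ∃ M : Matroid α, M.E = Set.univ ∧ M.rkt = r ∧
    ∀ X : {X : Finset α // X.card = r}, (M.IsBase ((X : Finset α) : Set α) ↔ X ∈ B)

/- ### Auxiliary lemmas -/

lemma Matroid.rkt_eq_of_base' {α : Type*} {M : Matroid α} {B : Set α} (hB : M.IsBase B) :
    M.rkt = B.ncard := by
  have hset : {k | ∃ B', M.IsBase B' ∧ B'.ncard = k} = {B.ncard} := by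
    ext k
    simp only [Set.mem_setOf_eq, Set.mem_singleton_iff]
    constructor
    · rintro ⟨B', hB', rfl⟩
      rw [Set.ncard_def, hB'.encard_eq_encard_of_isBase hB, ← Set.ncard_def]
    · rintro rfl
      exact ⟨B, hB, rfl⟩
  rw [Matroid.rkt, hset, csSup_singleton]

section Aux

variable {α : Type*} [Fintype α] [DecidableEq α] {r : ℕ}

lemma swap_card {X : Finset α} {a b : α} (hX : X.card = r) (ha : a ∈ X) (hb : b ∉ X) :
    (insert b (X.erase a)).card = r := by
  have h1 : b ∉ X.erase a := fun h => hb (Finset.mem_of_mem_erase h)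
  have h2 : 1 ≤ r := hX ▸ Finset.card_pos.mpr ⟨a, ha⟩
  rw [Finset.card_insert_of_notMem h1, Finset.card_erase_of_mem ha, hX]
  omega

lemma swap_inter {X : Finset α} {a b : α} (hb : b ∉ X) :
    X ∩ insert b (X.erase a) = X.erase a := by
  ext c
  simp only [Finset.mem_inter, Finset.mem_insert, Finset.mem_erase]
  constructor
  · rintro ⟨hcX, rfl | h⟩
    · exact absurd hcX hb
    · exact h
  · rintro ⟨h1, h2⟩
    exact ⟨h2, Or.inr ⟨h1, h2⟩⟩

lemma swap_swap_inter {X : Finset α} {a b f : α} (hb : b ∉ X) (hf : f ∉ X) (hne : f ≠ b) :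
    insert f (X.erase a) ∩ insert b (X.erase a) = X.erase a := by
  ext c
  simp only [Finset.mem_inter, Finset.mem_insert, Finset.mem_erase]
  constructor
  · rintro ⟨rfl | h1, rfl | h2⟩
    · exact absurd rfl hne
    · exact h2
    · exact h1
    · exact h1
  · exact fun h => ⟨Or.inr h, Or.inr h⟩

lemma johnson_adj {X Z : {X : Finset α // X.card = r}} (hne : (X : Finset α) ≠ (Z : Finset α))
    (h : ((X : Finset α) ∩ (Z : Finset α)).card = r - 1) : (johnsonGraph α r).Adj X Z := by
  rw [johnsonGraph, SimpleGraph.fromRel_adj]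
  exact ⟨fun hXZ => hne (congrArg Subtype.val hXZ), Or.inl h⟩

lemma swap_adj {X Z : {X : Finset α // X.card = r}} {a b : α} (ha : a ∈ (X : Finset α))
    (hb : b ∉ (X : Finset α)) (hZ : (Z : Finset α) = insert b ((X : Finset α).erase a)) :
    (johnsonGraph α r).Adj X Z := by
  have haZ : a ∉ (Z : Finset α) := by
    rw [hZ]
    simp only [Finset.mem_insert, Finset.mem_erase]
    rintro (rfl | ⟨hne, h⟩)
    · exact hb ha
    · exact hne rfl
  apply johnson_adj
  · intro h
    rw [h] at ha
    exact haZ ha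
  · rw [hZ, swap_inter hb, Finset.card_erase_of_mem ha, X.2]

lemma diff_nonempty_of_ne {X Y : Finset α} (hX : X.card = r) (hY : Y.card = r)
    {a : α} (ha : a ∈ X) (ha' : a ∉ Y) : (Y \ X).Nonempty := by
  rw [Finset.sdiff_nonempty]
  intro hsub
  have hYX : Y = X := Finset.eq_of_subset_of_card_le hsub (by rw [hX, hY])
  exact ha' (by rw [hYX]; exact ha)

/-- Connectivity: if all `r`-subsets of `H` are vertices of `K`, then any two of them
are reachable from each other inside the graph induced on `K`. -/
lemma reach_in_K {K : Set {X : Finset α // X.card = r}} {H : Set α}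
    (hall : ∀ Z : {X : Finset α // X.card = r}, ((Z : Finset α) : Set α) ⊆ H → Z ∈ K) :
    ∀ (n : ℕ) (X Y : {X : Finset α // X.card = r}) (hX : X ∈ K) (hY : Y ∈ K),
      ((X : Finset α) \ (Y : Finset α)).card = n →
      ((X : Finset α) : Set α) ⊆ H → ((Y : Finset α) : Set α) ⊆ H →
      ((johnsonGraph α r).induce K).Reachable ⟨X, hX⟩ ⟨Y, hY⟩ := by
  intro n
  induction n using Nat.strong_induction_on with
  | _ n IH =>
    intro X Y hX hY hn hXH hYH
    by_cases hXY : X = Y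
    · subst hXY
      exact SimpleGraph.Reachable.refl _
    · have hne : (X : Finset α) ≠ (Y : Finset α) := fun h => hXY (Subtype.ext h)
      have hXYne : ((X : Finset α) \ (Y : Finset α)).Nonempty := by
        rw [Finset.sdiff_nonempty]
        intro hsub
        exact hne (Finset.eq_of_subset_of_card_le hsub (by rw [X.2, Y.2]))
      obtain ⟨a, ha⟩ := hXYne
      rw [Finset.mem_sdiff] at ha
      obtain ⟨b, hb⟩ := diff_nonempty_of_ne X.2 Y.2 ha.1 ha.2
      rw [Finset.mem_sdiff] at hb
      have hcard : (insert b ((X : Finset α).erase a)).card = r := swap_card X.2 ha.1 hb.2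
      have hX'H : ((insert b ((X : Finset α).erase a) : Finset α) : Set α) ⊆ H := by
        intro c hc
        simp only [Finset.coe_insert, Set.mem_insert_iff, Finset.coe_erase, Set.mem_diff,
          Finset.mem_coe] at hc
        rcases hc with rfl | ⟨hc, -⟩
        · exact hYH (Finset.mem_coe.mpr hb.1)
        · exact hXH (Finset.mem_coe.mpr hc)
      have hX'K : (⟨insert b ((X : Finset α).erase a), hcard⟩ :
          {X : Finset α // X.card = r}) ∈ K := hall _ hX'H
      have hadj : ((johnsonGraph α r).induce K).Adj ⟨X, hX⟩ ⟨_, hX'K⟩ := by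
        simp only [SimpleGraph.comap_adj, Function.Embedding.coe_subtype]
        exact swap_adj ha.1 hb.2 rfl
      have hdiff : (insert b ((X : Finset α).erase a)) \ (Y : Finset α)
          = ((X : Finset α) \ (Y : Finset α)).erase a := by
        ext c
        simp only [Finset.mem_sdiff, Finset.mem_insert, Finset.mem_erase]
        constructor
        · rintro ⟨rfl | ⟨hca, hcX⟩, hcY⟩
          · exact absurd hb.1 hcY
          · exact ⟨hca, hcX, hcY⟩
        · rintro ⟨hca, hcX, hcY⟩
          exact ⟨Or.inr ⟨hca, hcX⟩, hcY⟩
      have hpos : 0 < n := hn ▸ Finset.card_pos.mpr ⟨a, Finset.mem_sdiff.mpr ha⟩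
      have hlt : ((insert b ((X : Finset α).erase a)) \ (Y : Finset α)).card < n := by
        rw [hdiff, Finset.card_erase_of_mem (Finset.mem_sdiff.mpr ha), hn]
        omega
      exact hadj.reachable.trans (IH _ hlt _ Y hX'K hY rfl hX'H hYH)

/-- Build a matroid of rank `r` from a nonempty family of `r`-sets with the exchange
property. -/
lemma isBaseSetOf_of_exchange {𝓑 : Set {X : Finset α // X.card = r}} (hne : 𝓑.Nonempty)
    (hex : ∀ X ∈ 𝓑, ∀ Y ∈ 𝓑, ∀ a ∈ (X : Finset α), a ∉ (Y : Finset α) →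
      ∃ b, (b ∈ (Y : Finset α) ∧ b ∉ (X : Finset α)) ∧
        ∀ Z : {X : Finset α // X.card = r},
          (Z : Finset α) = insert b ((X : Finset α).erase a) → Z ∈ 𝓑) :
    IsBaseSetOf r 𝓑 := by
  classical
  obtain ⟨X₀, hX₀⟩ := hne
  set P : Set α → Prop := fun S => ∃ X ∈ 𝓑, (((X : Finset α) : Set α)) = S with hP
  have hexch : Matroid.ExchangeProperty P := by
    rintro S T ⟨X, hX, rfl⟩ ⟨Y, hY, rfl⟩ a haST
    rw [Set.mem_diff, Finset.mem_coe, Finset.mem_coe] at haST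
    obtain ⟨b, ⟨hbY, hbX⟩, hZ⟩ := hex X hX Y hY a haST.1 haST.2
    refine ⟨b, ?_, ?_⟩
    · rw [Set.mem_diff, Finset.mem_coe, Finset.mem_coe]
      exact ⟨hbY, hbX⟩
    · refine ⟨⟨insert b ((X : Finset α).erase a), swap_card X.2 haST.1 hbX⟩, hZ _ rfl, ?_⟩
      simp [Finset.coe_insert, Finset.coe_erase]
  set M : Matroid α := Matroid.ofIsBaseOfFinite Set.finite_univ P ⟨_, X₀, hX₀, rfl⟩ hexch
    (fun B _ => Set.subset_univ B) with hM
  have hbase : ∀ S, M.IsBase S ↔ P S := fun S => by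
    rw [hM, Matroid.ofIsBaseOfFinite_isBase]
  have hbase' : ∀ X : {X : Finset α // X.card = r},
      M.IsBase ((X : Finset α) : Set α) ↔ X ∈ 𝓑 := by
    intro X
    rw [hbase]
    constructor
    · rintro ⟨Y, hY, hYX⟩
      rwa [← Subtype.ext (Finset.coe_injective hYX)]
    · exact fun h => ⟨X, h, rfl⟩
  refine ⟨M, by rw [hM, Matroid.ofIsBaseOfFinite_E], ?_, hbase'⟩
  rw [Matroid.rkt_eq_of_base' ((hbase' X₀).mpr hX₀), Set.ncard_coe_finset, X₀.2]

lemma not_base_of_subset_closure {M : Matroid α} (hME : M.E = Set.univ)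
    {I S : Set α} {e : α} (hecl : e ∉ M.closure I) (hS : S ⊆ M.closure I) : ¬ M.IsBase S := by
  intro hbase
  have h1 : M.closure S ⊆ M.closure I := by
    have h := M.closure_subset_closure hS
    rwa [M.closure_closure] at h
  rw [hbase.closure_eq, hME] at h1
  exact hecl (h1 (Set.mem_univ e))

lemma base_of_indep_ncard {M : Matroid α} (hrk : M.rkt = r) {I : Set α}
    (hI : M.Indep I) (hcard : I.ncard = r) : M.IsBase I := by
  obtain ⟨B, hB, hIB⟩ := hI.exists_isBase_superset
  have hBcard : B.ncard = r := by rw [← hrk, Matroid.rkt_eq_of_base' hB]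
  have hIBeq : I = B :=
    Set.eq_of_subset_of_ncard_le hIB (by rw [hBcard, hcard]) (Set.toFinite B)
  rwa [hIBeq]

end Aux

/-- For a set `K` of vertices of the Johnson graph `J(E,r)`, the complement
of `K` is the set of bases of a matroid of rank `r` on `E` if and only if for every connected
component `C` of the induced subgraph on `K`, the complement of `C` is the set of bases of a
matroid of rank `r` on `E`. -/
theorem base_set_iff_components {α : Type*} [Fintype α] [DecidableEq α] (r : ℕ)
    (hr : r ≤ Fintype.card α) (K : Set {X : Finset α // X.card = r}) :
    IsBaseSetOf r Kᶜ ↔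
      ∀ c : ((johnsonGraph α r).induce K).ConnectedComponent,
        IsBaseSetOf r ((Subtype.val '' c.supp))ᶜ := by
  constructor
  · rintro ⟨M, hME, hMrk, hMB⟩ c
    set C : Set {X : Finset α // X.card = r} := Subtype.val '' c.supp with hC
    have hCK : C ⊆ K := by
      rintro _ ⟨v, -, rfl⟩
      exact v.2
    -- nonemptiness of the complement of C
    have hne : (Cᶜ : Set {X : Finset α // X.card = r}).Nonempty := by
      obtain ⟨B₀, hB₀⟩ := M.exists_isBase
      have hB₀card : B₀.ncard = r := by rw [← hMrk, Matroid.rkt_eq_of_base' hB₀]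
      have hB₀fin : B₀.Finite := Set.toFinite B₀
      have hcard : hB₀fin.toFinset.card = r := by
        rw [← Set.ncard_eq_toFinset_card B₀ hB₀fin, hB₀card]
      refine ⟨⟨hB₀fin.toFinset, hcard⟩, fun hmem => ?_⟩
      have hXbase : M.IsBase (((⟨hB₀fin.toFinset, hcard⟩ :
          {X : Finset α // X.card = r}) : Finset α) : Set α) := by
        simpa [Set.Finite.coe_toFinset] using hB₀
      exact (hMB _).mp hXbase (hCK hmem)
    apply isBaseSetOf_of_exchange hne
    intro X hXB Y hYB a haX haY
    by_contra hcon
    push_neg at hcon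
    have hallC : ∀ b (hbY : b ∈ (Y : Finset α)) (hbX : b ∉ (X : Finset α)),
        (⟨insert b ((X : Finset α).erase a), swap_card X.2 haX hbX⟩ :
          {X : Finset α // X.card = r}) ∈ C := by
      intro b hbY hbX
      obtain ⟨Z, hZeq, hZC⟩ := hcon b ⟨hbY, hbX⟩
      have hZ : Z = ⟨insert b ((X : Finset α).erase a), swap_card X.2 haX hbX⟩ :=
        Subtype.ext hZeq
      rw [hZ] at hZC
      simpa using hZC
    obtain ⟨b₀, hb₀⟩ := diff_nonempty_of_ne X.2 Y.2 haX haY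
    rw [Finset.mem_sdiff] at hb₀
    have hZ₀C : (⟨insert b₀ ((X : Finset α).erase a), swap_card X.2 haX hb₀.2⟩ :
        {X : Finset α // X.card = r}) ∈ C := hallC b₀ hb₀.1 hb₀.2
    obtain ⟨v₀, hv₀supp, hv₀⟩ := hZ₀C
    by_cases hXK : X ∈ K
    · -- X is itself a vertex of K adjacent to Z₀, hence X ∈ C, contradiction.
      have hadj : ((johnsonGraph α r).induce K).Adj ⟨X, hXK⟩ v₀ := by
        simp only [SimpleGraph.comap_adj, Function.Embedding.coe_subtype, hv₀]
        exact swap_adj haX hb₀.2 rfl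
      have hXc : (⟨X, hXK⟩ : ↥K) ∈ c.supp := by
        rw [SimpleGraph.ConnectedComponent.mem_supp_iff,
          SimpleGraph.ConnectedComponent.sound hadj.reachable,
          ← SimpleGraph.ConnectedComponent.mem_supp_iff]
        exact hv₀supp
      exact hXB ⟨⟨X, hXK⟩, hXc, rfl⟩
    · -- X is a base of M.
      have hXbase : M.IsBase ((X : Finset α) : Set α) := (hMB X).mpr hXK
      set I : Set α := ((X : Finset α) : Set α) \ {a} with hI
      have hIindep : M.Indep I := hXbase.indep.subset Set.diff_subset
      have hacl : a ∉ M.closure I :=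
        hXbase.indep.notMem_closure_sdiff_of_mem (Finset.mem_coe.mpr haX)
      have hIH : I ⊆ M.closure I := M.subset_closure I (by rw [hME]; exact Set.subset_univ _)
      by_cases hYH : ((Y : Finset α) : Set α) ⊆ M.closure I
      · -- Y and Z₀ both lie in the hyperplane `closure I`; use connectivity.
        have hallK : ∀ Z : {X : Finset α // X.card = r},
            ((Z : Finset α) : Set α) ⊆ M.closure I → Z ∈ K := by
          intro Z hZ
          by_contra hZK
          exact (not_base_of_subset_closure hME hacl hZ) ((hMB Z).mpr hZK)
        have hYK : Y ∈ K := hallK Y hYH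
        have hZ₀H : (((⟨insert b₀ ((X : Finset α).erase a), swap_card X.2 haX hb₀.2⟩ :
            {X : Finset α // X.card = r}) : Finset α) : Set α) ⊆ M.closure I := by
          intro x hx
          simp only [Finset.coe_insert, Set.mem_insert_iff, Finset.coe_erase, Set.mem_diff,
            Finset.mem_coe] at hx
          rcases hx with rfl | ⟨hx1, hx2⟩
          · exact hYH (Finset.mem_coe.mpr hb₀.1)
          · exact hIH ⟨Finset.mem_coe.mpr hx1, hx2⟩
        have hZ₀K : (⟨insert b₀ ((X : Finset α).erase a), swap_card X.2 haX hb₀.2⟩ :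
            {X : Finset α // X.card = r}) ∈ K := hallK _ hZ₀H
        have hreach := reach_in_K hallK _ Y _ hYK hZ₀K rfl hYH hZ₀H
        have hv₀eq : v₀ = ⟨_, hZ₀K⟩ := Subtype.ext hv₀
        have hYc : (⟨Y, hYK⟩ : ↥K) ∈ c.supp := by
          rw [SimpleGraph.ConnectedComponent.mem_supp_iff,
            SimpleGraph.ConnectedComponent.sound hreach, ← hv₀eq,
            ← SimpleGraph.ConnectedComponent.mem_supp_iff]
          exact hv₀supp
        exact hYB ⟨⟨Y, hYK⟩, hYc, rfl⟩
      · -- some element of Y lies outside the hyperplane; the exchange gives a base,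
        -- which cannot lie in C ⊆ K.
        rw [Set.not_subset] at hYH
        obtain ⟨f, hfY, hfcl⟩ := hYH
        have hfYfin : f ∈ (Y : Finset α) := Finset.mem_coe.mp hfY
        have hfa : f ≠ a := fun h => haY (h ▸ hfYfin)
        have hfX : f ∉ (X : Finset α) := by
          intro hfX
          exact hfcl (hIH ⟨Finset.mem_coe.mpr hfX, hfa⟩)
        have hfI : f ∉ I := fun h => hfcl (hIH h)
        have hins : M.Indep (insert f I) := by
          rw [hIindep.insert_indep_iff_of_notMem hfI]
          exact ⟨by rw [hME]; trivial, hfcl⟩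
        have hIcard : I.ncard = r - 1 := by
          have : I = (((X : Finset α).erase a : Finset α) : Set α) := by
            rw [hI, Finset.coe_erase]
          rw [this, Set.ncard_coe_finset, Finset.card_erase_of_mem haX, X.2]
        have hrpos : 1 ≤ r := X.2 ▸ Finset.card_pos.mpr ⟨a, haX⟩
        have hinscard : (insert f I).ncard = r := by
          rw [Set.ncard_insert_of_notMem hfI (Set.toFinite I), hIcard]
          omega
        have hZfbase : M.IsBase (insert f I) := base_of_indep_ncard hMrk hins hinscard
        have hZfcoe : (((⟨insert f ((X : Finset α).erase a), swap_card X.2 haX hfX⟩ :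
            {X : Finset α // X.card = r}) : Finset α) : Set α) = insert f I := by
          simp [hI, Finset.coe_insert, Finset.coe_erase]
        have hZfK : (⟨insert f ((X : Finset α).erase a), swap_card X.2 haX hfX⟩ :
            {X : Finset α // X.card = r}) ∈ Kᶜ :=
          (hMB _).mp (by rw [hZfcoe]; exact hZfbase)
        exact hZfK (hCK (hallC f hfYfin hfX))
  · intro hcomp
    have hKall : (Kᶜ : Set {X : Finset α // X.card = r}).Nonempty := by
      by_contra hemp
      rw [Set.not_nonempty_iff_eq_empty] at hemp
      have hKuniv : ∀ v : {X : Finset α // X.card = r}, v ∈ K := by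
        intro v
        by_contra h
        exact absurd hemp (Set.nonempty_iff_ne_empty.mp ⟨v, h⟩)
      obtain ⟨t, -, ht⟩ := Finset.exists_subset_card_eq (s := Finset.univ) (by simpa using hr)
      set X₀ : {X : Finset α // X.card = r} := ⟨t, ht⟩ with hX₀
      set c := ((johnsonGraph α r).induce K).connectedComponentMk ⟨X₀, hKuniv X₀⟩ with hc
      obtain ⟨M, hME, hMrk, hMB⟩ := hcomp c
      obtain ⟨B₀, hB₀⟩ := M.exists_isBase
      have hB₀card : B₀.ncard = r := by rw [← hMrk, Matroid.rkt_eq_of_base' hB₀]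
      have hB₀fin : B₀.Finite := Set.toFinite B₀
      have hcard : hB₀fin.toFinset.card = r := by
        rw [← Set.ncard_eq_toFinset_card B₀ hB₀fin, hB₀card]
      set W : {X : Finset α // X.card = r} := ⟨hB₀fin.toFinset, hcard⟩ with hW
      have hWbase : M.IsBase ((W : Finset α) : Set α) := by
        simpa [hW, Set.Finite.coe_toFinset] using hB₀
      have hWnotsupp : W ∉ Subtype.val '' c.supp := (hMB W).mp hWbase
      apply hWnotsupp
      have hreach := reach_in_K (K := K) (H := (Set.univ : Set α))
        (fun Z _ => hKuniv Z) _ W X₀ (hKuniv W) (hKuniv X₀) rfl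
        (Set.subset_univ _) (Set.subset_univ _)
      refine ⟨⟨W, hKuniv W⟩, ?_, rfl⟩
      rw [SimpleGraph.ConnectedComponent.mem_supp_iff, hc]
      exact SimpleGraph.ConnectedComponent.sound hreach
    apply isBaseSetOf_of_exchange hKall
    intro X hXK Y hYK a haX haY
    by_contra hcon
    push_neg at hcon
    have hallK : ∀ b (hbY : b ∈ (Y : Finset α)) (hbX : b ∉ (X : Finset α)),
        (⟨insert b ((X : Finset α).erase a), swap_card X.2 haX hbX⟩ :
          {X : Finset α // X.card = r}) ∈ K := by
      intro b hbY hbX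
      obtain ⟨Z, hZeq, hZK⟩ := hcon b ⟨hbY, hbX⟩
      have hZ : Z = ⟨insert b ((X : Finset α).erase a), swap_card X.2 haX hbX⟩ :=
        Subtype.ext hZeq
      rw [hZ] at hZK
      simpa using hZK
    obtain ⟨b₀, hb₀⟩ := diff_nonempty_of_ne X.2 Y.2 haX haY
    rw [Finset.mem_sdiff] at hb₀
    have hZ₀K : (⟨insert b₀ ((X : Finset α).erase a), swap_card X.2 haX hb₀.2⟩ :
        {X : Finset α // X.card = r}) ∈ K := hallK b₀ hb₀.1 hb₀.2
    set c := ((johnsonGraph α r).induce K).connectedComponentMk ⟨_, hZ₀K⟩ with hc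
    obtain ⟨M, hME, hMrk, hMB⟩ := hcomp c
    have hCK : Subtype.val '' c.supp ⊆ K := by
      rintro _ ⟨v, -, rfl⟩
      exact v.2
    have hXbase : M.IsBase ((X : Finset α) : Set α) :=
      (hMB X).mpr (fun hmem => hXK (hCK hmem))
    have hYbase : M.IsBase ((Y : Finset α) : Set α) :=
      (hMB Y).mpr (fun hmem => hYK (hCK hmem))
    obtain ⟨f, hf, hZfbase⟩ := hXbase.exchange hYbase
      ⟨Finset.mem_coe.mpr haX, fun h => haY (Finset.mem_coe.mp h)⟩
    rw [Set.mem_diff] at hf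
    have hfY : f ∈ (Y : Finset α) := Finset.mem_coe.mp hf.1
    have hfX : f ∉ (X : Finset α) := fun h => hf.2 (Finset.mem_coe.mpr h)
    have hZfK : (⟨insert f ((X : Finset α).erase a), swap_card X.2 haX hfX⟩ :
        {X : Finset α // X.card = r}) ∈ K := hallK f hfY hfX
    have hZfcoe : (((⟨insert f ((X : Finset α).erase a), swap_card X.2 haX hfX⟩ :
        {X : Finset α // X.card = r}) : Finset α) : Set α)
        = insert f (((X : Finset α) : Set α) \ {a}) := by
      simp [Finset.coe_insert, Finset.coe_erase]
    have hZfnotC : (⟨insert f ((X : Finset α).erase a), swap_card X.2 haX hfX⟩ :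
        {X : Finset α // X.card = r}) ∉ Subtype.val '' c.supp :=
      (hMB _).mp (by rw [hZfcoe]; exact hZfbase)
    apply hZfnotC
    refine ⟨⟨_, hZfK⟩, ?_, rfl⟩
    rw [SimpleGraph.ConnectedComponent.mem_supp_iff, hc]
    by_cases hfb : f = b₀
    · subst hfb
      rfl
    · have hfZ₀ : f ∉ insert b₀ ((X : Finset α).erase a) := by
        simp only [Finset.mem_insert, Finset.mem_erase]
        rintro (rfl | ⟨-, h⟩)
        · exact hfb rfl
        · exact hfX h
      have hadj : ((johnsonGraph α r).induce K).Adj ⟨_, hZfK⟩ ⟨_, hZ₀K⟩ := by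
        simp only [SimpleGraph.comap_adj, Function.Embedding.coe_subtype]
        apply johnson_adj
        · intro h
          have h' : insert f ((X : Finset α).erase a)
              = insert b₀ ((X : Finset α).erase a) := h
          exact hfZ₀ (h' ▸ Finset.mem_insert_self f _)
        · rw [swap_swap_inter hb₀.2 hfX hfb, Finset.card_erase_of_mem haX, X.2]
      exact SimpleGraph.ConnectedComponent.sound hadj.reachable
end

section
/- Let E be a finite set with |E| = n, let 0 < r < n, and let S be a set of r-element subsets of E. Then S is a stable set of the Johnson graph J(E,r) if and only if the complement of S within the r-element subsets of E is the set of bases of a sparse paving matroid on E of rank r. -/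
open Filter Set

/-- A matroid is paving if all of its circuits have cardinality at least its rank. -/
def Matroid.IsPaving {α : Type*} (M : Matroid α) : Prop :=
  ∀ C, M.IsCircuit' C → M.rkt ≤ C.ncard

/-- A matroid is sparse paving if both it and its dual are paving. -/
def Matroid.IsSparsePaving {α : Type*} (M : Matroid α) : Prop :=
  M.IsPaving ∧ M✶.IsPaving

section Aux

open Set

variable {α : Type*} [Fintype α] [DecidableEq α] {r : ℕ}

lemma rkt_eq_of {β : Type*} (M : Matroid β) {k : ℕ} (h : ∀ B, M.IsBase B → B.ncard = k) :
    M.rkt = k := by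
  obtain ⟨B0, hB0⟩ := M.exists_isBase
  have hset : {k' | ∃ B, M.IsBase B ∧ B.ncard = k'} = {k} := by
    ext k'
    constructor
    · rintro ⟨B, hB, rfl⟩; exact h B hB
    · rintro rfl; exact ⟨B0, hB0, h B0 hB0⟩
  rw [Matroid.rkt, hset, csSup_singleton]

lemma exists_circuit_subset {β : Type*} (M : Matroid β) {D : Set β}
    (hDfin : D.Finite) (hD : M.Dep D) : ∃ C ⊆ D, M.IsCircuit' C := by
  by_cases h : ∃ D', D' ⊂ D ∧ M.Dep D'
  · obtain ⟨D', hss, hD'⟩ := h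
    obtain ⟨C, hCD', hC⟩ := exists_circuit_subset M (hDfin.subset hss.subset) hD'
    exact ⟨C, hCD'.trans hss.subset, hC⟩
  · push_neg at h
    exact ⟨D, subset_rfl, hD, fun D' hss => h D' hss⟩
termination_by D.ncard
decreasing_by exact Set.ncard_lt_ncard hss hDfin

lemma dual_rkt (M : Matroid α) (hE : M.E = univ) {k : ℕ}
    (h : ∀ B, M.IsBase B → B.ncard = k) : M✶.rkt = Fintype.card α - k := by
  refine rkt_eq_of _ (fun B hB => ?_)
  rw [Matroid.dual_isBase_iff'] at hB
  obtain ⟨hB1, hB2⟩ := hB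
  have hc := h _ hB1
  rw [hE] at hc hB2
  have h1 : (univ \ B).ncard = (univ : Set α).ncard - B.ncard := Set.ncard_diff hB2
  have h2 : B.ncard ≤ (univ : Set α).ncard := Set.ncard_le_ncard hB2
  rw [Set.ncard_univ, Nat.card_eq_fintype_card] at h1 h2
  omega

/-- `A` is (the coercion of) a member of `S`. -/
def IsBadSet (S : Set {X : Finset α // X.card = r}) (A : Set α) : Prop :=
  ∃ X ∈ S, ((X : Finset α) : Set α) = A

lemma IsBadSet.ncard_eq {S : Set {X : Finset α // X.card = r}} {A : Set α}
    (h : IsBadSet S A) : A.ncard = r := by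
  obtain ⟨X, -, rfl⟩ := h
  rw [Set.ncard_coe_finset, X.2]

lemma stable_pair {S : Set {X : Finset α // X.card = r}}
    (hS : S.Pairwise (fun X Y => ¬ (johnsonGraph α r).Adj X Y)) {A B : Set α}
    (hA : IsBadSet S A) (hB : IsBadSet S B) (hne : A ≠ B)
    (hint : (A ∩ B).ncard = r - 1) : False := by
  obtain ⟨X, hX, rfl⟩ := hA
  obtain ⟨Y, hY, rfl⟩ := hB
  have hXY : X ≠ Y := by rintro rfl; exact hne rfl
  refine hS hX hY hXY ?_
  rw [johnsonGraph, SimpleGraph.fromRel_adj]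
  refine ⟨hXY, Or.inl ?_⟩
  have h1 : ((↑((X : Finset α) ∩ (Y : Finset α)) : Set α)).ncard = r - 1 := by
    rw [Finset.coe_inter]; exact hint
  rwa [Set.ncard_coe_finset] at h1

lemma exists_good {S : Set {X : Finset α // X.card = r}}
    (hS : S.Pairwise (fun X Y => ¬ (johnsonGraph α r).Adj X Y)) (hr0 : 0 < r)
    {W : Set α} (hW : r + 1 ≤ W.ncard) :
    ∃ A ⊆ W, A.ncard = r ∧ ¬ IsBadSet S A := by
  obtain ⟨T, hTW, hT⟩ := Set.exists_subset_card_eq hW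
  have hTfin : T.Finite := T.toFinite
  by_contra hcon
  push_neg at hcon
  have h2 : 1 < T.ncard := by omega
  obtain ⟨e, e', he, he', hee⟩ := (Set.one_lt_ncard_iff hTfin).mp h2
  have hAcard : (T \ {e}).ncard = r := by
    rw [Set.ncard_diff_singleton_of_mem he, hT]; omega
  have hA'card : (T \ {e'}).ncard = r := by
    rw [Set.ncard_diff_singleton_of_mem he', hT]; omega
  have hbadA := hcon (T \ {e}) ((Set.diff_subset).trans hTW) hAcard
  have hbadA' := hcon (T \ {e'}) ((Set.diff_subset).trans hTW) hA'card
  have hmem : e' ∈ T \ {e} := by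
    simp only [Set.mem_diff, Set.mem_singleton_iff]
    exact ⟨he', hee.symm⟩
  have hneq : T \ {e} ≠ T \ {e'} := by
    intro h
    rw [h] at hmem
    exact hmem.2 rfl
  refine stable_pair hS hbadA hbadA' hneq ?_
  have hinter : (T \ {e}) ∩ (T \ {e'}) = (T \ {e}) \ {e'} := by
    ext x
    simp only [Set.mem_inter_iff, Set.mem_diff, Set.mem_singleton_iff]
    tauto
  rw [hinter, Set.ncard_diff_singleton_of_mem hmem, hAcard]

lemma indep_aug {S : Set {X : Finset α // X.card = r}}
    (hS : S.Pairwise (fun X Y => ¬ (johnsonGraph α r).Adj X Y)) {I J : Set α}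
    (hI : I.ncard ≤ r ∧ ¬ IsBadSet S I) (hJ : J.ncard ≤ r ∧ ¬ IsBadSet S J)
    (hlt : I.ncard < J.ncard) :
    ∃ e ∈ J, e ∉ I ∧ ((insert e I).ncard ≤ r ∧ ¬ IsBadSet S (insert e I)) := by
  have hIr : I.ncard < r := lt_of_lt_of_le hlt hJ.1
  by_cases h1 : I.ncard + 1 < r
  · obtain ⟨e, heJ, heI⟩ := Set.exists_mem_notMem_of_ncard_lt_ncard hlt I.toFinite
    refine ⟨e, heJ, heI, le_trans (Set.ncard_insert_le e I) (by omega), fun hbad => ?_⟩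
    have := hbad.ncard_eq
    have := Set.ncard_insert_le e I
    omega
  · have hI1 : I.ncard = r - 1 := by omega
    have hJr : J.ncard = r := by omega
    have hins : ∀ e : α, e ∉ I → (insert e I).ncard = r := by
      intro e he
      rw [Set.ncard_insert_of_notMem he I.toFinite]
      omega
    by_cases h2 : 1 < (J \ I).ncard
    · obtain ⟨e, f, he, hf, hef⟩ := (Set.one_lt_ncard_iff (J \ I).toFinite).mp h2
      by_cases hbe : IsBadSet S (insert e I)
      · by_cases hbf : IsBadSet S (insert f I)
        · exfalso
          have hneq : insert e I ≠ insert f I := by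
            intro h
            have : e ∈ insert f I := h ▸ Set.mem_insert e I
            rcases this with h' | h'
            · exact hef h'
            · exact he.2 h'
          have hintr : insert e I ∩ insert f I = I := by
            ext x
            simp only [Set.mem_inter_iff, Set.mem_insert_iff]
            constructor
            · rintro ⟨h' | h', h'' | h''⟩
              · exact absurd (h' ▸ h'') hef
              · exact absurd (h' ▸ h'') he.2
              · exact absurd (h'' ▸ h') hf.2
              · exact h'
            · exact fun hx => ⟨Or.inr hx, Or.inr hx⟩
          exact stable_pair hS hbe hbf hneq (by rw [hintr, hI1])
        · exact ⟨f, hf.1, hf.2, (hins f hf.2).le, hbf⟩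
      · exact ⟨e, he.1, he.2, (hins e he.2).le, hbe⟩
    · obtain ⟨e, heJ, heI⟩ := Set.exists_mem_notMem_of_ncard_lt_ncard hlt I.toFinite
      have hJIn : (J \ I).ncard = 1 := by
        have h3 : 0 < (J \ I).ncard :=
          (Set.ncard_pos (J \ I).toFinite).mpr ⟨e, heJ, heI⟩
        omega
      have hJIcard : (J ∩ I).ncard = r - 1 := by
        have := Set.ncard_inter_add_ncard_diff_eq_ncard J I J.toFinite
        omega
      have hIJ : I ⊆ J := by
        have : J ∩ I = I := by
          apply Set.eq_of_subset_of_ncard_le Set.inter_subset_right (by omega) I.toFinite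
        rw [← this]; exact Set.inter_subset_left
      have hJeq : insert e I = J := by
        apply Set.eq_of_subset_of_ncard_le
        · exact Set.insert_subset heJ hIJ
        · rw [hins e heI, hJr]
        · exact J.toFinite
      exact ⟨e, heJ, heI, by rw [hJeq]; exact ⟨hJr.le, hJ.2⟩⟩

end Aux

/-- Let `|E| = n` and `0 < r < n`. A set `S` of `r`-element subsets of `E`
is a stable set of the Johnson graph `J(E,r)` if and only if its complement among the
`r`-element subsets is the set of bases of a sparse paving matroid of rank `r` on `E`. -/
theorem stable_iff_sparse_paving {α : Type*} [Fintype α] [DecidableEq α] {n r : ℕ}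
    (hn : Fintype.card α = n) (hr0 : 0 < r) (hrn : r < n)
    (S : Set {X : Finset α // X.card = r}) :
    S.Pairwise (fun X Y => ¬ (johnsonGraph α r).Adj X Y) ↔
      ∃ M : Matroid α, M.E = Set.univ ∧ M.rkt = r ∧ M.IsSparsePaving ∧
        ∀ X : {X : Finset α // X.card = r},
          (M.IsBase ((X : Finset α) : Set α) ↔ X ∉ S) := by
  constructor
  · -- forward: stable set gives sparse paving matroid
    intro hS
    classical
    set Ind : Set α → Prop := fun I => I.ncard ≤ r ∧ ¬ IsBadSet S I with hInd_def
    have hn' : (univ : Set α).ncard = n := by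
      rw [Set.ncard_univ, Nat.card_eq_fintype_card, hn]
    have hempty : Ind ∅ := by
      refine ⟨by simp, fun hbad => ?_⟩
      have := hbad.ncard_eq
      simp only [Set.ncard_empty] at this
      omega
    have hsubset : ∀ ⦃I J : Set α⦄, Ind J → I ⊆ J → Ind I := by
      intro I J hJ hIJ
      refine ⟨le_trans (Set.ncard_le_ncard hIJ J.toFinite) hJ.1, fun hbad => ?_⟩
      have hIr := hbad.ncard_eq
      have hIJ' : I = J :=
        Set.eq_of_subset_of_ncard_le hIJ (by omega) J.toFinite
      exact hJ.2 (hIJ' ▸ hbad)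
    have haug : ∀ ⦃I J : Set α⦄, Ind I → Ind J → I.ncard < J.ncard →
        ∃ e ∈ J, e ∉ I ∧ Ind (insert e I) := fun I J hI hJ hlt =>
      indep_aug hS hI hJ hlt
    set M : Matroid α := (IndepMatroid.ofFinite (Set.finite_univ) Ind hempty hsubset haug
      (fun I _ => Set.subset_univ I)).matroid with hM_def
    have hE : M.E = univ := rfl
    have hIndep : ∀ I, M.Indep I ↔ Ind I := by
      intro I
      rw [hM_def, IndepMatroid.matroid_indep_iff, IndepMatroid.ofFinite_indep]
    have hbase : ∀ B, M.IsBase B ↔ (B.ncard = r ∧ ¬ IsBadSet S B) := by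
      intro B
      constructor
      · intro hB
        have hIndB : Ind B := (hIndep B).mp hB.indep
        refine ⟨?_, hIndB.2⟩
        by_contra hne
        have hlt : B.ncard < r := lt_of_le_of_ne hIndB.1 hne
        obtain ⟨A, -, hAcard, hAgood⟩ := exists_good hS hr0 (W := univ) (by omega)
        obtain ⟨e, heA, heB, hins⟩ := haug hIndB ⟨hAcard.le, hAgood⟩ (by omega)
        have hmax := (Matroid.isBase_iff_maximal_indep.mp hB).2
          ((hIndep _).mpr hins) (Set.subset_insert e B)
        exact heB (hmax (Set.mem_insert e B))
      · rintro ⟨hc, hb⟩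
        have hIndB : M.Indep B := (hIndep B).mpr ⟨hc.le, hb⟩
        obtain ⟨B₂, hB₂, hsub⟩ := hIndB.exists_isBase_superset
        have hIndB₂ : Ind B₂ := (hIndep B₂).mp hB₂.indep
        have : B = B₂ :=
          Set.eq_of_subset_of_ncard_le hsub (by omega) B₂.toFinite
        exact this ▸ hB₂
    have hcard : ∀ B, M.IsBase B → B.ncard = r := fun B hB => ((hbase B).mp hB).1
    have hrk : M.rkt = r := rkt_eq_of M hcard
    have hdrk : M✶.rkt = n - r := by
      rw [dual_rkt M hE hcard, hn]
    refine ⟨M, hE, hrk, ⟨?_, ?_⟩, ?_⟩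
    · -- M is paving
      intro C hC
      rw [hrk]
      by_contra hlt
      push_neg at hlt
      have hIndC : Ind C := ⟨hlt.le, fun hbad => by have := hbad.ncard_eq; omega⟩
      exact hC.1.not_indep ((hIndep C).mpr hIndC)
    · -- dual is paving
      intro C hC
      rw [hdrk]
      by_contra hlt
      push_neg at hlt
      have hCground : C ⊆ univ := by
        have := hC.1.subset_ground
        rwa [Matroid.dual_ground, hE] at this
      have hCn : (univ \ C).ncard = n - C.ncard := by
        rw [Set.ncard_diff hCground, hn']
      have hCle : C.ncard ≤ n := hn' ▸ Set.ncard_le_ncard hCground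
      obtain ⟨A, hAW, hAcard, hAgood⟩ := exists_good hS hr0 (W := univ \ C) (by omega)
      have hAbase : M.IsBase A := (hbase A).mpr ⟨hAcard, hAgood⟩
      have hdisj : Disjoint C A := ((Set.subset_diff.mp hAW).2).symm
      exact hC.1.not_indep (Matroid.dual_indep_iff_exists'.mpr
        ⟨hE ▸ hCground, A, hAbase, hdisj⟩)
    · intro X
      rw [hbase]
      have hXcard : ((X : Finset α) : Set α).ncard = r := by
        rw [Set.ncard_coe_finset, X.2]
      simp only [hXcard, true_and]
      constructor
      · intro hgood hmem
        exact hgood ⟨X, hmem, rfl⟩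
      · rintro hnmem ⟨Y, hY, hco⟩
        have : Y = X := Subtype.coe_injective (Finset.coe_injective hco)
        exact hnmem (this ▸ hY)
  · -- backward: sparse paving matroid gives stable set
    rintro ⟨M, hE, hrk, ⟨hpav, hpavd⟩, hbases⟩
    intro X hX Y hY hne hAdj
    rw [johnsonGraph, SimpleGraph.fromRel_adj] at hAdj
    set A : Set α := ((X : Finset α) : Set α) with hA_def
    set B : Set α := ((Y : Finset α) : Set α) with hB_def
    have hn' : (univ : Set α).ncard = n := by
      rw [Set.ncard_univ, Nat.card_eq_fintype_card, hn]
    have hAcard : A.ncard = r := by rw [hA_def, Set.ncard_coe_finset, X.2]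
    have hBcard : B.ncard = r := by rw [hB_def, Set.ncard_coe_finset, Y.2]
    have hint : (A ∩ B).ncard = r - 1 := by
      rcases hAdj.2 with h | h
      · rw [hA_def, hB_def, ← Finset.coe_inter, Set.ncard_coe_finset]; exact h
      · rw [hA_def, hB_def, ← Finset.coe_inter, Set.ncard_coe_finset,
          Finset.inter_comm]; exact h
    have hABne : A ≠ B := fun h =>
      hne (Subtype.coe_injective (Finset.coe_injective h))
    -- all bases have cardinality r
    have hcard : ∀ B', M.IsBase B' → B'.ncard = r := by
      obtain ⟨B0, hB0⟩ := M.exists_isBase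
      have hall : ∀ B', M.IsBase B' → B'.ncard = B0.ncard := fun B' hB' =>
        hB'.ncard_eq_ncard_of_isBase hB0
      have : M.rkt = B0.ncard := rkt_eq_of M hall
      intro B' hB'
      rw [hall B' hB', ← this, hrk]
    -- every dependent set has cardinality at least r
    have hdep_ge : ∀ D, M.Dep D → r ≤ D.ncard := by
      intro D hD
      obtain ⟨C, hCD, hC⟩ := exists_circuit_subset M D.toFinite hD
      have h1 := hpav C hC
      rw [hrk] at h1
      exact le_trans h1 (Set.ncard_le_ncard hCD D.toFinite)
    have hindep_small : ∀ D : Set α, D.ncard < r → M.Indep D := by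
      intro D hD
      rcases Matroid.indep_or_dep (M := M) (X := D) (hE ▸ Set.subset_univ D) with h | h
      · exact h
      · exact absurd (hdep_ge D h) (by omega)
    -- A and B are dependent
    have hdepOf : ∀ (Z : {Z : Finset α // Z.card = r}), Z ∈ S →
        M.Dep ((Z : Finset α) : Set α) := by
      intro Z hZ
      set C : Set α := ((Z : Finset α) : Set α)
      have hCcard : C.ncard = r := by rw [Set.ncard_coe_finset, Z.2]
      have hnb : ¬ M.IsBase C := fun hb => ((hbases Z).mp hb) hZ
      rcases Matroid.indep_or_dep (M := M) (X := C) (hE ▸ Set.subset_univ C) with h | h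
      · exfalso
        obtain ⟨B₂, hB₂, hsub⟩ := h.exists_isBase_superset
        have : C = B₂ :=
          Set.eq_of_subset_of_ncard_le hsub (by rw [hcard B₂ hB₂, hCcard]) B₂.toFinite
        exact hnb (this ▸ hB₂)
      · exact h
    have hdepA : M.Dep A := hdepOf X hX
    have hdepB : M.Dep B := hdepOf Y hY
    -- the singletons f, g
    have hABdiff : (A \ B).ncard = 1 := by
      have := Set.ncard_inter_add_ncard_diff_eq_ncard A B A.toFinite
      omega
    have hBAdiff : (B \ A).ncard = 1 := by
      have h1 := Set.ncard_inter_add_ncard_diff_eq_ncard B A B.toFinite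
      rw [Set.inter_comm] at h1
      omega
    obtain ⟨f, hf⟩ := Set.ncard_eq_one.mp hABdiff
    obtain ⟨g, hg⟩ := Set.ncard_eq_one.mp hBAdiff
    set T : Set α := A ∪ B with hT_def
    have hTcard : T.ncard = r + 1 := by
      have h5 := Set.ncard_union_add_ncard_inter A B A.toFinite B.toFinite
      rw [hint, hAcard, hBcard, ← hT_def] at h5
      omega
    have hI0 : M.Indep (A ∩ B) := hindep_small _ (by omega)
    -- every r-subset of T is dependent
    have hTdep : ∀ e ∈ T, M.Dep (T \ {e}) := by
      intro e he
      by_cases heA : e ∈ A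
      · by_cases heB : e ∈ B
        · -- hard case: e ∈ A ∩ B
          by_contra hcon
          have hind : M.Indep (T \ {e}) := by
            rcases Matroid.indep_or_dep (M := M) (X := T \ {e})
              (hE ▸ Set.subset_univ _) with h | h
            · exact h
            · exact absurd h hcon
          have hlt : (A ∩ B).encard < (T \ {e}).encard := by
            rw [← (A ∩ B).toFinite.cast_ncard_eq, ← (T \ {e}).toFinite.cast_ncard_eq]
            rw [Nat.cast_lt]
            rw [Set.ncard_diff_singleton_of_mem he, hTcard, hint]
            omega
          obtain ⟨z, hz, hzind⟩ := hI0.augment hind hlt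
          have hzT : z ∈ T := hz.1.1
          have hzne : z ≠ e := hz.1.2
          have hzni : z ∉ A ∩ B := hz.2
          have hzfg : z = f ∨ z = g := by
            rcases hzT with h' | h'
            · left
              have : z ∈ A \ B := ⟨h', fun hzB => hzni ⟨h', hzB⟩⟩
              rwa [hf, Set.mem_singleton_iff] at this
            · right
              by_cases hzA : z ∈ A
              · exact absurd ⟨hzA, h'⟩ hzni
              · have : z ∈ B \ A := ⟨h', hzA⟩
                rwa [hg, Set.mem_singleton_iff] at this
          rcases hzfg with rfl | rfl
          · have hAeq : insert z (A ∩ B) = A := by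
              rw [Set.insert_eq, ← hf, Set.union_comm, Set.inter_union_diff]
            exact hdepA.not_indep (hAeq ▸ hzind)
          · have hBeq : insert z (A ∩ B) = B := by
              rw [Set.insert_eq, ← hg, Set.union_comm, Set.inter_comm,
                Set.inter_union_diff]
            exact hdepB.not_indep (hBeq ▸ hzind)
        · -- e ∈ A \ B : B ⊆ T \ {e}
          refine hdepB.superset (fun x hx => ⟨Or.inr hx, ?_⟩) (hE ▸ Set.subset_univ _)
          rintro rfl
          exact heB hx
      · -- e ∉ A, so e ∈ B and A ⊆ T \ {e}
        refine hdepA.superset (fun x hx => ⟨Or.inl hx, ?_⟩) (hE ▸ Set.subset_univ _)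
        rintro rfl
        exact heA hx
    -- T contains no base
    have hTnobase : ∀ B₂, M.IsBase B₂ → ¬ (B₂ ⊆ T) := by
      intro B₂ hB₂ hsub
      have hB₂card : B₂.ncard = r := hcard B₂ hB₂
      have hdiff : (T \ B₂).ncard = 1 := by
        rw [Set.ncard_diff hsub B₂.toFinite]
        omega
      obtain ⟨e, he⟩ := Set.ncard_eq_one.mp hdiff
      have heTB : e ∈ T \ B₂ := by rw [he]; exact Set.mem_singleton e
      have heT : e ∈ T := heTB.1
      have hsub2 : B₂ ⊆ T \ {e} := by
        intro x hx
        refine ⟨hsub hx, fun hxe => ?_⟩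
        rw [Set.mem_singleton_iff] at hxe
        subst hxe
        exact heTB.2 hx
      have hecard : (T \ {e}).ncard ≤ B₂.ncard := by
        rw [Set.ncard_diff_singleton_of_mem heT, hTcard, hB₂card]
        omega
      have hB₂eq : B₂ = T \ {e} :=
        Set.eq_of_subset_of_ncard_le hsub2 hecard ((T \ {e}).toFinite)
      exact (hTdep e heT).not_indep (hB₂eq ▸ hB₂.indep)
    -- the complement of T is dual-dependent, contradicting dual paving
    have hDdep : M✶.Dep (univ \ T) := by
      rw [Matroid.dep_iff]
      refine ⟨fun hind => ?_, by rw [Matroid.dual_ground, hE]; exact Set.diff_subset⟩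
      rw [Matroid.dual_indep_iff_exists'] at hind
      obtain ⟨-, B₂, hB₂, hdisj⟩ := hind
      refine hTnobase B₂ hB₂ (fun x hx => ?_)
      by_contra hxT
      exact Set.disjoint_left.mp hdisj ⟨Set.mem_univ x, hxT⟩ hx
    obtain ⟨C, hCD, hC⟩ := exists_circuit_subset M✶ (univ \ T).toFinite hDdep
    have h1 := hpavd C hC
    have h2 : M✶.rkt = n - r := by rw [dual_rkt M hE hcard, hn]
    have h3 : C.ncard ≤ (univ \ T).ncard :=
      Set.ncard_le_ncard hCD (univ \ T).toFinite
    have h4 : (univ \ T).ncard = n - (r + 1) := by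
      rw [Set.ncard_diff (Set.subset_univ T), hn', hTcard]
    rw [h2] at h1
    omega
end

section
/- Let G = (V,E) be a finite graph that is regular of degree d ≥ 1 and whose adjacency matrix has smallest eigenvalue −λ, and let N = |V|. Set σ = (ln(d+1)+1)/(d+λ) and α = λ/(d+λ). Then the number i(G) of stable sets of G satisfies i(G) ≤ (Σ_{i=0}^{⌈σN⌉} C(N,i)) · 2^{αN}. -/
open Filter Set

/-- `−λ` is the smallest eigenvalue of the adjacency matrix of `G`. -/
def SmallestAdjEigenvalue {V : Type*} [Fintype V] [DecidableEq V]
    (G : SimpleGraph V) [DecidableRel G.Adj] (lam : ℝ) : Prop :=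
  Module.End.HasEigenvalue (Matrix.toLin' (G.adjMatrix ℝ)) (-lam) ∧
    ∀ μ : ℝ, Module.End.HasEigenvalue (Matrix.toLin' (G.adjMatrix ℝ)) μ → -lam ≤ μ

section ContainerProof

set_option linter.unusedSectionVars false
set_option linter.unusedVariables false
set_option maxHeartbeats 1000000
open scoped RealInnerProductSpace
variable {V : Type*} [Fintype V] [DecidableEq V]

lemma eig_transfer (A : Matrix V V ℝ) (μ : ℝ) :
    Module.End.HasEigenvalue (Matrix.toEuclideanLin A) μ ↔
      Module.End.HasEigenvalue (Matrix.toLin' A) μ := by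
  rw [Module.End.hasEigenvalue_iff_mem_spectrum,
    Module.End.hasEigenvalue_iff_mem_spectrum]
  have h1 : spectrum ℝ (Matrix.toEuclideanLin A) = spectrum ℝ A :=
    AlgEquiv.spectrum_eq (Matrix.toLinAlgEquiv (PiLp.basisFun 2 ℝ V)) _
  have h2 : spectrum ℝ (Matrix.toLin' A) = spectrum ℝ A := by
    have : Matrix.toLin' (R := ℝ) (m := V) (n := V) =
        Matrix.toLin (Pi.basisFun ℝ V) (Pi.basisFun ℝ V) := Matrix.toLin_eq_toLin'.symm
    rw [this]
    exact AlgEquiv.spectrum_eq (Matrix.toLinAlgEquiv (Pi.basisFun ℝ V)) _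
  rw [h1, h2]

lemma qf_bound (A : Matrix V V ℝ) (hA : A.IsHermitian) (lam : ℝ)
    (h2 : ∀ μ : ℝ, Module.End.HasEigenvalue (Matrix.toLin' A) μ → -lam ≤ μ)
    (x : EuclideanSpace ℝ V) :
    -lam * ‖x‖ ^ 2 ≤ ⟪(Matrix.toEuclideanLin A) x, x⟫ := by
  rcases eq_or_ne x 0 with rfl | hx
  · simp
  haveI : Nonempty V := by
    by_contra h
    rw [not_nonempty_iff] at h
    exact hx (Subsingleton.elim _ _)
  haveI : Nontrivial (EuclideanSpace ℝ V) := ⟨x, 0, hx⟩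
  set T : Module.End ℝ (EuclideanSpace ℝ V) := Matrix.toEuclideanLin A with hT
  have hsymm : T.IsSymmetric := Matrix.isHermitian_iff_isSymmetric.1 hA
  have heig := hsymm.hasEigenvalue_iInf_of_finiteDimensional
  set μ₀ : ℝ := ⨅ y : { y : EuclideanSpace ℝ V // y ≠ 0 },
    RCLike.re ⟪T y, (y : EuclideanSpace ℝ V)⟫ / ‖(y : EuclideanSpace ℝ V)‖ ^ 2 with hμ₀
  have hlam0 : -lam ≤ μ₀ := h2 μ₀ ((eig_transfer A μ₀).1 heig)
  -- bddBelow
  set T' := LinearMap.toContinuousLinearMap T with hT'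
  have hbdd : BddBelow (Set.range fun y : { y : EuclideanSpace ℝ V // y ≠ 0 } =>
      RCLike.re ⟪T y, (y : EuclideanSpace ℝ V)⟫ / ‖(y : EuclideanSpace ℝ V)‖ ^ 2) := by
    refine ⟨-‖T'‖, ?_⟩
    rintro _ ⟨y, rfl⟩
    have hy : (0:ℝ) < ‖(y : EuclideanSpace ℝ V)‖ ^ 2 :=
      pow_pos (norm_pos_iff.2 y.prop) 2
    rw [le_div_iff₀ hy]
    have h1 : |⟪T y, (y : EuclideanSpace ℝ V)⟫| ≤ ‖T (y : EuclideanSpace ℝ V)‖ * ‖(y : EuclideanSpace ℝ V)‖ :=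
      abs_real_inner_le_norm _ _
    have h2 : ‖T (y : EuclideanSpace ℝ V)‖ ≤ ‖T'‖ * ‖(y : EuclideanSpace ℝ V)‖ :=
      T'.le_opNorm _
    have h3 : -(‖T'‖ * ‖(y : EuclideanSpace ℝ V)‖ ^ 2) ≤ ⟪T y, (y : EuclideanSpace ℝ V)⟫ := by
      have := (abs_le.1 h1).1
      nlinarith [norm_nonneg (y : EuclideanSpace ℝ V), norm_nonneg (T (y : EuclideanSpace ℝ V))]
    simpa using h3
  have hle : μ₀ ≤ RCLike.re ⟪T x, x⟫ / ‖x‖ ^ 2 := ciInf_le hbdd ⟨x, hx⟩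
  have hx2 : (0:ℝ) < ‖x‖ ^ 2 := pow_pos (norm_pos_iff.2 hx) 2
  have := mul_le_mul_of_nonneg_right (hlam0.trans hle) hx2.le
  rw [div_mul_cancel₀] at this
  · simpa using this
  · exact hx2.ne'

lemma adj_isHermitian (G : SimpleGraph V) [DecidableRel G.Adj] :
    (G.adjMatrix ℝ).IsHermitian := by
  rw [Matrix.IsHermitian, Matrix.conjTranspose_eq_transpose_of_trivial]
  exact G.isSymm_adjMatrix

lemma qf_coord (G : SimpleGraph V) [DecidableRel G.Adj] (lam : ℝ)
    (h2 : ∀ μ : ℝ, Module.End.HasEigenvalue (Matrix.toLin' (G.adjMatrix ℝ)) μ → -lam ≤ μ)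
    (x : V → ℝ) :
    -lam * ∑ v, x v ^ 2 ≤ ∑ v, (∑ u ∈ G.neighborFinset v, x u) * x v := by
  have h := qf_bound (G.adjMatrix ℝ) (adj_isHermitian G) lam h2
    ((WithLp.equiv 2 (V → ℝ)).symm x)
  rw [Matrix.toEuclideanLin_apply] at h
  simp only [PiLp.inner_apply, RCLike.inner_apply, conj_trivial,
    EuclideanSpace.norm_eq] at h
  rw [Real.sq_sqrt (by positivity)] at h
  simp [SimpleGraph.adjMatrix_mulVec_apply, Real.norm_eq_abs, sq_abs] at h ⊢
  convert h using 1
  exact Finset.sum_congr rfl fun v _ => mul_comm _ _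

section Algo

variable (G : SimpleGraph V) [DecidableRel G.Adj] (a : ℝ)

/-- a vertex of `C` of maximal degree inside `C`. -/
noncomputable def pickv (C : Finset V) (h : C.Nonempty) : V :=
  (C.exists_max_image (fun v => (C.filter (G.Adj v)).card) h).choose

lemma pickv_mem (C : Finset V) (h : C.Nonempty) : pickv G C h ∈ C :=
  (C.exists_max_image (fun v => (C.filter (G.Adj v)).card) h).choose_spec.1

lemma pickv_max (C : Finset V) (h : C.Nonempty) :
    ∀ w ∈ C, (C.filter (G.Adj w)).card ≤ (C.filter (G.Adj (pickv G C h))).card :=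
  (C.exists_max_image (fun v => (C.filter (G.Adj v)).card) h).choose_spec.2

omit [Fintype V] in
lemma sdiff_card_lt (C : Finset V) {v : V} (hv : v ∈ C) (s : Finset V) :
    (C \ insert v s).card < C.card := by
  have hsub : C \ insert v s ⊆ C.erase v := by
    intro x hx
    simp only [Finset.mem_sdiff, Finset.mem_insert, not_or] at hx
    exact Finset.mem_erase.2 ⟨hx.2.1, hx.1⟩
  exact lt_of_le_of_lt (Finset.card_le_card hsub) (Finset.card_erase_lt_of_mem hv)

/-- The container algorithm, run against an independent set `I`.
Returns the fingerprint `T` and the final candidate set. -/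
noncomputable def runI (I : Finset V) (C : Finset V) : Finset V × Finset V :=
  if h : (C.card : ℝ) ≤ a ∨ C = ∅ then (∅, C)
  else
    have hne : C.Nonempty := Finset.nonempty_iff_ne_empty.2 (not_or.1 h).2
    have hv : pickv G C hne ∈ C := pickv_mem G C hne
    if pickv G C hne ∈ I then
      (insert (pickv G C hne)
        (runI I (C \ insert (pickv G C hne) (C.filter (G.Adj (pickv G C hne))))).1,
       (runI I (C \ insert (pickv G C hne) (C.filter (G.Adj (pickv G C hne))))).2)
    else runI I (C.erase (pickv G C hne))
termination_by C.card
decreasing_by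
  · exact sdiff_card_lt C hv _
  · exact Finset.card_erase_lt_of_mem hv

/-- The reconstruction algorithm, run against a fingerprint `T`. -/
noncomputable def runT (T : Finset V) (C : Finset V) : Finset V :=
  if h : (C.card : ℝ) ≤ a ∨ C = ∅ then C
  else
    have hne : C.Nonempty := Finset.nonempty_iff_ne_empty.2 (not_or.1 h).2
    have hv : pickv G C hne ∈ C := pickv_mem G C hne
    if pickv G C hne ∈ T then
      runT T (C \ insert (pickv G C hne) (C.filter (G.Adj (pickv G C hne))))
    else runT T (C.erase (pickv G C hne))
termination_by C.card
decreasing_by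
  · exact sdiff_card_lt C hv _
  · exact Finset.card_erase_lt_of_mem hv

end Algo

section AlgoLemmas

variable (G : SimpleGraph V) [DecidableRel G.Adj] (a : ℝ)

lemma ssubset_hit {C : Finset V} (hne : C.Nonempty) :
    C \ insert (pickv G C hne) (C.filter (G.Adj (pickv G C hne))) ⊂ C :=
  Finset.sdiff_ssubset (Finset.insert_subset (pickv_mem G C hne) (Finset.filter_subset _ _))
    (Finset.insert_nonempty _ _)

lemma runT_card (ha : 0 ≤ a) (T : Finset V) (C : Finset V) :
    ((runT G a T C).card : ℝ) ≤ a := by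
  induction C using Finset.strongInductionOn with
  | _ C ih =>
    rw [runT]; dsimp only
    split_ifs with h1 h2
    · rcases h1 with h | h
      · exact h
      · simpa [h] using ha
    · exact ih _ (ssubset_hit G _)
    · exact ih _ (Finset.erase_ssubset (pickv_mem G C _))

lemma runI_T_subset (I : Finset V) (C : Finset V) :
    (runI G a I C).1 ⊆ I ∩ C := by
  induction C using Finset.strongInductionOn with
  | _ C ih =>
    rw [runI]; dsimp only
    split_ifs with h1 h2
    · simp
    · intro w hw
      rcases Finset.mem_insert.1 hw with rfl | hw
      · exact Finset.mem_inter.2 ⟨h2, pickv_mem G C _⟩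
      · have := ih _ (ssubset_hit G _) hw
        rw [Finset.mem_inter] at this ⊢
        exact ⟨this.1, (Finset.mem_sdiff.1 this.2).1⟩
    · intro w hw
      have := ih _ (Finset.erase_ssubset (pickv_mem G C _)) hw
      rw [Finset.mem_inter] at this ⊢
      exact ⟨this.1, Finset.mem_of_mem_erase this.2⟩

lemma runI_cover (I : Finset V) (hI : ∀ u ∈ I, ∀ v ∈ I, ¬ G.Adj u v) (C : Finset V) :
    I ∩ C ⊆ (runI G a I C).1 ∪ (runI G a I C).2 := by
  induction C using Finset.strongInductionOn with
  | _ C ih =>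
    rw [runI]; dsimp only
    split_ifs with h1 h2
    · intro w hw
      exact Finset.mem_union_right _ (Finset.mem_inter.1 hw).2
    · intro w hw
      obtain ⟨hwI, hwC⟩ := Finset.mem_inter.1 hw
      by_cases hwv : w = pickv G C (Finset.nonempty_iff_ne_empty.2 (not_or.1 h1).2)
      · exact Finset.mem_union_left _ (by simp [hwv])
      · have hw2 : w ∈ I ∩ (C \ insert (pickv G C (Finset.nonempty_iff_ne_empty.2
            (not_or.1 h1).2)) (C.filter (G.Adj (pickv G C (Finset.nonempty_iff_ne_empty.2
            (not_or.1 h1).2))))) := by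
          rw [Finset.mem_inter, Finset.mem_sdiff, Finset.mem_insert]
          refine ⟨hwI, hwC, ?_⟩
          rintro (h | h)
          · exact hwv h
          · exact hI _ h2 _ hwI (Finset.mem_filter.1 h).2
        have := ih _ (ssubset_hit G _) hw2
        rcases Finset.mem_union.1 this with h | h
        · exact Finset.mem_union_left _ (Finset.mem_insert_of_mem h)
        · exact Finset.mem_union_right _ h
    · intro w hw
      obtain ⟨hwI, hwC⟩ := Finset.mem_inter.1 hw
      have hwv : w ≠ pickv G C (Finset.nonempty_iff_ne_empty.2 (not_or.1 h1).2) := by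
        rintro rfl; exact h2 hwI
      exact ih _ (Finset.erase_ssubset (pickv_mem G C _))
        (Finset.mem_inter.2 ⟨hwI, Finset.mem_erase.2 ⟨hwv, hwC⟩⟩)

lemma runT_congr (T T' : Finset V) (C : Finset V) :
    (∀ w ∈ C, (w ∈ T ↔ w ∈ T')) → runT G a T C = runT G a T' C := by
  induction C using Finset.strongInductionOn with
  | _ C ih =>
    intro h
    rw [runT, runT]; dsimp only
    split_ifs with h1 h2 h3 h4
    · rfl
    · exact ih _ (ssubset_hit G _) fun w hw =>
        h w (Finset.sdiff_subset hw)
    · exact absurd ((h _ (pickv_mem G C _)).1 h2) h3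
    · exact absurd ((h _ (pickv_mem G C _)).2 h4) h2
    · exact ih _ (Finset.erase_ssubset (pickv_mem G C _)) fun w hw =>
        h w (Finset.mem_of_mem_erase hw)

lemma runI_runT (I : Finset V) (C : Finset V) :
    runT G a (runI G a I C).1 C = (runI G a I C).2 := by
  induction C using Finset.strongInductionOn with
  | _ C ih =>
    rw [runI]; dsimp only
    split_ifs with h1 h2
    · rw [runT, dif_pos h1]
    · rw [runT]; dsimp only
      rw [dif_neg h1, if_pos (Finset.mem_insert_self _ _)]
      rw [runT_congr G a _ (runI G a I (C \ insert (pickv G C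
          (Finset.nonempty_iff_ne_empty.2 (not_or.1 h1).2))
          (C.filter (G.Adj (pickv G C (Finset.nonempty_iff_ne_empty.2
          (not_or.1 h1).2)))))).1 _ ?_]
      · exact ih _ (ssubset_hit G _)
      · intro w hw
        have hwv : w ≠ pickv G C (Finset.nonempty_iff_ne_empty.2 (not_or.1 h1).2) := by
          rintro rfl
          exact (Finset.mem_sdiff.1 hw).2 (Finset.mem_insert_self _ _)
        simp [Finset.mem_insert, hwv]
    · rw [runT]; dsimp only
      rw [dif_neg h1, if_neg, ih _ (Finset.erase_ssubset (pickv_mem G C _))]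
      intro hmem
      exact h2 (Finset.mem_inter.1 (runI_T_subset G a I _ hmem)).1

end AlgoLemmas

section Analytic

variable (G : SimpleGraph V) [DecidableRel G.Adj]

lemma notin_filter_self (C : Finset V) (v : V) : v ∉ C.filter (G.Adj v) :=
  fun h => G.irrefl (Finset.mem_filter.1 h).2

lemma hit_card {C : Finset V} (hne : C.Nonempty) :
    ((C \ insert (pickv G C hne) (C.filter (G.Adj (pickv G C hne)))).card : ℝ) =
      (C.card : ℝ) - ((C.filter (G.Adj (pickv G C hne))).card + 1) := by
  have hsub : insert (pickv G C hne) (C.filter (G.Adj (pickv G C hne))) ⊆ C :=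
    Finset.insert_subset (pickv_mem G C hne) (Finset.filter_subset _ _)
  rw [Finset.card_sdiff_of_subset hsub,
    Nat.cast_sub (Finset.card_le_card hsub),
    Finset.card_insert_of_notMem (notin_filter_self G C _)]
  push_cast
  ring

lemma hits_pot (t a lam : ℝ) (ht : 0 < t) (hN : 0 < (Fintype.card V : ℝ))
    (hq : t ≤ (Fintype.card V : ℝ)) (hta : t * a = lam * (Fintype.card V : ℝ))
    (hdeg : ∀ (C : Finset V) (hne : C.Nonempty),
      t * C.card - lam * (Fintype.card V : ℝ) ≤
        (Fintype.card V : ℝ) * ((C.filter (G.Adj (pickv G C hne))).card))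
    (I : Finset V) (C : Finset V) :
    1 ≤ (runI G a I C).1.card →
      ((Fintype.card V : ℝ)) ^ (runI G a I C).1.card <
        ((Fintype.card V : ℝ) - t) ^ ((runI G a I C).1.card - 1) *
          (t * C.card - lam * (Fintype.card V : ℝ) + (Fintype.card V : ℝ)) := by
  set N : ℝ := (Fintype.card V : ℝ) with hNdef
  induction C using Finset.strongInductionOn with
  | _ C ih =>
    intro hm
    rw [runI] at hm ⊢; dsimp only at hm ⊢
    split_ifs at hm ⊢ with h1 h2
    · simp at hm
    · -- hit step
      have hne : C.Nonempty := Finset.nonempty_iff_ne_empty.2 (not_or.1 h1).2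
      have haC : a < (C.card : ℝ) := by
        rcases not_or.1 h1 with ⟨h, _⟩
        exact lt_of_not_ge h
      set v := pickv G C (Finset.nonempty_iff_ne_empty.2 (not_or.1 h1).2) with hv
      set C₂ := C \ insert v (C.filter (G.Adj v)) with hC₂
      set T' := (runI G a I C₂).1 with hT'
      have hvnot : v ∉ T' := fun h =>
        (Finset.mem_sdiff.1 (Finset.mem_inter.1 (runI_T_subset G a I C₂ h)).2).2
          (Finset.mem_insert_self _ _)
      rw [Finset.card_insert_of_notMem hvnot]
      have hYC : N < t * C.card - lam * N + N := by
        nlinarith [mul_lt_mul_of_pos_left haC ht]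
      have hstep : N * (t * C₂.card - lam * N + N) ≤
          (N - t) * (t * C.card - lam * N + N) := by
        have hc2 := hit_card G (Finset.nonempty_iff_ne_empty.2 (not_or.1 h1).2)
        rw [← hC₂] at hc2  -- may be unnecessary
        rw [hc2]
        nlinarith [mul_le_mul_of_nonneg_left
          (hdeg C (Finset.nonempty_iff_ne_empty.2 (not_or.1 h1).2)) ht.le]
      rcases Nat.eq_zero_or_pos T'.card with h0 | hpos
      · rw [h0]
        simpa using hYC
      · obtain ⟨k, hk⟩ := Nat.exists_eq_add_of_lt hpos
        rw [zero_add] at hk  -- hk : T'.card = k + 1 ?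
        have IH := ih C₂ (ssubset_hit G _) (by rw [← hT']; omega)
        rw [← hT'] at IH
        rw [hk] at IH ⊢
        have e1 : (k + 1 + 1) - 1 = k + 1 := rfl
        rw [e1]
        have e2 : (k + 1) - 1 = k := rfl
        rw [e2] at IH
        have hNt : (0:ℝ) ≤ N - t := sub_nonneg.2 hq
        calc N ^ (k + 1 + 1) = N * N ^ (k + 1) := by ring
        _ < N * ((N - t) ^ k * (t * C₂.card - lam * N + N)) := by
            exact mul_lt_mul_of_pos_left IH hN
        _ = (N - t) ^ k * (N * (t * C₂.card - lam * N + N)) := by ring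
        _ ≤ (N - t) ^ k * ((N - t) * (t * C.card - lam * N + N)) :=
            mul_le_mul_of_nonneg_left hstep (pow_nonneg hNt k)
        _ = (N - t) ^ (k + 1) * (t * C.card - lam * N + N) := by ring
    · -- miss step
      have hv : pickv G C (Finset.nonempty_iff_ne_empty.2 (not_or.1 h1).2) ∈ C :=
        pickv_mem G C _
      have IH := ih _ (Finset.erase_ssubset hv) hm
      refine IH.trans_le (mul_le_mul_of_nonneg_left ?_
        (pow_nonneg (sub_nonneg.2 hq) _))
      have hce : ((C.erase (pickv G C (Finset.nonempty_iff_ne_empty.2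
          (not_or.1 h1).2))).card : ℝ) = (C.card : ℝ) - 1 := by
        rw [Finset.card_erase_of_mem hv,
          Nat.cast_sub (Finset.card_pos.2 ⟨_, hv⟩)]
        norm_num
      rw [hce]
      nlinarith [ht]

lemma hits_small (t a lam : ℝ) (ht : 0 < t) (hN : 0 < (Fintype.card V : ℝ))
    (hq : (Fintype.card V : ℝ) < t) (hta : t * a = lam * (Fintype.card V : ℝ))
    (hdeg : ∀ (C : Finset V) (hne : C.Nonempty),
      t * C.card - lam * (Fintype.card V : ℝ) ≤
        (Fintype.card V : ℝ) * ((C.filter (G.Adj (pickv G C hne))).card))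
    (I : Finset V) (C : Finset V) :
    (runI G a I C).1.card ≤ 1 := by
  set N : ℝ := (Fintype.card V : ℝ) with hNdef
  induction C using Finset.strongInductionOn with
  | _ C ih =>
    rw [runI]; dsimp only
    split_ifs with h1 h2
    · simp
    · have haC : a < (C.card : ℝ) := lt_of_not_ge (not_or.1 h1).1
      set v := pickv G C (Finset.nonempty_iff_ne_empty.2 (not_or.1 h1).2) with hv
      set C₂ := C \ insert v (C.filter (G.Adj v)) with hC₂
      have hYC : N < t * C.card - lam * N + N := by
        nlinarith [mul_lt_mul_of_pos_left haC ht]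
      have hstep : N * (t * C₂.card - lam * N + N) ≤
          (N - t) * (t * C.card - lam * N + N) := by
        have hc2 := hit_card G (Finset.nonempty_iff_ne_empty.2 (not_or.1 h1).2)
        rw [← hC₂] at hc2
        rw [hc2]
        nlinarith [mul_le_mul_of_nonneg_left
          (hdeg C (Finset.nonempty_iff_ne_empty.2 (not_or.1 h1).2)) ht.le]
      have hY2 : t * C₂.card - lam * N + N < 0 := by
        nlinarith [hYC, hN, hq]
      have hC2a : (C₂.card : ℝ) ≤ a := by
        rw [← mul_le_mul_iff_right₀ ht]
        nlinarith [hta, hN]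
      have : (runI G a I C₂).1 = ∅ := by
        rw [runI, dif_pos (Or.inl hC2a)]
      rw [this]
      simp
    · exact ih _ (Finset.erase_ssubset (pickv_mem G C _))

end Analytic

section Wrap

variable (G : SimpleGraph V) [DecidableRel G.Adj]

lemma T_card_le (d : ℕ) (lam a : ℝ) (hd : 1 ≤ d) (hlam : 1 ≤ lam)
    (hN : 0 < (Fintype.card V : ℝ))
    (hta : ((d : ℝ) + lam) * a = lam * (Fintype.card V : ℝ))
    (hdeg : ∀ (C : Finset V) (hne : C.Nonempty),
      ((d : ℝ) + lam) * C.card - lam * (Fintype.card V : ℝ) ≤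
        (Fintype.card V : ℝ) * ((C.filter (G.Adj (pickv G C hne))).card))
    (I : Finset V) :
    (runI G a I Finset.univ).1.card ≤
      ⌈(Real.log (d + 1) + 1) / ((d : ℝ) + lam) * (Fintype.card V : ℝ)⌉₊ := by
  set N : ℝ := (Fintype.card V : ℝ) with hNdef
  set t : ℝ := (d : ℝ) + lam with htdef
  have ht : 0 < t := by
    have : (1:ℝ) ≤ (d:ℝ) := by exact_mod_cast hd
    nlinarith
  have hK1 : 1 ≤ ⌈(Real.log (d + 1) + 1) / t * N⌉₊ := by
    rw [Nat.one_le_ceil_iff]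
    have hlog : 0 ≤ Real.log ((d : ℝ) + 1) :=
      Real.log_nonneg (by norm_num)
    positivity
  rcases le_or_gt t N with hq | hq
  · -- t ≤ N
    set m := (runI G a I Finset.univ).1.card with hm
    rcases Nat.eq_zero_or_pos m with h0 | hpos
    · omega
    · have key := hits_pot G t a lam ht hN hq hta hdeg I Finset.univ hpos
      rw [← hm] at key
      obtain ⟨k, hk⟩ := Nat.exists_eq_add_of_lt hpos
      rw [zero_add] at hk
      rw [hk] at key
      have e2 : (k + 1) - 1 = k := rfl
      rw [e2] at key
      rw [Finset.card_univ] at key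
      -- key : N ^ (k+1) < (N - t)^k * (t * N - lam * N + N)
      have hY : t * N - lam * N + N = ((d : ℝ) + 1) * N := by
        rw [htdef]; ring
      rw [hY] at key
      -- (N - t) ≤ N * exp (-(t/N))
      have hexp : N - t ≤ N * Real.exp (-(t / N)) := by
        have h1 : 1 - t / N ≤ Real.exp (-(t / N)) := by
          have := Real.add_one_le_exp (-(t / N))
          linarith
        have := mul_le_mul_of_nonneg_left h1 hN.le
        calc N - t = N * (1 - t / N) := by field_simp
        _ ≤ N * Real.exp (-(t / N)) := this
      have hNt : (0:ℝ) ≤ N - t := sub_nonneg.2 hq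
      have hpow : (N - t) ^ k ≤ N ^ k * Real.exp (-(t / N)) ^ k := by
        rw [← mul_pow]
        exact pow_le_pow_left₀ hNt hexp k
      have key2 : N ^ (k + 1) < N ^ k * Real.exp (-(t / N)) ^ k * (((d : ℝ) + 1) * N) := by
        refine key.trans_le (mul_le_mul_of_nonneg_right hpow ?_)
        positivity
      have hNk : (0:ℝ) < N ^ (k + 1) := by positivity
      have key3 : 1 < Real.exp (-(t / N)) ^ k * ((d : ℝ) + 1) := by
        have hrw : N ^ k * Real.exp (-(t / N)) ^ k * (((d : ℝ) + 1) * N) =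
            N ^ (k + 1) * (Real.exp (-(t / N)) ^ k * ((d : ℝ) + 1)) := by ring
        rw [hrw] at key2
        nlinarith [hNk]
      rw [← Real.exp_nat_mul] at key3
      -- 1 < exp (k * -(t/N)) * (d+1)
      have hd1 : (0:ℝ) < (d : ℝ) + 1 := by positivity
      have key4 : Real.exp (-(k * -(t / N))) < (d : ℝ) + 1 := by
        rw [Real.exp_neg]
        rw [inv_lt_iff_one_lt_mul₀ (Real.exp_pos _)]
        linarith [mul_comm (Real.exp ((k : ℝ) * -(t / N))) ((d : ℝ) + 1), key3]
      have key5 : -((k : ℝ) * -(t / N)) < Real.log ((d : ℝ) + 1) :=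
        (Real.lt_log_iff_exp_lt hd1).2 key4
      -- i.e. k * t / N < log (d+1)
      have hrw5 : -((k : ℝ) * -(t / N)) = (k : ℝ) * (t / N) := by ring
      rw [hrw5] at key5
      have ht' : (0:ℝ) < t / N := div_pos ht hN
      have key6 : (k : ℝ) < Real.log ((d : ℝ) + 1) / (t / N) :=
        (lt_div_iff₀ ht').2 key5
      have hNT : (1:ℝ) ≤ N / t := (one_le_div ht).2 hq
      have hfin : ((k : ℝ) + 1) < (Real.log ((d : ℝ) + 1) + 1) / t * N := by
        have hexpand : (Real.log ((d : ℝ) + 1) + 1) / t * N =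
            Real.log ((d : ℝ) + 1) / (t / N) + N / t := by
          field_simp
        rw [hexpand]
        linarith
      have hcast : ((k : ℝ) + 1) < (⌈(Real.log ((d : ℝ) + 1) + 1) / t * N⌉₊ : ℝ) :=
        lt_of_lt_of_le hfin (Nat.le_ceil _)
      rw [hk]
      have : ((k + 1 : ℕ) : ℝ) < (⌈(Real.log ((d : ℝ) + 1) + 1) / t * N⌉₊ : ℝ) := by
        push_cast
        exact hcast
      have hlt := Nat.cast_lt (α := ℝ) |>.1 this
      have hcoerce : Real.log ((d:ℝ) + 1) = Real.log ((d:ℕ) + 1) := by norm_num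
      omega
  · -- t > N : at most one hit
    have := hits_small G t a lam ht hN hq hta hdeg I Finset.univ
    omega

end Wrap

section DegBound

variable (G : SimpleGraph V) [DecidableRel G.Adj]

lemma lam_ge_one [Nonempty V] (d : ℕ) (hd : 1 ≤ d) (hreg : G.IsRegularOfDegree d) (lam : ℝ)
    (h2 : ∀ μ : ℝ, Module.End.HasEigenvalue (Matrix.toLin' (G.adjMatrix ℝ)) μ → -lam ≤ μ) :
    1 ≤ lam := by
  obtain ⟨v₀⟩ := ‹Nonempty V›
  have hne : (G.neighborFinset v₀).Nonempty := by
    rw [← Finset.card_pos, SimpleGraph.card_neighborFinset_eq_degree, hreg v₀]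
    omega
  obtain ⟨u, hu⟩ := hne
  rw [SimpleGraph.mem_neighborFinset] at hu
  have hvu : v₀ ≠ u := G.ne_of_adj hu
  set x : V → ℝ := fun w => (if w = v₀ then (1:ℝ) else 0) - (if w = u then (1:ℝ) else 0)
    with hx
  have hqf := qf_coord G lam h2 x
  have hsq : ∑ v, x v ^ 2 = 2 := by
    have h1 : ∀ v, x v ^ 2 =
        (if v = v₀ then (1:ℝ) else 0) + (if v = u then (1:ℝ) else 0) := by
      intro v
      by_cases hv : v = v₀ <;> by_cases hu' : v = u
      · exact absurd (hv ▸ hu') (by simpa using hvu)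
      · simp only [hx]; simp [hv, hu', hvu, Ne.symm hvu]
      · simp only [hx]; simp [hv, hu', hvu, Ne.symm hvu]
      · simp only [hx]; simp [hv, hu']
    rw [Finset.sum_congr rfl fun v _ => h1 v, Finset.sum_add_distrib,
      Finset.sum_ite_eq' Finset.univ v₀ (fun _ => (1:ℝ)),
      Finset.sum_ite_eq' Finset.univ u (fun _ => (1:ℝ))]
    norm_num
  have hF : ∀ v, ∑ w ∈ G.neighborFinset v, x w =
      (if v₀ ∈ G.neighborFinset v then (1:ℝ) else 0) -
      (if u ∈ G.neighborFinset v then (1:ℝ) else 0) := by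
    intro v
    rw [hx]
    rw [Finset.sum_sub_distrib,
      Finset.sum_ite_eq' (G.neighborFinset v) v₀ (fun _ => (1:ℝ)),
      Finset.sum_ite_eq' (G.neighborFinset v) u (fun _ => (1:ℝ))]
  have hrhs : ∑ v, (∑ w ∈ G.neighborFinset v, x w) * x v = -2 := by
    have h1 : ∀ v, (∑ w ∈ G.neighborFinset v, x w) * x v =
        (fun v => ∑ w ∈ G.neighborFinset v, x w) v * (if v = v₀ then (1:ℝ) else 0)
        - (fun v => ∑ w ∈ G.neighborFinset v, x w) v * (if v = u then (1:ℝ) else 0) := by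
      intro v; rw [hx]; ring
    rw [Finset.sum_congr rfl fun v _ => h1 v, Finset.sum_sub_distrib]
    simp only [mul_ite, mul_one, mul_zero]
    rw [Finset.sum_ite_eq' Finset.univ v₀, Finset.sum_ite_eq' Finset.univ u]
    simp only [Finset.mem_univ, if_true]
    rw [hF v₀, hF u]
    have h2' : v₀ ∉ G.neighborFinset v₀ := by
      simp [SimpleGraph.mem_neighborFinset]
    have h3 : u ∈ G.neighborFinset v₀ := by
      simp [SimpleGraph.mem_neighborFinset, hu]
    have h4 : v₀ ∈ G.neighborFinset u := by
      simp [SimpleGraph.mem_neighborFinset, hu.symm]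
    have h5 : u ∉ G.neighborFinset u := by
      simp [SimpleGraph.mem_neighborFinset]
    simp [h2', h3, h4, h5]
    norm_num
  rw [hsq, hrhs] at hqf
  linarith

lemma deg_bound [Nonempty V] (d : ℕ) (hreg : G.IsRegularOfDegree d) (lam : ℝ)
    (h2 : ∀ μ : ℝ, Module.End.HasEigenvalue (Matrix.toLin' (G.adjMatrix ℝ)) μ → -lam ≤ μ)
    (C : Finset V) (hne : C.Nonempty) :
    ((d : ℝ) + lam) * C.card - lam * (Fintype.card V : ℝ) ≤
      (Fintype.card V : ℝ) * ((C.filter (G.Adj (pickv G C hne))).card) := by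
  set N : ℝ := (Fintype.card V : ℝ) with hNdef
  have hN : (0:ℝ) < N := by
    rw [hNdef]; exact_mod_cast Fintype.card_pos
  set c : ℝ := (C.card : ℝ) / N with hc
  have hcN : c * N = (C.card : ℝ) := by
    rw [hc]; field_simp
  set x : V → ℝ := fun v => (if v ∈ C then (1:ℝ) else 0) - c with hx
  have hqf := qf_coord G lam h2 x
  have hCcd : (0:ℝ) < (C.card : ℝ) := by exact_mod_cast Finset.card_pos.2 hne
  have hsum_ind : ∑ v, (if v ∈ C then (1:ℝ) else 0) = (C.card : ℝ) := by
    rw [Finset.sum_ite_mem, Finset.univ_inter, Finset.sum_const]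
    simp
  have hA : ∑ v, x v ^ 2 = (C.card : ℝ) - 2 * c * C.card + N * c ^ 2 := by
    have h1 : ∀ v, x v ^ 2 = (if v ∈ C then (1:ℝ) else 0)
        - 2 * c * (if v ∈ C then (1:ℝ) else 0) + c ^ 2 := by
      intro v; by_cases h : v ∈ C <;> simp [hx, h] <;> ring
    rw [Finset.sum_congr rfl fun v _ => h1 v, Finset.sum_add_distrib,
      Finset.sum_sub_distrib, ← Finset.mul_sum, hsum_ind, Finset.sum_const,
      Finset.card_univ]
    rw [nsmul_eq_mul, hNdef]
  -- inner sums
  have hfilter_eq : ∀ v : V, G.neighborFinset v ∩ C = C.filter (G.Adj v) := by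
    intro v
    ext u
    simp [SimpleGraph.mem_neighborFinset, and_comm]
  have hinner : ∀ v, ∑ u ∈ G.neighborFinset v, x u =
      ((C.filter (G.Adj v)).card : ℝ) - (d : ℝ) * c := by
    intro v
    rw [hx]
    rw [Finset.sum_sub_distrib, Finset.sum_ite_mem, hfilter_eq v, Finset.sum_const,
      Finset.sum_const]
    have hdeg : (G.neighborFinset v).card = d := by
      rw [SimpleGraph.card_neighborFinset_eq_degree]; exact hreg v
    rw [hdeg]
    simp [nsmul_eq_mul]
  -- double counting
  have hdc : ∑ v, ((C.filter (G.Adj v)).card : ℝ) = (d : ℝ) * C.card := by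
    have hnat : ∑ v : V, (C.filter (G.Adj v)).card = ∑ u ∈ C, G.degree u := by
      simp_rw [Finset.card_filter]
      rw [Finset.sum_comm]
      refine Finset.sum_congr rfl fun u _ => ?_
      rw [← Finset.card_filter]
      have : Finset.univ.filter (fun v => G.Adj v u) = G.neighborFinset u := by
        ext w
        simp [SimpleGraph.mem_neighborFinset, G.adj_comm]
      rw [this, SimpleGraph.card_neighborFinset_eq_degree]
    have hnat2 : ∑ u ∈ C, G.degree u = d * C.card := by
      rw [Finset.sum_congr rfl fun u _ => hreg u, Finset.sum_const, smul_eq_mul,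
        mul_comm]
    calc ∑ v, ((C.filter (G.Adj v)).card : ℝ)
        = ((∑ v : V, (C.filter (G.Adj v)).card : ℕ) : ℝ) := by push_cast; rfl
      _ = ((d * C.card : ℕ) : ℝ) := by rw [hnat, hnat2]
      _ = (d : ℝ) * C.card := by push_cast; rfl
  -- E
  set E : ℝ := ∑ v ∈ C, ((C.filter (G.Adj v)).card : ℝ) with hE
  have hB : ∑ v, (∑ u ∈ G.neighborFinset v, x u) * x v =
      E - 2 * (d : ℝ) * c * C.card + N * ((d : ℝ) * c ^ 2) := by
    have h1 : ∀ v, (∑ u ∈ G.neighborFinset v, x u) * x v =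
        (if v ∈ C then ((C.filter (G.Adj v)).card : ℝ) else 0)
        - c * ((C.filter (G.Adj v)).card : ℝ)
        - (d : ℝ) * c * (if v ∈ C then (1:ℝ) else 0) + (d : ℝ) * c ^ 2 := by
      intro v
      rw [hinner v, hx]
      by_cases h : v ∈ C <;> simp [h] <;> ring
    rw [Finset.sum_congr rfl fun v _ => h1 v]
    rw [Finset.sum_add_distrib, Finset.sum_sub_distrib, Finset.sum_sub_distrib,
      Finset.sum_ite_mem, Finset.univ_inter, ← Finset.mul_sum, hdc,
      ← Finset.mul_sum, hsum_ind, Finset.sum_const, Finset.card_univ,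
      nsmul_eq_mul, ← hE, ← hNdef]
    ring
  rw [hA, hB] at hqf
  -- E ≤ C.card * Dpick
  have hmax := pickv_max G C hne
  have hEle : E ≤ (C.card : ℝ) * ((C.filter (G.Adj (pickv G C hne))).card : ℝ) := by
    rw [hE]
    calc ∑ v ∈ C, ((C.filter (G.Adj v)).card : ℝ)
        ≤ ∑ v ∈ C, ((C.filter (G.Adj (pickv G C hne))).card : ℝ) :=
          Finset.sum_le_sum fun v hv => by exact_mod_cast hmax v hv
      _ = (C.card : ℝ) * ((C.filter (G.Adj (pickv G C hne))).card : ℝ) := by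
          rw [Finset.sum_const, nsmul_eq_mul]
  set D : ℝ := ((C.filter (G.Adj (pickv G C hne))).card : ℝ) with hD
  -- from hqf : -lam * (Ccd - 2c Ccd + N c²) ≤ E - 2dc Ccd + N d c²
  -- with c*N = Ccd : N c² = c * Ccd
  have hNc2 : N * c ^ 2 = c * (C.card : ℝ) := by
    rw [← hcN]; ring
  have hEge : ((d : ℝ) + lam) * c * C.card - lam * C.card ≤ E := by
    have hr : N * ((d : ℝ) * c ^ 2) = (d : ℝ) * (N * c ^ 2) := by ring
    rw [hr, hNc2] at hqf
    nlinarith [hqf]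
  have hstep : (((d : ℝ) + lam) * c - lam) * (C.card : ℝ) ≤ D * (C.card : ℝ) := by
    nlinarith [hEge, hEle]
  have hdiv : ((d : ℝ) + lam) * c - lam ≤ D :=
    le_of_mul_le_mul_right (by linarith [hstep]) hCcd
  have := mul_le_mul_of_nonneg_right hdiv hN.le
  calc ((d : ℝ) + lam) * C.card - lam * N
      = (((d : ℝ) + lam) * c - lam) * N := by
        rw [← hcN]; ring
    _ ≤ D * N := this
    _ = N * D := mul_comm _ _
end DegBound

section Counting

lemma card_filter_card_le (K : ℕ) :
    ((Finset.univ : Finset (Finset V)).filter (fun T => T.card ≤ K)).card =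
      ∑ i ∈ Finset.range (K + 1), (Fintype.card V).choose i := by
  have hsplit : (Finset.univ : Finset (Finset V)).filter (fun T => T.card ≤ K) =
      (Finset.range (K + 1)).biUnion
        (fun i => (Finset.univ : Finset V).powersetCard i) := by
    ext T
    simp only [Finset.mem_filter, Finset.mem_univ, true_and, Finset.mem_biUnion,
      Finset.mem_range, Finset.mem_powersetCard]
    constructor
    · intro h
      exact ⟨T.card, by omega, Finset.subset_univ T, rfl⟩
    · rintro ⟨i, hi, -, rfl⟩
      omega
  rw [hsplit, Finset.card_biUnion]
  · refine Finset.sum_congr rfl fun i _ => ?_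
    rw [Finset.card_powersetCard, Finset.card_univ]
  · intro i _ j _ hij
    simp only [Function.onFun]
    rw [Finset.disjoint_left]
    intro T hTi hTj
    rw [Finset.mem_powersetCard] at hTi hTj
    exact hij (hTi.2 ▸ hTj.2 ▸ rfl)

lemma ncard_eq_stab_card (G : SimpleGraph V) [DecidableRel G.Adj] :
    ({S : Set V | S.Pairwise fun u v => ¬ G.Adj u v}).ncard =
      (Finset.univ.filter
        (fun s : Finset V => ∀ u ∈ s, ∀ v ∈ s, ¬ G.Adj u v)).card := by
  classical
  have himg : {S : Set V | S.Pairwise fun u v => ¬ G.Adj u v} =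
      (fun s : Finset V => (s : Set V)) ''
        ↑(Finset.univ.filter
          (fun s : Finset V => ∀ u ∈ s, ∀ v ∈ s, ¬ G.Adj u v)) := by
    ext S
    simp only [Set.mem_image, Set.mem_setOf_eq, Finset.mem_coe, Finset.mem_filter,
      Finset.mem_univ, true_and]
    constructor
    · intro hS
      refine ⟨(Set.toFinite S).toFinset, ?_, Set.Finite.coe_toFinset _⟩
      intro u hu v hv
      rw [Set.Finite.mem_toFinset] at hu hv
      by_cases huv : u = v
      · subst huv; exact G.irrefl
      · exact hS hu hv huv
    · rintro ⟨s, hs, rfl⟩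
      intro u hu v hv _
      exact hs u hu v hv
  rw [himg, Set.ncard_image_of_injective _ Finset.coe_injective,
    Set.ncard_coe_finset]

end Counting

theorem count_stable_sets_aux {V : Type*} [Fintype V] [DecidableEq V]
    (G : SimpleGraph V) [DecidableRel G.Adj] (d : ℕ) (hd : 1 ≤ d)
    (hreg : G.IsRegularOfDegree d) (lam : ℝ)
    (hlam : (Module.End.HasEigenvalue (Matrix.toLin' (G.adjMatrix ℝ)) (-lam) ∧
      ∀ μ : ℝ, Module.End.HasEigenvalue (Matrix.toLin' (G.adjMatrix ℝ)) μ → -lam ≤ μ)) :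
    (({S : Set V | S.Pairwise (fun u v => ¬ G.Adj u v)}).ncard : ℝ) ≤
      (∑ i ∈ Finset.range
          (⌈(Real.log (d + 1) + 1) / (d + lam) * (Fintype.card V : ℝ)⌉₊ + 1),
          ((Fintype.card V).choose i : ℝ)) *
        (2 : ℝ) ^ (lam / (d + lam) * (Fintype.card V : ℝ)) := by
  classical
  rcases isEmpty_or_nonempty V with hV | hV
  · obtain ⟨x, hx⟩ := hlam.1.exists_hasEigenvector
    exact absurd (Subsingleton.elim x 0) hx.right
  set N : ℝ := (Fintype.card V : ℝ) with hNdef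
  set t : ℝ := (d : ℝ) + lam with htdef
  set a : ℝ := lam / ((d : ℝ) + lam) * (Fintype.card V : ℝ) with hadef
  have hlam1 : 1 ≤ lam := lam_ge_one G d hd hreg lam hlam.2
  have hd1 : (1 : ℝ) ≤ (d : ℝ) := by exact_mod_cast hd
  have ht : 0 < t := by rw [htdef]; linarith
  have hN : (0:ℝ) < N := by rw [hNdef]; exact_mod_cast Fintype.card_pos
  have hta : t * a = lam * N := by
    rw [htdef, hadef, hNdef]
    field_simp
  have ha0 : 0 ≤ a := by
    rw [hadef]
    positivity
  have hdeg : ∀ (C : Finset V) (hne : C.Nonempty),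
      t * C.card - lam * N ≤ N * ((C.filter (G.Adj (pickv G C hne))).card) := by
    intro C hne
    exact deg_bound G d hreg lam hlam.2 C hne
  set K : ℕ := ⌈(Real.log ((d : ℝ) + 1) + 1) / t * N⌉₊ with hK
  set Stab : Finset (Finset V) :=
    Finset.univ.filter (fun s : Finset V => ∀ u ∈ s, ∀ v ∈ s, ¬ G.Adj u v) with hStab
  set Keys : Finset (Finset V) :=
    Finset.univ.filter (fun T : Finset V => T.card ≤ K) with hKeys
  set B : Finset (Finset V × Finset V) :=
    Keys.biUnion (fun T => ({T} : Finset (Finset V)) ×ˢ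
      (runT G a T Finset.univ).powerset) with hB
  -- the injection
  have hmap : ∀ s ∈ Stab,
      ((runI G a s Finset.univ).1, s \ (runI G a s Finset.univ).1) ∈ B := by
    intro s hs
    rw [hStab, Finset.mem_filter] at hs
    rw [hB, Finset.mem_biUnion]
    refine ⟨(runI G a s Finset.univ).1, ?_, ?_⟩
    · rw [hKeys, Finset.mem_filter]
      exact ⟨Finset.mem_univ _, T_card_le G d lam a hd hlam1 hN hta hdeg s⟩
    · rw [Finset.mem_product]
      refine ⟨Finset.mem_singleton_self _, ?_⟩
      rw [Finset.mem_powerset, runI_runT]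
      intro w hw
      obtain ⟨hws, hwT⟩ := Finset.mem_sdiff.1 hw
      have := runI_cover G a s hs.2 Finset.univ
        (Finset.mem_inter.2 ⟨hws, Finset.mem_univ w⟩)
      rcases Finset.mem_union.1 this with h | h
      · exact absurd h hwT
      · exact h
  have hinj : Set.InjOn
      (fun s => ((runI G a s Finset.univ).1, s \ (runI G a s Finset.univ).1))
      ↑Stab := by
    intro s₁ h₁ s₂ h₂ heq
    simp only [Prod.mk.injEq] at heq
    have hsub : ∀ s : Finset V, (runI G a s Finset.univ).1 ⊆ s := fun s =>
      fun w hw => (Finset.mem_inter.1 (runI_T_subset G a s Finset.univ hw)).1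
    calc s₁ = (runI G a s₁ Finset.univ).1 ∪ (s₁ \ (runI G a s₁ Finset.univ).1) :=
          (Finset.union_sdiff_of_subset (hsub s₁)).symm
      _ = (runI G a s₂ Finset.univ).1 ∪ (s₂ \ (runI G a s₂ Finset.univ).1) := by
          rw [heq.2, heq.1]
      _ = s₂ := Finset.union_sdiff_of_subset (hsub s₂)
  have hcard1 : Stab.card ≤ B.card :=
    Finset.card_le_card_of_injOn _ hmap hinj
  have hcard2 : B.card ≤ ∑ T ∈ Keys, 2 ^ (runT G a T Finset.univ).card := by
    refine (Finset.card_biUnion_le).trans ?_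
    refine Finset.sum_le_sum fun T _ => ?_
    rw [Finset.card_product, Finset.card_singleton, one_mul, Finset.card_powerset]
  -- to reals
  have hreal : (Stab.card : ℝ) ≤ ∑ T ∈ Keys, (2:ℝ) ^ (a : ℝ) := by
    calc (Stab.card : ℝ) ≤ ((∑ T ∈ Keys, 2 ^ (runT G a T Finset.univ).card : ℕ) : ℝ) := by
          exact_mod_cast hcard1.trans hcard2
      _ = ∑ T ∈ Keys, (2:ℝ) ^ ((runT G a T Finset.univ).card : ℕ) := by push_cast; rfl
      _ ≤ ∑ T ∈ Keys, (2:ℝ) ^ (a : ℝ) := by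
          refine Finset.sum_le_sum fun T _ => ?_
          rw [← Real.rpow_natCast 2 (runT G a T Finset.univ).card]
          exact Real.rpow_le_rpow_of_exponent_le one_le_two
            (runT_card G a ha0 T Finset.univ)
  have hKeysCard : (Keys.card : ℝ) = ∑ i ∈ Finset.range (K + 1),
      ((Fintype.card V).choose i : ℝ) := by
    rw [hKeys, card_filter_card_le K]
    push_cast
    rfl
  rw [ncard_eq_stab_card G, ← hStab]
  calc (Stab.card : ℝ) ≤ ∑ T ∈ Keys, (2:ℝ) ^ (a : ℝ) := hreal
    _ = (Keys.card : ℝ) * (2:ℝ) ^ (a : ℝ) := by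
        rw [Finset.sum_const, nsmul_eq_mul]
    _ = (∑ i ∈ Finset.range (K + 1), ((Fintype.card V).choose i : ℝ)) *
        (2:ℝ) ^ (a : ℝ) := by rw [hKeysCard]


end ContainerProof

/-- For a `d`-regular graph `G` (`d ≥ 1`) on `N` vertices with smallest
adjacency eigenvalue `−λ`, the number of stable sets `i(G)` satisfies
`i(G) ≤ (Σ_{i=0}^{⌈σN⌉} C(N,i)) · 2^{αN}`, where `σ = (ln(d+1)+1)/(d+λ)` and
`α = λ/(d+λ)`. -/
theorem count_stable_sets {V : Type*} [Fintype V] [DecidableEq V]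
    (G : SimpleGraph V) [DecidableRel G.Adj] (d : ℕ) (hd : 1 ≤ d)
    (hreg : G.IsRegularOfDegree d) (lam : ℝ) (hlam : SmallestAdjEigenvalue G lam) :
    (({S : Set V | S.Pairwise (fun u v => ¬ G.Adj u v)}).ncard : ℝ) ≤
      (∑ i ∈ Finset.range
          (⌈(Real.log (d + 1) + 1) / (d + lam) * (Fintype.card V : ℝ)⌉₊ + 1),
          ((Fintype.card V).choose i : ℝ)) *
        (2 : ℝ) ^ (lam / (d + lam) * (Fintype.card V : ℝ)) := by
  obtain ⟨h1, h2⟩ := hlam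
  exact count_stable_sets_aux G d hd hreg lam ⟨h1, h2⟩
end

section
/- Let G = (V,E) be a finite vertex-transitive graph and let U ⊆ V be nonempty. Then log₂ i(G) / |V| ≤ log₂ i(G[U]) / |U|, where G[U] is the subgraph of G induced on U; equivalently, i(G)^{|U|} ≤ i(G[U])^{|V|}. -/
open Filter Set

section Aux

open Finset NNReal

private lemma minkowski_prod {ι : Type*} (I : Finset ι) (t : ℕ) (htI : I.card = t) (ht : 0 < t)
    (a b : ι → ℝ≥0) :
    (∏ i ∈ I, a i) ^ (t : ℝ)⁻¹ + (∏ i ∈ I, b i) ^ (t : ℝ)⁻¹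
      ≤ (∏ i ∈ I, (a i + b i)) ^ (t : ℝ)⁻¹ := by
  have ht' : (t : ℝ) ≠ 0 := Nat.cast_ne_zero.mpr ht.ne'
  have htn : (t : ℝ≥0) ≠ 0 := Nat.cast_ne_zero.mpr ht.ne'
  by_cases h : ∀ i ∈ I, a i + b i ≠ 0
  · have hwcoe : (((t : ℝ≥0)⁻¹ : ℝ≥0) : ℝ) = (t : ℝ)⁻¹ := by
      push_cast
      rfl
    have hwsum : ∑ _i ∈ I, (t : ℝ≥0)⁻¹ = 1 := by
      rw [Finset.sum_const, htI, nsmul_eq_mul]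
      exact mul_inv_cancel₀ htn
    have expand : ∀ f : ι → ℝ≥0, (∀ i ∈ I, True) →
        (∏ i ∈ I, f i) ^ (t : ℝ)⁻¹
          ≤ (∏ i ∈ I, (a i + b i)) ^ (t : ℝ)⁻¹
            * ∑ i ∈ I, (t : ℝ≥0)⁻¹ * (f i / (a i + b i)) := by
      intro f _
      have hdecomp : ∏ i ∈ I, f i
          = (∏ i ∈ I, (a i + b i)) * ∏ i ∈ I, (f i / (a i + b i)) := by
        rw [← Finset.prod_mul_distrib]
        exact Finset.prod_congr rfl fun i hi => (mul_div_cancel₀ _ (h i hi)).symm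
      rw [hdecomp, NNReal.mul_rpow]
      refine mul_le_mul_of_nonneg_left ?_ (zero_le)
      calc (∏ i ∈ I, f i / (a i + b i)) ^ (t : ℝ)⁻¹
          = ∏ i ∈ I, (f i / (a i + b i)) ^ (((t : ℝ≥0)⁻¹ : ℝ≥0) : ℝ) := by
            rw [hwcoe, NNReal.finset_prod_rpow]
        _ ≤ ∑ i ∈ I, (t : ℝ≥0)⁻¹ * (f i / (a i + b i)) :=
            NNReal.geom_mean_le_arith_mean_weighted I _ _ hwsum
    calc (∏ i ∈ I, a i) ^ (t : ℝ)⁻¹ + (∏ i ∈ I, b i) ^ (t : ℝ)⁻¹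
        ≤ (∏ i ∈ I, (a i + b i)) ^ (t : ℝ)⁻¹
            * ∑ i ∈ I, (t : ℝ≥0)⁻¹ * (a i / (a i + b i))
          + (∏ i ∈ I, (a i + b i)) ^ (t : ℝ)⁻¹
            * ∑ i ∈ I, (t : ℝ≥0)⁻¹ * (b i / (a i + b i)) :=
          add_le_add (expand a fun _ _ => trivial) (expand b fun _ _ => trivial)
      _ = (∏ i ∈ I, (a i + b i)) ^ (t : ℝ)⁻¹ := by
          rw [← mul_add, ← Finset.sum_add_distrib]
          have : ∑ i ∈ I, ((t : ℝ≥0)⁻¹ * (a i / (a i + b i))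
              + (t : ℝ≥0)⁻¹ * (b i / (a i + b i))) = 1 := by
            rw [← hwsum]
            refine Finset.sum_congr rfl fun i hi => ?_
            rw [← mul_add, ← add_div, div_self (h i hi), mul_one]
          rw [this, mul_one]
  · push_neg at h
    obtain ⟨i, hi, hzero⟩ := h
    have hab := add_eq_zero.mp hzero
    have ha : ∏ i ∈ I, a i = 0 := Finset.prod_eq_zero hi hab.1
    have hb : ∏ i ∈ I, b i = 0 := Finset.prod_eq_zero hi hab.2
    rw [ha, hb, NNReal.zero_rpow (by simpa using ht')]
    simp

private lemma shearer_step_real {ι : Type*} [DecidableEq ι] (m I : Finset ι) (hIm : I ⊆ m)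
    (t : ℕ) (htI : I.card = t) (ht : 0 < t) (a b c : ι → ℝ≥0)
    (h1 : ∀ i ∈ I, a i + b i ≤ c i)
    (h2 : ∀ i ∈ m, a i ≤ c i) (h3 : ∀ i ∈ m, b i ≤ c i) (α β : ℝ≥0)
    (hα : α ^ t ≤ ∏ i ∈ m, a i) (hβ : β ^ t ≤ ∏ i ∈ m, b i) :
    (α + β) ^ t ≤ ∏ i ∈ m, c i := by
  have ht' : (t : ℝ) ≠ 0 := Nat.cast_ne_zero.mpr ht.ne'
  have hpow : ∀ x : ℝ≥0, (x ^ t) ^ (t : ℝ)⁻¹ = x := fun x => by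
    rw [← NNReal.rpow_natCast x t, ← NNReal.rpow_mul, mul_inv_cancel₀ ht', NNReal.rpow_one]
  have hsplit : ∀ f : ι → ℝ≥0, ∏ i ∈ m, f i = (∏ i ∈ I, f i) * ∏ i ∈ m \ I, f i := fun f => by
    rw [mul_comm, Finset.prod_sdiff hIm]
  have key : α + β ≤ (∏ i ∈ m, c i) ^ (t : ℝ)⁻¹ := by
    have ha : α ≤ (∏ i ∈ m, a i) ^ (t : ℝ)⁻¹ := by
      rw [← hpow α]; exact NNReal.rpow_le_rpow hα (by positivity)
    have hb : β ≤ (∏ i ∈ m, b i) ^ (t : ℝ)⁻¹ := by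
      rw [← hpow β]; exact NNReal.rpow_le_rpow hβ (by positivity)
    have hMa : ∏ i ∈ m \ I, a i ≤ ∏ i ∈ m \ I, c i :=
      Finset.prod_le_prod' fun i hi => h2 i (Finset.mem_sdiff.mp hi).1
    have hMb : ∏ i ∈ m \ I, b i ≤ ∏ i ∈ m \ I, c i :=
      Finset.prod_le_prod' fun i hi => h3 i (Finset.mem_sdiff.mp hi).1
    calc α + β ≤ (∏ i ∈ m, a i) ^ (t : ℝ)⁻¹ + (∏ i ∈ m, b i) ^ (t : ℝ)⁻¹ := add_le_add ha hb
      _ = (∏ i ∈ I, a i) ^ (t : ℝ)⁻¹ * (∏ i ∈ m \ I, a i) ^ (t : ℝ)⁻¹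
          + (∏ i ∈ I, b i) ^ (t : ℝ)⁻¹ * (∏ i ∈ m \ I, b i) ^ (t : ℝ)⁻¹ := by
          rw [hsplit a, hsplit b, NNReal.mul_rpow, NNReal.mul_rpow]
      _ ≤ (∏ i ∈ I, a i) ^ (t : ℝ)⁻¹ * (∏ i ∈ m \ I, c i) ^ (t : ℝ)⁻¹
          + (∏ i ∈ I, b i) ^ (t : ℝ)⁻¹ * (∏ i ∈ m \ I, c i) ^ (t : ℝ)⁻¹ :=
          add_le_add
            (mul_le_mul_of_nonneg_left (NNReal.rpow_le_rpow hMa (by positivity)) (zero_le))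
            (mul_le_mul_of_nonneg_left (NNReal.rpow_le_rpow hMb (by positivity)) (zero_le))
      _ = ((∏ i ∈ I, a i) ^ (t : ℝ)⁻¹ + (∏ i ∈ I, b i) ^ (t : ℝ)⁻¹)
            * (∏ i ∈ m \ I, c i) ^ (t : ℝ)⁻¹ := by ring
      _ ≤ (∏ i ∈ I, (a i + b i)) ^ (t : ℝ)⁻¹ * (∏ i ∈ m \ I, c i) ^ (t : ℝ)⁻¹ :=
          mul_le_mul_of_nonneg_right (minkowski_prod I t htI ht a b) (zero_le)
      _ ≤ (∏ i ∈ I, c i) ^ (t : ℝ)⁻¹ * (∏ i ∈ m \ I, c i) ^ (t : ℝ)⁻¹ :=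
          mul_le_mul_of_nonneg_right
            (NNReal.rpow_le_rpow (Finset.prod_le_prod' h1) (by positivity)) (zero_le)
      _ = (∏ i ∈ m, c i) ^ (t : ℝ)⁻¹ := by rw [hsplit c, NNReal.mul_rpow]
  calc (α + β) ^ t ≤ ((∏ i ∈ m, c i) ^ (t : ℝ)⁻¹) ^ t := pow_le_pow_left₀ (zero_le) key t
    _ = ∏ i ∈ m, c i := by
        rw [← NNReal.rpow_natCast _ t, ← NNReal.rpow_mul, inv_mul_cancel₀ ht', NNReal.rpow_one]

private lemma shearer_step {ι : Type*} [DecidableEq ι] (m I : Finset ι) (hIm : I ⊆ m) (t : ℕ)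
    (htI : I.card = t) (ht : 0 < t) (a b c : ι → ℕ) (h1 : ∀ i ∈ I, a i + b i ≤ c i)
    (h2 : ∀ i ∈ m, a i ≤ c i) (h3 : ∀ i ∈ m, b i ≤ c i) (α β : ℕ)
    (hα : α ^ t ≤ ∏ i ∈ m, a i) (hβ : β ^ t ≤ ∏ i ∈ m, b i) :
    (α + β) ^ t ≤ ∏ i ∈ m, c i := by
  have := shearer_step_real m I hIm t htI ht (fun i => (a i : ℝ≥0)) (fun i => (b i : ℝ≥0))
    (fun i => (c i : ℝ≥0))
    (fun i hi => show ((a i : ℝ≥0)) + (b i : ℝ≥0) ≤ (c i : ℝ≥0) by exact_mod_cast h1 i hi)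
    (fun i hi => show ((a i : ℝ≥0)) ≤ (c i : ℝ≥0) by exact_mod_cast h2 i hi)
    (fun i hi => show ((b i : ℝ≥0)) ≤ (c i : ℝ≥0) by exact_mod_cast h3 i hi)
    (α : ℝ≥0) (β : ℝ≥0) (by exact_mod_cast hα) (by exact_mod_cast hβ)
  exact_mod_cast this

private lemma shearer_count {V : Type*} [DecidableEq V] {ι : Type*} [DecidableEq ι]
    (A : ι → Finset V) (t : ℕ) (ht : 0 < t) (s : Finset V) :
    ∀ (m : Finset ι) (F : Finset (Finset V)),
      (∀ v ∈ s, (m.filter fun i => v ∈ A i).card = t) →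
      (∀ S ∈ F, S ⊆ s) →
      F.card ^ t ≤ ∏ i ∈ m, (F.image (· ∩ A i)).card := by
  induction s using Finset.strongInduction with
  | _ s ih =>
    intro m F hcov hsub
    rcases s.eq_empty_or_nonempty with rfl | ⟨x, hx⟩
    · rcases F.eq_empty_or_nonempty with rfl | hF
      · simp only [Finset.card_empty, zero_pow ht.ne']
        exact Nat.zero_le _
      · have hFeq : F = {∅} := by
          apply Finset.eq_singleton_iff_nonempty_unique_mem.mpr
          exact ⟨hF, fun S hS => Finset.subset_empty.mp (hsub S hS)⟩
        subst hFeq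
        simp
    · -- inductive step
      set F0 : Finset (Finset V) := F.filter (fun S => x ∉ S) with hF0
      set F1 : Finset (Finset V) := (F.filter (fun S => x ∈ S)).image (fun S => S.erase x)
        with hF1
      have hcard : F.card = F0.card + F1.card := by
        have hinj : Set.InjOn (fun S => Finset.erase S x) ↑(F.filter (fun S => x ∈ S)) := by
          intro S hS S' hS' h
          have hxS : x ∈ S := (Finset.mem_filter.mp (Finset.mem_coe.mp hS)).2
          have hxS' : x ∈ S' := (Finset.mem_filter.mp (Finset.mem_coe.mp hS')).2
          rw [← Finset.insert_erase hxS, ← Finset.insert_erase hxS']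
          exact congrArg _ h
        rw [hF0, hF1, Finset.card_image_of_injOn hinj, add_comm,
          Finset.card_filter_add_card_filter_not]
      have hsub0 : ∀ S ∈ F0, S ⊆ s.erase x := by
        intro S hS
        obtain ⟨hSF, hxS⟩ := Finset.mem_filter.mp hS
        exact fun v hv => Finset.mem_erase.mpr ⟨fun h => hxS (h ▸ hv), hsub S hSF hv⟩
      have hsub1 : ∀ S ∈ F1, S ⊆ s.erase x := by
        intro S hS
        obtain ⟨S', hS', rfl⟩ := Finset.mem_image.mp hS
        exact fun v hv => Finset.mem_erase.mpr
          ⟨(Finset.mem_erase.mp hv).1, hsub S' (Finset.mem_filter.mp hS').1 (Finset.mem_erase.mp hv).2⟩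
      have hcov' : ∀ v ∈ s.erase x, (m.filter fun i => v ∈ A i).card = t :=
        fun v hv => hcov v (Finset.mem_of_mem_erase hv)
      have h0 := ih (s.erase x) (Finset.erase_ssubset hx) m F0 hcov' hsub0
      have h1 := ih (s.erase x) (Finset.erase_ssubset hx) m F1 hcov' hsub1
      set I : Finset ι := m.filter (fun i => x ∈ A i) with hI
      have htI : I.card = t := hcov x hx
      -- claims
      have c2 : ∀ i ∈ m, (F0.image (· ∩ A i)).card ≤ (F.image (· ∩ A i)).card :=
        fun i _ => Finset.card_le_card (Finset.image_subset_image (Finset.filter_subset _ _))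
      have erase_inter : ∀ (S : Finset V) i, (S.erase x) ∩ A i = (S ∩ A i).erase x := by
        intro S i
        ext v
        simp only [Finset.mem_inter, Finset.mem_erase]
        tauto
      have c3 : ∀ i ∈ m, (F1.image (· ∩ A i)).card ≤ (F.image (· ∩ A i)).card := by
        intro i _
        have hsubim : F1.image (· ∩ A i) ⊆ (F.image (· ∩ A i)).image (fun T => T.erase x) := by
          intro T hT
          obtain ⟨S, hS, rfl⟩ := Finset.mem_image.mp hT
          obtain ⟨S', hS', rfl⟩ := Finset.mem_image.mp hS
          refine Finset.mem_image.mpr ⟨S' ∩ A i,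
            Finset.mem_image.mpr ⟨S', (Finset.mem_filter.mp hS').1, rfl⟩, (erase_inter S' i).symm⟩
        calc (F1.image (· ∩ A i)).card
            ≤ ((F.image (· ∩ A i)).image (fun T => T.erase x)).card := Finset.card_le_card hsubim
          _ ≤ (F.image (· ∩ A i)).card := Finset.card_image_le
      have c1 : ∀ i ∈ I, (F0.image (· ∩ A i)).card + (F1.image (· ∩ A i)).card
          ≤ (F.image (· ∩ A i)).card := by
        intro i hiI
        have hxA : x ∈ A i := (Finset.mem_filter.mp hiI).2
        set C : Finset (Finset V) := F.image (· ∩ A i) with hC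
        have hCsplit : (C.filter (fun T => x ∉ T)).card + (C.filter (fun T => x ∈ T)).card
            = C.card := by
          rw [add_comm]
          exact Finset.card_filter_add_card_filter_not (fun T => x ∈ T)
        have ha : F0.image (· ∩ A i) ⊆ C.filter (fun T => x ∉ T) := by
          intro T hT
          obtain ⟨S, hS, rfl⟩ := Finset.mem_image.mp hT
          obtain ⟨hSF, hxS⟩ := Finset.mem_filter.mp hS
          exact Finset.mem_filter.mpr ⟨Finset.mem_image.mpr ⟨S, hSF, rfl⟩,
            fun h => hxS (Finset.mem_inter.mp h).1⟩
        have hb : F1.image (· ∩ A i) ⊆ (C.filter (fun T => x ∈ T)).image (fun T => T.erase x) := by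
          intro T hT
          obtain ⟨S, hS, rfl⟩ := Finset.mem_image.mp hT
          obtain ⟨S', hS', rfl⟩ := Finset.mem_image.mp hS
          obtain ⟨hS'F, hxS'⟩ := Finset.mem_filter.mp hS'
          refine Finset.mem_image.mpr ⟨S' ∩ A i, Finset.mem_filter.mpr
            ⟨Finset.mem_image.mpr ⟨S', hS'F, rfl⟩, Finset.mem_inter.mpr ⟨hxS', hxA⟩⟩,
            (erase_inter S' i).symm⟩
        have hbcard : ((C.filter (fun T => x ∈ T)).image (fun T => T.erase x)).card
            = (C.filter (fun T => x ∈ T)).card := by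
          apply Finset.card_image_of_injOn
          intro T hT T' hT' h
          have hxT : x ∈ T := (Finset.mem_filter.mp (Finset.mem_coe.mp hT)).2
          have hxT' : x ∈ T' := (Finset.mem_filter.mp (Finset.mem_coe.mp hT')).2
          rw [← Finset.insert_erase hxT, ← Finset.insert_erase hxT']
          exact congrArg _ h
        calc (F0.image (· ∩ A i)).card + (F1.image (· ∩ A i)).card
            ≤ (C.filter (fun T => x ∉ T)).card + (C.filter (fun T => x ∈ T)).card := by
              refine add_le_add (Finset.card_le_card ha) ?_
              calc (F1.image (· ∩ A i)).card
                  ≤ ((C.filter (fun T => x ∈ T)).image (fun T => T.erase x)).card :=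
                    Finset.card_le_card hb
                _ = (C.filter (fun T => x ∈ T)).card := hbcard
          _ = C.card := hCsplit
      rw [hcard]
      exact shearer_step m I (Finset.filter_subset _ _) t htI ht _ _ _ c1 c2 c3 _ _ h0 h1

private lemma ncard_setOf_finset {V : Type*} [Fintype V] (P : Set V → Prop)
    [DecidablePred fun T : Finset V => P ↑T] :
    {S : Set V | P S}.ncard = (Finset.univ.filter (fun T : Finset V => P ↑T)).card := by
  classical
  calc {S : Set V | P S}.ncard = Nat.card {S : Set V // P S} :=
        (Nat.card_coe_set_eq _).symm
    _ = Nat.card {T : Finset V // P ↑T} := by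
        refine Nat.card_congr ⟨fun S => ⟨S.1.toFinset, by
            rw [Set.coe_toFinset]; exact S.2⟩,
          fun T => ⟨↑T.1, T.2⟩, fun S => Subtype.ext (Set.coe_toFinset _),
          fun T => Subtype.ext (by simp)⟩
    _ = (Finset.univ.filter (fun T : Finset V => P ↑T)).card := by
        rw [Nat.card_eq_fintype_card, Fintype.card_subtype]

end Aux

open Finset in
/-- For a finite vertex-transitive graph `G = (V,E)` and a nonempty
`U ⊆ V`, we have `log₂ i(G)/|V| ≤ log₂ i(G[U])/|U|`; equivalently,
`i(G)^{|U|} ≤ i(G[U])^{|V|}`. Here stable sets of the induced subgraph `G[U]` are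
identified with the stable sets of `G` contained in `U`. -/
theorem stable_set_count_vertex_transitive {V : Type*} [Fintype V] (G : SimpleGraph V)
    (htrans : ∀ u v : V, ∃ φ : G ≃g G, φ u = v) (U : Set V) (hU : U.Nonempty) :
    ({S : Set V | S.Pairwise (fun x y => ¬ G.Adj x y)}).ncard ^ U.ncard ≤
      ({S : Set V | S ⊆ U ∧ S.Pairwise (fun x y => ¬ G.Adj x y)}).ncard ^
        Fintype.card V := by
  classical
  obtain ⟨u₀, hu₀⟩ := hU
  set Ufin : Finset V := Finset.univ.filter (· ∈ U) with hUfin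
  have hUco : (Ufin : Set V) = U := by ext v; simp [hUfin]
  have hu₀U : u₀ ∈ Ufin := by simp [hUfin, hu₀]
  set P : Finset V → Prop := fun S => (↑S : Set V).Pairwise fun x y => ¬ G.Adj x y with hP
  set F : Finset (Finset V) := Finset.univ.filter P with hF
  set FU : Finset (Finset V) := Finset.univ.filter (fun S => S ⊆ Ufin ∧ P S) with hFU
  -- rewrite ncards as Finset cards
  have hcount1 : {S : Set V | S.Pairwise fun x y => ¬ G.Adj x y}.ncard = F.card := by
    rw [ncard_setOf_finset (fun S : Set V => S.Pairwise fun x y => ¬ G.Adj x y)]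
  have hcount2 : {S : Set V | S ⊆ U ∧ S.Pairwise fun x y => ¬ G.Adj x y}.ncard = FU.card := by
    rw [ncard_setOf_finset (fun S : Set V => S ⊆ U ∧ S.Pairwise fun x y => ¬ G.Adj x y)]
    congr 1
    apply Finset.filter_congr
    intro T _
    have : (↑T : Set V) ⊆ U ↔ T ⊆ Ufin := by
      rw [← hUco]
      constructor
      · intro h v hv; exact Finset.mem_coe.mp (h (Finset.mem_coe.mpr hv))
      · intro h v hv; exact Finset.mem_coe.mpr (h (Finset.mem_coe.mp hv))
    simp only [this]
    exact Iff.rfl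
  have hUcard : U.ncard = Ufin.card := by rw [← hUco, Set.ncard_coe_finset]
  rw [hcount1, hcount2, hUcard]
  -- the automorphism set
  set E : Finset (V ≃ V) :=
    Finset.univ.filter (fun e : V ≃ V => ∀ a b : V, G.Adj (e a) (e b) ↔ G.Adj a b) with hE
  have hmemE : ∀ e : V ≃ V, e ∈ E ↔ ∀ a b : V, G.Adj (e a) (e b) ↔ G.Adj a b := by
    intro e; simp [hE]
  have hEtrans : ∀ e f : V ≃ V, e ∈ E → f ∈ E → e.trans f ∈ E := by
    intro e f he hf
    rw [hmemE] at *
    intro a b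
    simp only [Equiv.trans_apply]
    rw [hf (e a) (e b), he a b]
  have hEsymm : ∀ e : V ≃ V, e ∈ E → e.symm ∈ E := by
    intro e he
    rw [hmemE] at *
    intro a b
    conv_rhs => rw [← e.apply_symm_apply a, ← e.apply_symm_apply b]
    rw [he]
  have htransE : ∀ u v : V, ∃ e ∈ E, e u = v := by
    intro u v
    obtain ⟨φ, hφ⟩ := htrans u v
    exact ⟨φ.toEquiv, (hmemE _).mpr (fun a b => φ.map_adj_iff), hφ⟩
  set c : V → V → ℕ := fun u v => (E.filter fun e : V ≃ V => e u = v).card with hc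
  have hceq : ∀ u v w : V, c u v = c u w := by
    intro u v w
    obtain ⟨σ, hσE, hσ⟩ := htransE v w
    refine Finset.card_bij' (fun e _ => e.trans σ) (fun f _ => f.trans σ.symm) ?_ ?_ ?_ ?_
    · intro e he
      obtain ⟨heE, heu⟩ := Finset.mem_filter.mp he
      refine Finset.mem_filter.mpr ⟨hEtrans _ _ heE hσE, ?_⟩
      show σ (e u) = w
      rw [heu, hσ]
    · intro f hf
      obtain ⟨hfE, hfu⟩ := Finset.mem_filter.mp hf
      refine Finset.mem_filter.mpr ⟨hEtrans _ _ hfE (hEsymm _ hσE), ?_⟩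
      show σ.symm (f u) = v
      rw [hfu, ← hσ, Equiv.symm_apply_apply]
    · intro e _
      ext v'
      simp
    · intro f _
      ext v'
      simp
  have hsumv : ∀ u : V, ∑ v ∈ Finset.univ, c u v = E.card := by
    intro u
    exact (Finset.card_eq_sum_card_fiberwise (fun e _ => Finset.mem_univ (e u))).symm
  set t : ℕ := ∑ u ∈ Ufin, c u u₀ with hts
  have ht : 0 < t := by
    have h1 : 0 < c u₀ u₀ := by
      obtain ⟨e, heE, heu⟩ := htransE u₀ u₀
      exact Finset.card_pos.mpr ⟨e, Finset.mem_filter.mpr ⟨heE, heu⟩⟩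
    rw [hts]
    calc 0 < c u₀ u₀ := h1
      _ ≤ ∑ u ∈ Ufin, c u u₀ :=
        Finset.single_le_sum (f := fun u => c u u₀) (fun u _ => Nat.zero_le _) hu₀U
  set A : (V ≃ V) → Finset V := fun e => Ufin.image ⇑e with hA
  have hcov : ∀ v : V, (E.filter fun e : V ≃ V => v ∈ A e).card = t := by
    intro v
    have hsplit : E.filter (fun e : V ≃ V => v ∈ A e)
        = Ufin.biUnion (fun u => E.filter fun e : V ≃ V => e u = v) := by
      ext e
      simp only [Finset.mem_filter, Finset.mem_biUnion, hA, Finset.mem_image]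
      tauto
    rw [hsplit, Finset.card_biUnion]
    · exact Finset.sum_congr rfl fun u _ => hceq u v u₀
    · intro u _ u' _ hne
      rw [Function.onFun, Finset.disjoint_left]
      intro e he he'
      exact hne (e.injective (((Finset.mem_filter.mp he).2).trans
        ((Finset.mem_filter.mp he').2).symm))
  have httn : Fintype.card V * t = Ufin.card * E.card := by
    calc Fintype.card V * t = ∑ _v ∈ (Finset.univ : Finset V), t := by
          rw [Finset.sum_const, smul_eq_mul, Finset.card_univ]
      _ = ∑ v ∈ Finset.univ, ∑ u ∈ Ufin, c u v :=
          Finset.sum_congr rfl fun v _ => Finset.sum_congr rfl fun u _ => hceq u u₀ v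
      _ = ∑ u ∈ Ufin, ∑ v ∈ Finset.univ, c u v := Finset.sum_comm
      _ = ∑ _u ∈ Ufin, E.card := Finset.sum_congr rfl fun u _ => hsumv u
      _ = Ufin.card * E.card := by rw [Finset.sum_const, smul_eq_mul]
  -- trace bound
  have htrace : ∀ e ∈ E, (F.image (· ∩ A e)).card ≤ FU.card := by
    intro e heE
    have hinj : ((F.image (· ∩ A e)).image (fun T => T.image ⇑e.symm)).card
        = (F.image (· ∩ A e)).card :=
      Finset.card_image_of_injective _ (Finset.image_injective e.symm.injective)
    have hsubFU : (F.image (· ∩ A e)).image (fun T => T.image ⇑e.symm) ⊆ FU := by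
      intro T' hT'
      obtain ⟨T, hT, rfl⟩ := Finset.mem_image.mp hT'
      obtain ⟨S, hS, rfl⟩ := Finset.mem_image.mp hT
      have hPS : P S := (Finset.mem_filter.mp hS).2
      simp only [hFU, Finset.mem_filter, Finset.mem_univ, true_and]
      constructor
      · intro v hv
        obtain ⟨w, hw, rfl⟩ := Finset.mem_image.mp hv
        have := (Finset.mem_inter.mp hw).2
        rw [hA] at this
        obtain ⟨u, hu, rfl⟩ := Finset.mem_image.mp this
        rwa [Equiv.symm_apply_apply]
      · intro x hx y hy hxy hadj
        obtain ⟨p, hp, rfl⟩ := Finset.mem_image.mp (Finset.mem_coe.mp hx)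
        obtain ⟨q, hq, rfl⟩ := Finset.mem_image.mp (Finset.mem_coe.mp hy)
        have hpS : p ∈ S := (Finset.mem_inter.mp hp).1
        have hqS : q ∈ S := (Finset.mem_inter.mp hq).1
        have hadj' : G.Adj p q := by
          have := ((hmemE e).mp heE (e.symm p) (e.symm q)).mpr hadj
          simpa using this
        exact hPS (Finset.mem_coe.mpr hpS) (Finset.mem_coe.mpr hqS)
          (fun h => hxy (by rw [h])) hadj'
    calc (F.image (· ∩ A e)).card
        = ((F.image (· ∩ A e)).image (fun T => T.image ⇑e.symm)).card := hinj.symm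
      _ ≤ FU.card := Finset.card_le_card hsubFU
  -- apply Shearer
  have hshear := shearer_count A t ht Finset.univ E F
    (fun v _ => hcov v) (fun S _ => Finset.subset_univ S)
  have hmain : F.card ^ t ≤ FU.card ^ E.card := by
    calc F.card ^ t ≤ ∏ e ∈ E, (F.image (· ∩ A e)).card := hshear
      _ ≤ ∏ _e ∈ E, FU.card := Finset.prod_le_prod' htrace
      _ = FU.card ^ E.card := Finset.prod_const _
  have hEpos : 0 < E.card :=
    Finset.card_pos.mpr ⟨Equiv.refl V, (hmemE _).mpr fun a b => Iff.rfl⟩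
  have hfin : (F.card ^ Ufin.card) ^ E.card ≤ (FU.card ^ Fintype.card V) ^ E.card := by
    calc (F.card ^ Ufin.card) ^ E.card = F.card ^ (Ufin.card * E.card) := by
          rw [← pow_mul]
      _ = F.card ^ (Fintype.card V * t) := by rw [httn]
      _ = (F.card ^ t) ^ Fintype.card V := by rw [← pow_mul, mul_comm]
      _ ≤ (FU.card ^ E.card) ^ Fintype.card V := Nat.pow_le_pow_left hmain _
      _ = (FU.card ^ Fintype.card V) ^ E.card := by rw [← pow_mul, mul_comm, pow_mul]
  exact (Nat.pow_le_pow_iff_left hEpos.ne').mp hfin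
end

section
/- Let 0 ≤ a ≤ b and 0 ≤ r ≤ n be integers satisfying a ≤ r and b − a ≤ n − r. If M is a matroid of rank r on an n-element ground set that does not have the uniform matroid U_{a,b} as a minor, then d(M) ≥ 1/C(b,a), where d(M) is the fraction of r-element subsets of the ground set that are dependent in M. -/
open Filter Set

/-- `M` has a minor isomorphic to the uniform matroid `U_{a,b}`: there are disjoint sets
`C, D ⊆ E(M)` and a maximal independent subset `I` of `C` such that the minor obtained by
contracting `C` and deleting `D` has ground set of size `b`, and its independent sets
(the sets `X` with `X ∪ I` independent in `M`) are exactly the sets of size at most `a`. -/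
def Matroid.HasUniformMinor {α : Type*} (M : Matroid α) (a b : ℕ) : Prop :=
  ∃ C D I : Set α, D ⊆ M.E ∧ Disjoint C D ∧ M.IsBasis I C ∧
    (M.E \ (C ∪ D)).ncard = b ∧
    ∀ X ⊆ M.E \ (C ∪ D), (M.Indep (X ∪ I) ↔ X.ncard ≤ a)

/-- Auxiliary arithmetic fact about binomial coefficients. -/
lemma choose_arith_aux (a c d e N : ℕ)
    (h : (a+c+d+e).choose c * (a+d+e).choose (a+d) ≤ (a+c).choose c * (d+e).choose d * N) :
    (1:ℝ) / ((a+d).choose a) ≤ (N:ℝ) / ((a+c+d+e).choose (a+c)) := by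
  have c1 : 0 < (a+d).choose a := Nat.choose_pos (by omega)
  have c2 : 0 < (a+c+d+e).choose (a+c) := Nat.choose_pos (by omega)
  have c3 : 0 < (a+c).choose c := Nat.choose_pos (by omega)
  have c4 : 0 < (d+e).choose d := Nat.choose_pos (by omega)
  rw [div_le_div_iff₀ (by exact_mod_cast c1) (by exact_mod_cast c2), one_mul]
  have hh : (((a+c+d+e).choose c : ℝ) * ((a+d+e).choose (a+d) : ℝ)) * ((a+d).choose a : ℝ) =
      ((a+c+d+e).choose (a+c) : ℝ) * (((a+c).choose c : ℝ) * ((d+e).choose d : ℝ)) := by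
    rw [Nat.cast_choose ℝ (show c ≤ a+c+d+e by omega),
        Nat.cast_choose ℝ (show a+d ≤ a+d+e by omega),
        Nat.cast_choose ℝ (show a ≤ a+d by omega),
        Nat.cast_choose ℝ (show a+c ≤ a+c+d+e by omega),
        Nat.cast_choose ℝ (show c ≤ a+c by omega),
        Nat.cast_choose ℝ (show d ≤ d+e by omega),
        show a+c+d+e - c = a+d+e by omega, show a+d+e - (a+d) = e by omega,
        show a+d - a = d by omega, show a+c+d+e - (a+c) = d+e by omega,
        show a+c - c = a by omega, show d+e - d = e by omega]
    have f0 : ∀ k : ℕ, ((k.factorial : ℝ)) ≠ 0 := fun k =>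
      Nat.cast_ne_zero.mpr (Nat.factorial_ne_zero k)
    field_simp [f0 a, f0 c, f0 d, f0 e, f0 (a+d), f0 (a+c), f0 (a+d+e), f0 (d+e),
      f0 (a+c+d+e)]
  have hcast : (((a+c+d+e).choose c : ℝ) * ((a+d+e).choose (a+d) : ℝ)) ≤
      (((a+c).choose c : ℝ) * ((d+e).choose d : ℝ)) * (N : ℝ) := by exact_mod_cast h
  have hK : (0:ℝ) < ((a+c).choose c : ℝ) * ((d+e).choose d : ℝ) := by
    have : (0:ℕ) < (a+c).choose c * (d+e).choose d := Nat.mul_pos c3 c4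
    exact_mod_cast this
  have hba : (0:ℝ) ≤ ((a+d).choose a : ℝ) := by positivity
  have h2 := mul_le_mul_of_nonneg_right hcast hba
  rw [hh] at h2
  have h3 : ((a+c+d+e).choose (a+c) : ℝ) * (((a+c).choose c : ℝ) * ((d+e).choose d : ℝ)) ≤
      ((N : ℝ) * ((a+d).choose a : ℝ)) * (((a+c).choose c : ℝ) * ((d+e).choose d : ℝ)) := by
    nlinarith [h2]
  exact le_of_mul_le_mul_right h3 hK

/-- Let `0 ≤ a ≤ b` and `0 ≤ r ≤ n` with `a ≤ r` and `b − a ≤ n − r`.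
If `M` is a matroid of rank `r` on an `n`-element ground set without a `U_{a,b}`-minor,
then `d(M) ≥ 1/C(b,a)`. -/
theorem dep_fraction_of_no_uniform_minor {α : Type*} [Fintype α] (M : Matroid α)
    {a b r n : ℕ} (hab : a ≤ b) (hrn : r ≤ n) (har : a ≤ r) (hba : b - a ≤ n - r)
    (hn : Fintype.card α = n) (hE : M.E = Set.univ) (hr : M.rkt = r)
    (hminor : ¬ M.HasUniformMinor a b) :
    (1 : ℝ) / ((b.choose a : ℝ)) ≤
      (({X : Set α | X.ncard = r ∧ M.Dep X}).ncard : ℝ) / ((n.choose r : ℝ)) := by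
  classical
  subst hn
  obtain ⟨c, hc⟩ : ∃ c, r = a + c := ⟨r - a, by omega⟩
  obtain ⟨d, hd⟩ : ∃ d, b = a + d := ⟨b - a, by omega⟩
  obtain ⟨e, hne⟩ : ∃ e, Fintype.card α = a + c + d + e :=
    ⟨Fintype.card α - r - d, by omega⟩
  subst hc; subst hd
  have hsubE : ∀ X : Set α, X ⊆ M.E := fun X => hE ▸ Set.subset_univ X
  -- every base has cardinality r
  obtain ⟨B0, hB0⟩ := M.exists_isBase
  have hbase : ∀ B, M.IsBase B → B.ncard = a + c := by
    intro B hB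
    have h1 : {k | ∃ B, M.IsBase B ∧ B.ncard = k} = {B0.ncard} := by
      ext k
      simp only [Set.mem_setOf_eq, Set.mem_singleton_iff]
      constructor
      · rintro ⟨B, hB, rfl⟩; exact hB.ncard_eq_ncard_of_isBase hB0
      · rintro rfl; exact ⟨B0, hB0, rfl⟩
    have h2 : M.rkt = B0.ncard := by rw [Matroid.rkt, h1, csSup_singleton]
    rw [hB.ncard_eq_ncard_of_isBase hB0, ← h2, hr]
  have hindep_le : ∀ I : Set α, M.Indep I → I.ncard ≤ a + c := by
    intro I hI
    obtain ⟨B, hB, hIB⟩ := hI.exists_isBase_superset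
    exact (Set.ncard_le_ncard hIB (Set.toFinite B)).trans_eq (hbase B hB)
  -- key combinatorial consequence of having no U_{a,b}-minor
  have hkey : ∀ T S : Finset α, Disjoint T S → T.card = c → S.card = a + d →
      ∃ Z : Finset α, T ⊆ Z ∧ Z ⊆ T ∪ S ∧ Z.card = a + c ∧ M.Dep ↑Z := by
    intro T S hTS hTc hSb
    have hW : ∃ W : Finset α, T ⊆ W ∧ W ⊆ T ∪ S ∧ W.card ≤ a + c ∧ M.Dep ↑W := by
      by_cases hT : M.Indep (↑T : Set α)
      · have hdisjS : ∀ x : α, x ∈ S → x ∉ T := fun x hx => Finset.disjoint_right.mp hTS hx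
        have hmem : M.E \ ((T : Set α) ∪ (Set.univ \ ((T : Set α) ∪ (S : Set α)))) =
            (S : Set α) := by
          rw [hE]; ext x
          have hx := hdisjS x
          simp only [Set.mem_diff, Set.mem_univ, Set.mem_union, true_and, not_or, not_and,
            not_not, Finset.mem_coe]
          tauto
        have hnall : ¬ ∀ X ⊆ M.E \ ((T : Set α) ∪ (Set.univ \ ((T : Set α) ∪ (S : Set α)))),
            (M.Indep (X ∪ ↑T) ↔ X.ncard ≤ a) := by
          intro hall
          refine hminor ⟨↑T, Set.univ \ (↑T ∪ ↑S), ↑T, hsubE _, ?_, hT.isBasis_self, ?_, hall⟩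
          · rw [Set.disjoint_right]
            intro x hx
            simp only [Set.mem_diff, Set.mem_univ, Set.mem_union, true_and, not_or] at hx
            exact fun hxT => hx.1 (Finset.mem_coe.mp hxT)
          · rw [hmem, Set.ncard_coe_finset, hSb]
        push_neg at hnall
        obtain ⟨X, hXS, hX⟩ := hnall
        rw [hmem] at hXS
        have hXfin : X.Finite := Set.toFinite X
        rcases hX with ⟨hPI, hXa⟩ | ⟨hPI, hXa⟩
        · exfalso
          have hdisj : Disjoint X (↑T : Set α) :=
            Set.disjoint_left.mpr fun x hx hxT =>
              (Finset.disjoint_left.mp hTS hxT) (Finset.mem_coe.mp (hXS hx))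
          have hcard : (X ∪ (↑T : Set α)).ncard = X.ncard + c := by
            rw [Set.ncard_union_eq hdisj hXfin (Set.toFinite _), Set.ncard_coe_finset, hTc]
          have := hindep_le _ hPI
          rw [hcard] at this
          omega
        · refine ⟨hXfin.toFinset ∪ T, Finset.subset_union_right, ?_, ?_, ?_⟩
          · apply Finset.union_subset _ Finset.subset_union_left
            intro x hx
            exact Finset.mem_union_right _ (Finset.mem_coe.mp (hXS (hXfin.mem_toFinset.mp hx)))
          · have : (hXfin.toFinset ∪ T).card ≤ hXfin.toFinset.card + T.card :=
              Finset.card_union_le _ _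
            have hXc : hXfin.toFinset.card = X.ncard := by
              rw [Set.ncard_eq_toFinset_card X hXfin]
            omega
          · have hco : ((hXfin.toFinset ∪ T : Finset α) : Set α) = X ∪ ↑T := by
              simp only [Finset.coe_union, Set.Finite.coe_toFinset]
            rw [hco]
            exact ⟨hPI, hsubE _⟩
      · refine ⟨T, Finset.Subset.refl T, Finset.subset_union_left, by omega, ⟨hT, hsubE _⟩⟩
    obtain ⟨W, hTW, hWsub, hWcard, hWdep⟩ := hW
    have hTScard : a + c ≤ (T ∪ S).card := by
      rw [Finset.card_union_of_disjoint hTS, hTc, hSb]; omega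
    obtain ⟨Z, hWZ, hZsub, hZcard⟩ := Finset.exists_subsuperset_card_eq hWsub hWcard hTScard
    exact ⟨Z, hTW.trans hWZ, hZsub, hZcard,
      hWdep.superset (Finset.coe_subset.mpr hWZ) (hsubE _)⟩
  -- counting setup
  set DepF : Finset (Finset α) :=
    Finset.univ.filter (fun Z => Z.card = a + c ∧ M.Dep ↑Z) with hDepF
  set P : Finset (Finset α × Finset α) :=
    (Finset.univ.powersetCard c).biUnion
      (fun T => {T} ×ˢ (Finset.univ \ T).powersetCard (a + d)) with hP
  have hPmem : ∀ p : Finset α × Finset α,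
      p ∈ P ↔ p.1.card = c ∧ p.2.card = a + d ∧ Disjoint p.1 p.2 := by
    intro p
    simp only [hP, Finset.mem_biUnion, Finset.mem_powersetCard, Finset.mem_product,
      Finset.mem_singleton, Finset.subset_univ, true_and]
    constructor
    · rintro ⟨T, hT, rfl, h2, h3⟩
      refine ⟨hT, h3, ?_⟩
      rw [Finset.subset_sdiff] at h2
      exact h2.2.symm
    · rintro ⟨h1, h2, h3⟩
      exact ⟨p.1, h1, rfl, Finset.subset_sdiff.mpr ⟨Finset.subset_univ _, h3.symm⟩, h2⟩
  -- the assignment of a dependent r-set to each pair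
  set f : Finset α × Finset α → Finset α := fun p =>
    if h : ∃ Z : Finset α, p.1 ⊆ Z ∧ Z ⊆ p.1 ∪ p.2 ∧ Z.card = a + c ∧ M.Dep ↑Z
    then h.choose else ∅ with hf
  have hfspec : ∀ p ∈ P, p.1 ⊆ f p ∧ f p ⊆ p.1 ∪ p.2 ∧ (f p).card = a + c ∧ M.Dep ↑(f p) := by
    intro p hp
    obtain ⟨h1, h2, h3⟩ := (hPmem p).mp hp
    have h : ∃ Z : Finset α, p.1 ⊆ Z ∧ Z ⊆ p.1 ∪ p.2 ∧ Z.card = a + c ∧ M.Dep ↑Z :=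
      hkey p.1 p.2 h3 h1 h2
    rw [hf]
    simp only [dif_pos h]
    exact h.choose_spec
  have hmaps : ∀ p ∈ P, f p ∈ DepF := by
    intro p hp
    obtain ⟨_, _, h3, h4⟩ := hfspec p hp
    simp only [hDepF, Finset.mem_filter, Finset.mem_univ, true_and]
    exact ⟨h3, h4⟩
  -- fiber bound
  have hfiber : ∀ Z ∈ DepF,
      (P.filter (fun p => f p = Z)).card ≤ (a+c).choose c * (d+e).choose d := by
    intro Z hZ
    have hZcard : Z.card = a + c := by
      simp only [hDepF, Finset.mem_filter] at hZ
      exact hZ.2.1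
    have hinter : ∀ p ∈ P.filter (fun p => f p = Z), p.2 ∩ Z = Z \ p.1 := by
      intro p hp
      rw [Finset.mem_filter] at hp
      obtain ⟨hpP, hpZ⟩ := hp
      obtain ⟨s1, s2, _, _⟩ := hfspec p hpP
      rw [hpZ] at s1 s2
      obtain ⟨_, _, hdisj⟩ := (hPmem p).mp hpP
      ext x
      simp only [Finset.mem_inter, Finset.mem_sdiff]
      constructor
      · rintro ⟨hx2, hxZ⟩
        exact ⟨hxZ, fun hx1 => (Finset.disjoint_left.mp hdisj hx1) hx2⟩
      · rintro ⟨hxZ, hx1⟩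
        rcases Finset.mem_union.mp (s2 hxZ) with h | h
        · exact absurd h hx1
        · exact ⟨h, hxZ⟩
    calc (P.filter (fun p => f p = Z)).card
        ≤ ((Z.powersetCard c) ×ˢ ((Finset.univ \ Z).powersetCard d)).card := by
          apply Finset.card_le_card_of_injOn (fun p => (p.1, p.2 \ Z))
          · intro p hp
            have hpP := (Finset.mem_filter.mp hp).1
            have hpZ := (Finset.mem_filter.mp hp).2
            obtain ⟨s1, s2, _, _⟩ := hfspec p hpP
            rw [hpZ] at s1 s2
            obtain ⟨h1, h2, hdisj⟩ := (hPmem p).mp hpP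
            rw [Finset.mem_coe, Finset.mem_product]
            constructor
            · exact Finset.mem_powersetCard.mpr ⟨s1, h1⟩
            · refine Finset.mem_powersetCard.mpr ⟨?_, ?_⟩
              · exact Finset.sdiff_subset_sdiff (Finset.subset_univ _) (Finset.Subset.refl _)
              · show (p.2 \ Z).card = d
                have hi := hinter p hp
                have hZp1 : (Z \ p.1).card = a := by
                  rw [Finset.card_sdiff_of_subset s1, hZcard, h1]; omega
                have := Finset.card_sdiff_add_card_inter p.2 Z
                rw [hi, hZp1, h2] at this
                omega
          · intro p hp q hq heq
            simp only [Prod.mk.injEq] at heq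
            obtain ⟨e1, e2⟩ := heq
            have hip := hinter p (by exact_mod_cast hp)
            have hiq := hinter q (by exact_mod_cast hq)
            have h2 : p.2 = q.2 := by
              have hp2 : p.2 = (p.2 \ Z) ∪ (p.2 ∩ Z) := (Finset.sdiff_union_inter _ _).symm
              have hq2 : q.2 = (q.2 \ Z) ∪ (q.2 ∩ Z) := (Finset.sdiff_union_inter _ _).symm
              rw [hp2, hq2, hip, hiq, e1, e2]
            exact Prod.ext e1 h2
      _ = (a+c).choose c * (d+e).choose d := by
          rw [Finset.card_product, Finset.card_powersetCard, Finset.card_powersetCard,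
            hZcard, Finset.card_sdiff_of_subset (Finset.subset_univ Z), Finset.card_univ, hne, hZcard,
            show a + c + d + e - (a + c) = d + e by omega]
  -- cardinality of P
  have hPcard : P.card = (a+c+d+e).choose c * (a+d+e).choose (a+d) := by
    rw [hP, Finset.card_biUnion]
    · have hconst : ∀ T ∈ (Finset.univ : Finset α).powersetCard c,
          ({T} ×ˢ ((Finset.univ : Finset α) \ T).powersetCard (a + d)).card
            = (a+d+e).choose (a+d) := by
        intro T hT
        have hTc : T.card = c := (Finset.mem_powersetCard.mp hT).2
        rw [Finset.card_product, Finset.card_singleton, one_mul, Finset.card_powersetCard,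
          Finset.card_sdiff_of_subset (Finset.subset_univ T), Finset.card_univ, hne, hTc,
          show a + c + d + e - c = a + d + e by omega]
      rw [Finset.sum_congr rfl hconst, Finset.sum_const, Finset.card_powersetCard,
        Finset.card_univ, hne, smul_eq_mul]
    · intro T hT T' hT' hne'
      simp only [Finset.disjoint_left, Finset.mem_product, Finset.mem_singleton]
      rintro p ⟨rfl, -⟩ ⟨h, -⟩
      exact hne' h
  -- the main counting inequality
  have hmain : P.card ≤ ((a+c).choose c * (d+e).choose d) * DepF.card :=
    Finset.card_le_mul_card_image_of_maps_to hmaps _ hfiber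
  -- identify the set count with DepF.card
  have hsetcard : ({X : Set α | X.ncard = a + c ∧ M.Dep X}).ncard = DepF.card := by
    have himg : {X : Set α | X.ncard = a + c ∧ M.Dep X} =
        (fun Z : Finset α => (Z : Set α)) '' ↑DepF := by
      ext X
      simp only [Set.mem_setOf_eq, Set.mem_image, Finset.mem_coe, hDepF, Finset.mem_filter,
        Finset.mem_univ, true_and]
      constructor
      · rintro ⟨h1, h2⟩
        refine ⟨(Set.toFinite X).toFinset, ⟨?_, ?_⟩, (Set.toFinite X).coe_toFinset⟩
        · rw [← Set.ncard_eq_toFinset_card X (Set.toFinite X)]; exact h1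
        · rw [(Set.toFinite X).coe_toFinset]; exact h2
      · rintro ⟨Z, ⟨h1, h2⟩, rfl⟩
        exact ⟨by rw [Set.ncard_coe_finset]; exact h1, h2⟩
    rw [himg, Set.ncard_image_of_injective _ (fun Z₁ Z₂ h => Finset.coe_injective h),
      Set.ncard_coe_finset]
  rw [hsetcard, hne]
  exact choose_arith_aux a c d e DepF.card (by rw [← hPcard]; exact hmain)
end

section
/- Let M be a matroid of rank r on an n-element ground set, and suppose M has a circuit of cardinality k with k < r. Then u(M) ≥ ((r−k)/n)^k, where u(M) = |U(M)|/C(n,r). -/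
open Filter Set

private lemma aux_choose_ineq {n r k : ℕ} (hkr : k < r) (hrn : r ≤ n) :
    (((r : ℝ) - (k : ℝ)) / (n : ℝ)) ^ k ≤
      (((n - k).choose (r - k) : ℝ)) / ((n.choose r : ℝ)) := by
  have hkn : k ≤ n := hkr.le.trans hrn
  have h0n : 0 < n := by omega
  have hnrpos : 0 < n.choose r := Nat.choose_pos hrn
  -- the key natural number inequality
  have h1 : (r - k) ^ k * n.choose k ≤ n ^ k * r.choose k := by
    have ha : (r - k) ^ k ≤ r.descFactorial k :=
      le_trans (Nat.pow_le_pow_left (by omega) k) (Nat.pow_sub_le_descFactorial r k)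
    have hb : n.descFactorial k ≤ n ^ k := Nat.descFactorial_le_pow n k
    have hc := Nat.mul_le_mul ha hb
    rw [Nat.descFactorial_eq_factorial_mul_choose, Nat.descFactorial_eq_factorial_mul_choose]
      at hc
    refine Nat.le_of_mul_le_mul_left ?_ (Nat.factorial_pos k)
    calc (Nat.factorial k) * ((r - k) ^ k * n.choose k) = (r - k) ^ k * ((Nat.factorial k) * n.choose k) := by ring
      _ ≤ (Nat.factorial k) * r.choose k * n ^ k := hc
      _ = (Nat.factorial k) * (n ^ k * r.choose k) := by ring
  have key : (r - k) ^ k * n.choose r ≤ n ^ k * (n - k).choose (r - k) := by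
    refine Nat.le_of_mul_le_mul_left ?_ (Nat.choose_pos hkn)
    calc n.choose k * ((r - k) ^ k * n.choose r)
        = ((r - k) ^ k * n.choose k) * n.choose r := by ring
      _ ≤ (n ^ k * r.choose k) * n.choose r := Nat.mul_le_mul_right _ h1
      _ = n ^ k * (n.choose r * r.choose k) := by ring
      _ = n ^ k * (n.choose k * (n - k).choose (r - k)) := by
          rw [Nat.choose_mul hkr.le]
      _ = n.choose k * (n ^ k * (n - k).choose (r - k)) := by ring
  have hcast : (r : ℝ) - (k : ℝ) = ((r - k : ℕ) : ℝ) := by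
    rw [Nat.cast_sub hkr.le]
  rw [hcast, div_pow, div_le_div_iff₀ (by positivity) (by exact_mod_cast hnrpos)]
  push_cast
  rw [mul_comm ((((n - k).choose (r - k)) : ℝ)) ((n : ℝ) ^ k)]
  exact_mod_cast key

/-- Let `M` be a matroid of rank `r` on an `n`-element ground set with a
circuit of cardinality `k < r`. Then `u(M) ≥ ((r−k)/n)^k`, where `u(M) = |U(M)|/C(n,r)`. -/
theorem u_fraction_of_small_circuit {α : Type*} [Fintype α] (M : Matroid α)
    {n r k : ℕ} (hn : Fintype.card α = n) (hE : M.E = Set.univ) (hr : M.rkt = r)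
    (C : Set α) (hC : M.IsCircuit' C) (hk : C.ncard = k) (hkr : k < r) :
    (((r : ℝ) - (k : ℝ)) / (n : ℝ)) ^ k ≤
      (((matroidU M).ncard : ℝ)) / ((n.choose r : ℝ)) := by
  classical
  -- derive `r ≤ n`
  obtain ⟨B, hB⟩ := M.exists_isBase
  have hBr : B.ncard = r := by
    rw [← hr, Matroid.rkt]
    have hset : {m | ∃ B', M.IsBase B' ∧ B'.ncard = m} = {B.ncard} := by
      ext m
      constructor
      · rintro ⟨B', hB', rfl⟩
        exact (hB'.ncard_eq_ncard_of_isBase hB)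
      · rintro rfl
        exact ⟨B, hB, rfl⟩
    rw [hset, csSup_singleton]
  have hrn : r ≤ n := by
    rw [← hBr, ← hn, ← Nat.card_eq_fintype_card, ← Set.ncard_univ]
    exact Set.ncard_le_ncard (Set.subset_univ B) Set.finite_univ
  have hkn : k ≤ n := hkr.le.trans hrn
  -- the counting: every `r`-set containing `C` is in `matroidU M`
  have hCfin : C.Finite := Set.toFinite C
  set F : Finset (Finset α) := (Finset.univ \ C.toFinset).powersetCard (r - k) with hF
  have hFcard : F.card = (n - k).choose (r - k) := by
    rw [hF, Finset.card_powersetCard, Finset.card_sdiff_of_subset (Finset.subset_univ _),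
      Finset.card_univ, hn, ← Set.ncard_eq_toFinset_card', hk]
  set f : Finset α → Set α := fun D => C ∪ (↑D : Set α) with hf
  have hdisj : ∀ D ∈ F, Disjoint C (↑D : Set α) := by
    intro D hD
    rw [hF, Finset.mem_powersetCard] at hD
    rw [Set.disjoint_right]
    intro a haD haC
    have := hD.1 haD
    rw [Finset.mem_sdiff, Set.mem_toFinset] at this
    exact this.2 haC
  have hinj : Set.InjOn f F := by
    intro D1 h1 D2 h2 heq
    have e1 : (↑D1 : Set α) = (C ∪ ↑D1) \ C := by
      rw [Set.union_diff_left, ((hdisj D1 h1).symm).sdiff_eq_left]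
    have e2 : (↑D2 : Set α) = (C ∪ ↑D2) \ C := by
      rw [Set.union_diff_left, ((hdisj D2 h2).symm).sdiff_eq_left]
    have : (↑D1 : Set α) = (↑D2 : Set α) := by rw [e1, e2, hf] at *; simp only at heq; rw [heq]
    exact_mod_cast this
  set G : Finset (Set α) := F.image f with hG
  have hGcard : G.card = (n - k).choose (r - k) := by
    rw [hG, Finset.card_image_of_injOn hinj, hFcard]
  have hGsub : (↑G : Set (Set α)) ⊆ matroidU M := by
    intro X hX
    rw [hG, Finset.coe_image] at hX
    obtain ⟨D, hD, rfl⟩ := hX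
    have hDF : D ∈ F := Finset.mem_coe.mp hD
    rw [hF, Finset.mem_powersetCard] at hDF
    have hDcard : (↑D : Set α).ncard = r - k := by
      rw [Set.ncard_coe_finset, hDF.2]
    have hXcard : (f D).ncard = r := by
      rw [hf]
      simp only
      rw [Set.ncard_union_eq (hdisj D hD) hCfin (Finset.finite_toSet D), hk, hDcard]
      omega
    have hXE : f D ⊆ M.E := by rw [hE]; exact Set.subset_univ _
    have hXdep : M.Dep (f D) := hC.1.superset Set.subset_union_left hXE
    have hCX : C ⊂ f D := by
      refine ⟨Set.subset_union_left, fun hsub => ?_⟩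
      have : (f D).ncard ≤ C.ncard := Set.ncard_le_ncard hsub hCfin
      omega
    refine ⟨by rw [hXcard, hr], hXdep, fun hch => ?_⟩
    exact hch.1.2 C hCX hC.1
  have hUcard : ((n - k).choose (r - k) : ℝ) ≤ ((matroidU M).ncard : ℝ) := by
    rw [← hGcard, ← Set.ncard_coe_finset]
    exact_mod_cast Set.ncard_le_ncard hGsub (Set.toFinite _)
  calc (((r : ℝ) - (k : ℝ)) / (n : ℝ)) ^ k
      ≤ (((n - k).choose (r - k) : ℝ)) / ((n.choose r : ℝ)) := aux_choose_ineq hkr hrn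
    _ ≤ (((matroidU M).ncard : ℝ)) / ((n.choose r : ℝ)) := by gcongr
end

section
/- Let G = (V,E) be a finite graph that is regular of degree d ≥ 1 and whose adjacency matrix has smallest eigenvalue −λ, let N = |V|, and let m ∈ ℕ. Set σ = (ln(d+1)+1)/(d+λ) and α = λ/(d+λ). Then the number i(G,m) of stable sets of G of cardinality at most m satisfies i(G,m) ≤ (Σ_{i=0}^{⌈σN⌉} C(N,i)) · (Σ_{j=0}^{m} C(⌊αN⌋, j)). -/
open Filter Set

open scoped Matrix

namespace KWAux

open Finset
open scoped InnerProductSpace Matrix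

variable {V : Type*} [Fintype V] [DecidableEq V]

theorem quad_lower_bound (M : Matrix V V ℝ) (hM : M.IsHermitian) (lam : ℝ)
    (hlo : ∀ μ : ℝ, Module.End.HasEigenvalue (Matrix.toLin' M) μ → -lam ≤ μ)
    (x : V → ℝ) : -lam * (x ⬝ᵥ x) ≤ x ⬝ᵥ (M *ᵥ x) := by
  classical
  set b := hM.eigenvectorBasis with hb
  have heig : ∀ i, -lam ≤ hM.eigenvalues i := by
    intro i
    refine hlo _ (Module.End.hasEigenvalue_of_hasEigenvector (x := (b i : V → ℝ)) ⟨?_, ?_⟩)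
    · rw [Module.End.mem_eigenspace_iff, Matrix.toLin'_apply]
      exact hM.mulVec_eigenvectorBasis i
    · exact fun h => b.orthonormal.ne_zero i (by ext v; exact congrFun h v)
  set x' : EuclideanSpace ℝ V := WithLp.toLp 2 x with hx'
  set c : V → ℝ := fun i => ⟪b i, x'⟫_ℝ with hc
  have hxsum : ∑ i, c i • b i = x' := b.sum_repr' x'
  have hMx' : (WithLp.toLp 2 (M.mulVecLin x') : EuclideanSpace ℝ V) =
      ∑ i, (c i * hM.eigenvalues i) • b i := by
    conv_lhs => rw [← hxsum]
    rw [WithLp.ofLp_sum, map_sum, WithLp.toLp_sum]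
    refine Finset.sum_congr rfl fun i _ => ?_
    rw [WithLp.ofLp_smul, map_smul, WithLp.toLp_smul]
    have : WithLp.toLp 2 (M.mulVecLin (b i)) = hM.eigenvalues i • (b i : EuclideanSpace ℝ V) := by
      have := hM.mulVec_eigenvectorBasis i
      ext v
      exact congrFun this v
    rw [this, smul_smul]
  have h1 : (x ⬝ᵥ (M *ᵥ x)) = ∑ i, c i * (c i * hM.eigenvalues i) := by
    have : (x ⬝ᵥ (M *ᵥ x)) = ⟪x', WithLp.toLp 2 (M.mulVecLin x')⟫_ℝ := by
      simp [hx', PiLp.inner_apply, dotProduct, Matrix.mulVecLin_apply, RCLike.inner_apply, mul_comm]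
    rw [this, hMx', ← hxsum]
    simpa using b.orthonormal.inner_sum c (fun i => c i * hM.eigenvalues i) univ
  have h2 : (x ⬝ᵥ x) = ∑ i, c i * c i := by
    have : (x ⬝ᵥ x) = ⟪x', x'⟫_ℝ := by
      rw [hx', PiLp.inner_apply]
      simp [dotProduct, RCLike.inner_apply, pow_two]
    rw [this, ← hxsum]
    simpa using b.orthonormal.inner_sum c c univ
  rw [h1, h2, Finset.mul_sum]
  refine Finset.sum_le_sum fun i _ => ?_
  have hnn : 0 ≤ c i * c i := mul_self_nonneg _
  nlinarith [heig i]
lemma sum_inter_card (G : SimpleGraph V) [DecidableRel G.Adj] (d : ℕ)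
    (hreg : G.IsRegularOfDegree d) (C : Finset V) :
    ∑ v : V, (G.neighborFinset v ∩ C).card = d * C.card := by
  have h1 : ∀ v : V, (G.neighborFinset v ∩ C).card
      = ∑ w ∈ C, (if w ∈ G.neighborFinset v then 1 else 0) := by
    intro v
    rw [Finset.sum_ite_mem, Finset.inter_comm]
    simp
  simp only [h1]
  rw [Finset.sum_comm]
  have h2 : ∀ w ∈ C, (∑ v : V, if w ∈ G.neighborFinset v then 1 else 0) = d := by
    intro w _
    rw [← Finset.card_filter]
    have : (Finset.univ.filter (fun v => w ∈ G.neighborFinset v)) = G.neighborFinset w := by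
      ext v
      simp [SimpleGraph.mem_neighborFinset, SimpleGraph.adj_comm]
    rw [this]
    exact hreg w
  rw [Finset.sum_congr rfl h2, Finset.sum_const, smul_eq_mul, mul_comm]

lemma mixing (G : SimpleGraph V) [DecidableRel G.Adj] (d : ℕ)
    (hreg : G.IsRegularOfDegree d) (lam : ℝ)
    (hquad : ∀ x : V → ℝ, -lam * (x ⬝ᵥ x) ≤ x ⬝ᵥ (G.adjMatrix ℝ *ᵥ x))
    (hN : 0 < Fintype.card V) (C : Finset V) :
    ((d:ℝ)+lam) * (C.card)^2 / (Fintype.card V) - lam * C.card ≤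
      ∑ v ∈ C, ((G.neighborFinset v ∩ C).card : ℝ) := by
  set N : ℝ := (Fintype.card V : ℝ) with hNdef
  have hN0 : (0:ℝ) < N := by rw [hNdef]; exact_mod_cast hN
  set c : ℝ := (C.card : ℝ) with hcdef
  set t : ℝ := c / N with htdef
  have htN : t * N = c := by rw [htdef]; field_simp
  set z : V → ℝ := fun v => (if v ∈ C then (1:ℝ) else 0) - t with hzdef
  set E : ℝ := ∑ v ∈ C, ((G.neighborFinset v ∩ C).card : ℝ) with hEdef
  have f1 : ∀ w : V → ℝ, z ⬝ᵥ w = (∑ v ∈ C, w v) - t * ∑ v, w v := by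
    intro w
    simp only [dotProduct, hzdef, sub_mul, ite_mul, one_mul, zero_mul]
    rw [Finset.sum_sub_distrib, Finset.sum_ite_mem, Finset.univ_inter, Finset.mul_sum]
  have f2 : ∀ v : V, (G.adjMatrix ℝ *ᵥ z) v = ((G.neighborFinset v ∩ C).card : ℝ) - t * d := by
    intro v
    rw [SimpleGraph.adjMatrix_mulVec_apply]
    simp only [hzdef]
    have hdeg : (G.neighborFinset v).card = d := hreg v
    rw [Finset.sum_sub_distrib, Finset.sum_ite_mem, Finset.sum_const, Finset.sum_const, hdeg]
    simp [nsmul_eq_mul, mul_comm]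
  have hsum_univ : ∑ v : V, ((G.neighborFinset v ∩ C).card : ℝ) = d * c := by
    rw [← Nat.cast_sum, sum_inter_card G d hreg C]
    push_cast; ring
  have hsC : ∑ v ∈ C, z v = c - t * c := by
    simp only [hzdef]
    rw [Finset.sum_sub_distrib, Finset.sum_ite_mem, Finset.inter_self, Finset.sum_const,
      Finset.sum_const]
    simp [nsmul_eq_mul, mul_comm]
    rfl
  have hsU : ∑ v : V, z v = c - t * N := by
    simp only [hzdef]
    rw [Finset.sum_sub_distrib, Finset.sum_ite_mem, Finset.univ_inter, Finset.sum_const,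
      Finset.sum_const]
    simp only [Finset.card_univ, nsmul_eq_mul, mul_one, smul_eq_mul]
    rw [hNdef, mul_comm]
  have hz1 : z ⬝ᵥ z = c - t * c := by
    rw [f1 z, hsC, hsU]
    linear_combination t * htN
  have hz2 : z ⬝ᵥ (G.adjMatrix ℝ *ᵥ z) = E - t * d * c := by
    rw [f1]
    have e1 : ∑ v ∈ C, (G.adjMatrix ℝ *ᵥ z) v = E - c * (t * d) := by
      rw [Finset.sum_congr rfl (fun v _ => f2 v), Finset.sum_sub_distrib, Finset.sum_const]
      simp [nsmul_eq_mul, hEdef]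
      exact Or.inl rfl
    have e2 : ∑ v : V, (G.adjMatrix ℝ *ᵥ z) v = d * c - N * (t * d) := by
      rw [Finset.sum_congr rfl (fun v _ => f2 v), Finset.sum_sub_distrib, Finset.sum_const,
        hsum_univ]
      simp only [Finset.card_univ, nsmul_eq_mul, smul_eq_mul]
      first | rw [hNdef] | skip
    rw [e1, e2]
    linear_combination (t * d) * htN
  have hq := hquad z
  rw [hz1, hz2] at hq
  have hc2 : ((d:ℝ)+lam) * c^2 / N = ((d:ℝ)+lam) * (t * c) := by
    rw [htdef]; ring
  rw [hc2]
  nlinarith [hq]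

section Run

variable [Nonempty V]

/-- vertex of maximum degree into `C` -/
noncomputable def pickv (G : SimpleGraph V) [DecidableRel G.Adj] (C : Finset V) : V :=
  if h : C.Nonempty then
    (Finset.exists_max_image C (fun v => (G.neighborFinset v ∩ C).card) h).choose
  else Classical.arbitrary V

lemma pickv_mem (G : SimpleGraph V) [DecidableRel G.Adj] {C : Finset V} (h : C.Nonempty) :
    pickv G C ∈ C := by
  rw [pickv, dif_pos h]
  exact (Finset.exists_max_image C (fun v => (G.neighborFinset v ∩ C).card) h).choose_spec.1

lemma pickv_max (G : SimpleGraph V) [DecidableRel G.Adj] {C : Finset V} (h : C.Nonempty)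
    {w : V} (hw : w ∈ C) :
    (G.neighborFinset w ∩ C).card ≤ (G.neighborFinset (pickv G C) ∩ C).card := by
  rw [pickv, dif_pos h]
  exact (Finset.exists_max_image C (fun v => (G.neighborFinset v ∩ C).card) h).choose_spec.2 w hw

/-- the Kleitman–Winston algorithm -/
noncomputable def run (G : SimpleGraph V) [DecidableRel G.Adj] (R : ℕ) (S : Finset V) :
    ℕ → Finset V → Finset V × Finset V
  | q, C =>
    if C.card ≤ R ∨ q = 0 then (∅, C)
    else if pickv G C ∈ S then
      let p := run G R S (q - 1) (C \ insert (pickv G C) (G.neighborFinset (pickv G C)))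
      (insert (pickv G C) p.1, p.2)
    else run G R S q (C.erase (pickv G C))
  termination_by q C => C.card
  decreasing_by
  · refine Finset.card_lt_card (Finset.ssubset_iff_of_subset (Finset.sdiff_subset) |>.2
      ⟨pickv G C, pickv_mem G ?_, by simp⟩)
    rw [← Finset.card_pos]
    omega
  · exact Finset.card_erase_lt_of_mem (pickv_mem G (by rw [← Finset.card_pos]; omega))


variable (G : SimpleGraph V) [DecidableRel G.Adj] (R : ℕ)


variable (G : SimpleGraph V) [DecidableRel G.Adj] (R : ℕ)

/-- custom induction principle following the recursion of `run` -/
lemma run_rec (S : Finset V) (P : ℕ → Finset V → Prop)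
    (h0 : ∀ q C, (C.card ≤ R ∨ q = 0) → P q C)
    (h1 : ∀ q C, R < C.card → q ≠ 0 → pickv G C ∈ S →
      P (q-1) (C \ insert (pickv G C) (G.neighborFinset (pickv G C))) → P q C)
    (h2 : ∀ q C, R < C.card → q ≠ 0 → pickv G C ∉ S →
      P q (C.erase (pickv G C)) → P q C) :
    ∀ q C, P q C := by
  have H : ∀ (n q : ℕ) (C : Finset V), C.card ≤ n → P q C := by
    intro n
    induction n using Nat.strong_induction_on with
    | _ n IH =>
      intro q C hC
      by_cases h : C.card ≤ R ∨ q = 0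
      · exact h0 q C h
      · push_neg at h
        have hne : C.Nonempty := by rw [← Finset.card_pos]; omega
        have hvC : pickv G C ∈ C := pickv_mem G hne
        by_cases hs : pickv G C ∈ S
        · refine h1 q C (by omega) h.2 hs ?_
          have hcard : (C \ insert (pickv G C) (G.neighborFinset (pickv G C))).card < C.card :=
            Finset.card_lt_card (Finset.ssubset_iff_of_subset Finset.sdiff_subset |>.2
              ⟨_, hvC, by simp⟩)
          exact IH _ (by omega) _ _ le_rfl
        · refine h2 q C (by omega) h.2 hs ?_
          have hcard : (C.erase (pickv G C)).card < C.card := Finset.card_erase_lt_of_mem hvC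
          exact IH _ (by omega) _ _ le_rfl
  exact fun q C => H C.card q C le_rfl

lemma run_stop (S : Finset V) {q : ℕ} {C : Finset V} (h : C.card ≤ R ∨ q = 0) :
    run G R S q C = (∅, C) := by rw [run, if_pos h]

lemma run_sel (S : Finset V) {q : ℕ} {C : Finset V} (h1 : R < C.card) (h2 : q ≠ 0)
    (hs : pickv G C ∈ S) :
    run G R S q C = ((insert (pickv G C)
        (run G R S (q-1) (C \ insert (pickv G C) (G.neighborFinset (pickv G C)))).1),
      (run G R S (q-1) (C \ insert (pickv G C) (G.neighborFinset (pickv G C)))).2) := by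
  rw [run, if_neg (by omega), if_pos hs]

lemma run_rej (S : Finset V) {q : ℕ} {C : Finset V} (h1 : R < C.card) (h2 : q ≠ 0)
    (hs : pickv G C ∉ S) :
    run G R S q C = run G R S q (C.erase (pickv G C)) := by
  rw [run, if_neg (by omega), if_neg hs]

lemma run_fst_subset (S : Finset V) (q : ℕ) (C : Finset V) :
    (run G R S q C).1 ⊆ C ∧ (run G R S q C).1 ⊆ S := by
  refine run_rec G R S (fun q C => (run G R S q C).1 ⊆ C ∧ (run G R S q C).1 ⊆ S)
    ?_ ?_ ?_ q C
  · intro q C h; rw [run_stop G R S h]; simp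
  · intro q C hR hq hs ⟨ih1, ih2⟩
    rw [run_sel G R S hR hq hs]
    have hne : C.Nonempty := by rw [← Finset.card_pos]; omega
    exact ⟨Finset.insert_subset (pickv_mem G hne) (ih1.trans Finset.sdiff_subset),
      Finset.insert_subset hs ih2⟩
  · intro q C hR hq hs ⟨ih1, ih2⟩
    rw [run_rej G R S hR hq hs]
    exact ⟨ih1.trans (Finset.erase_subset _ _), ih2⟩

lemma run_fst_card (S : Finset V) (q : ℕ) (C : Finset V) :
    (run G R S q C).1.card ≤ q := by
  refine run_rec G R S (fun q C => (run G R S q C).1.card ≤ q) ?_ ?_ ?_ q C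
  · intro q C h; rw [run_stop G R S h]; simp
  · intro q C hR hq hs ih
    rw [run_sel G R S hR hq hs]
    have h2 := Finset.card_insert_le (pickv G C)
      (run G R S (q-1) (C \ insert (pickv G C) (G.neighborFinset (pickv G C)))).1
    simp only []
    omega
  · intro q C hR hq hs ih
    rw [run_rej G R S hR hq hs]; exact ih

lemma run_container (S : Finset V) (hstab : ∀ u ∈ S, ∀ v ∈ S, ¬ G.Adj u v)
    (q : ℕ) (C : Finset V) :
    ∀ w ∈ C, w ∈ S → w ∉ (run G R S q C).1 → w ∈ (run G R S q C).2 := by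
  refine run_rec G R S (fun q C => ∀ w ∈ C, w ∈ S → w ∉ (run G R S q C).1 →
    w ∈ (run G R S q C).2) ?_ ?_ ?_ q C
  · intro q C h w hw _ _; rw [run_stop G R S h]; exact hw
  · intro q C hR hq hs ih w hw hwS hwA
    rw [run_sel G R S hR hq hs] at hwA ⊢
    simp only [Finset.mem_insert, not_or] at hwA
    refine ih w ?_ hwS hwA.2
    simp only [Finset.mem_sdiff, Finset.mem_insert, SimpleGraph.mem_neighborFinset]
    refine ⟨hw, ?_⟩
    rintro (rfl | hadj)
    · exact hwA.1 rfl
    · exact hstab _ hs _ hwS hadj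
  · intro q C hR hq hs ih w hw hwS hwA
    rw [run_rej G R S hR hq hs] at hwA ⊢
    refine ih w (Finset.mem_erase.2 ⟨?_, hw⟩) hwS hwA
    rintro rfl; exact hs hwS

lemma run_congr (S₁ S₂ : Finset V) (q : ℕ) (C : Finset V)
    (h : ∀ w ∈ C, w ∈ S₁ ↔ w ∈ S₂) : run G R S₁ q C = run G R S₂ q C := by
  have H : ∀ (n q : ℕ) (C : Finset V), C.card ≤ n → (∀ w ∈ C, w ∈ S₁ ↔ w ∈ S₂) →
      run G R S₁ q C = run G R S₂ q C := by
    intro n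
    induction n using Nat.strong_induction_on with
    | _ n IH =>
    intro q C hCn h
    by_cases hstop : C.card ≤ R ∨ q = 0
    · rw [run_stop G R S₁ hstop, run_stop G R S₂ hstop]
    · push_neg at hstop
      have hne : C.Nonempty := by rw [← Finset.card_pos]; omega
      have hvC : pickv G C ∈ C := pickv_mem G hne
      by_cases hs : pickv G C ∈ S₁
      · have hs₂ : pickv G C ∈ S₂ := (h _ hvC).1 hs
        rw [run_sel G R S₁ (by omega) hstop.2 hs, run_sel G R S₂ (by omega) hstop.2 hs₂]
        have hcard : (C \ insert (pickv G C) (G.neighborFinset (pickv G C))).card < C.card :=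
          Finset.card_lt_card (Finset.ssubset_iff_of_subset Finset.sdiff_subset |>.2
            ⟨_, hvC, by simp⟩)
        rw [IH _ (by omega) _ _ le_rfl (fun w hw => h w (Finset.sdiff_subset hw))]
      · have hs₂ : pickv G C ∉ S₂ := fun hc => hs ((h _ hvC).2 hc)
        rw [run_rej G R S₁ (by omega) hstop.2 hs, run_rej G R S₂ (by omega) hstop.2 hs₂]
        have hcard : (C.erase (pickv G C)).card < C.card := Finset.card_erase_lt_of_mem hvC
        exact IH _ (by omega) _ _ le_rfl (fun w hw => h w (Finset.erase_subset _ _ hw))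
  exact H C.card q C le_rfl h

lemma run_reconstruct (S : Finset V) (q : ℕ) (C : Finset V) :
    run G R ((run G R S q C).1) q C = run G R S q C := by
  have H : ∀ (n q : ℕ) (C : Finset V), C.card ≤ n →
      run G R ((run G R S q C).1) q C = run G R S q C := by
    intro n
    induction n using Nat.strong_induction_on with
    | _ n IH =>
    intro q C hCn
    by_cases hstop : C.card ≤ R ∨ q = 0
    · rw [run_stop G R S hstop, run_stop G R _ hstop]
    · push_neg at hstop
      have hne : C.Nonempty := by rw [← Finset.card_pos]; omega
      have hvC : pickv G C ∈ C := pickv_mem G hne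
      by_cases hs : pickv G C ∈ S
      · set C' := C \ insert (pickv G C) (G.neighborFinset (pickv G C)) with hC'
        have hcard : C'.card < C.card :=
          Finset.card_lt_card (Finset.ssubset_iff_of_subset Finset.sdiff_subset |>.2
            ⟨_, hvC, by simp⟩)
        have hAeq := run_sel G R S (by omega) hstop.2 hs
        have hA1 : (run G R S q C).1 = insert (pickv G C) (run G R S (q-1) C').1 := by
          rw [hAeq]
        have hs' : pickv G C ∈ (run G R S q C).1 := by rw [hA1]; exact Finset.mem_insert_self _ _
        rw [run_sel G R _ (by omega) hstop.2 hs']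
        have hcongr : run G R ((run G R S q C).1) (q-1) C' = run G R ((run G R S (q-1) C').1) (q-1) C' := by
          refine run_congr G R _ _ _ _ fun w hw => ?_
          rw [hA1, Finset.mem_insert]
          have hwv : w ≠ pickv G C := by
            intro h; subst h
            simp [hC'] at hw
          simp [hwv]
        rw [show (C \ insert (pickv G C) (G.neighborFinset (pickv G C))) = C' from rfl,
          hcongr, IH _ (by omega) _ _ le_rfl, hC']
        exact hAeq.symm
      · have hcard : (C.erase (pickv G C)).card < C.card := Finset.card_erase_lt_of_mem hvC
        have hAeq := run_rej G R S (by omega) hstop.2 hs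
        have hs' : pickv G C ∉ (run G R S q C).1 := by
          intro hc
          have := (run_fst_subset G R S q C).1 hc
          rw [hAeq] at hc
          have := (run_fst_subset G R S q (C.erase (pickv G C))).1 hc
          simp at this
        rw [run_rej G R _ (by omega) hstop.2 hs',
          show (run G R S q C).1 = (run G R S q (C.erase (pickv G C))).1 by rw [hAeq],
          IH _ (by omega) _ _ le_rfl]
        exact hAeq.symm
  exact H C.card q C le_rfl

lemma run_snd_card (S : Finset V) (a b : ℝ) (ha : 0 < a)
    (hdeg : ∀ C : Finset V, C.Nonempty →
      a * C.card - b ≤ ((G.neighborFinset (pickv G C) ∩ C).card : ℝ))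
    (hRF : b / a < R + 1) (q : ℕ) (C : Finset V) :
    ((run G R S q C).2.card : ℝ) ≤
      max (R : ℝ) ((max (1-a) 0)^q * ((C.card : ℝ) - b/a + 1/a) + b/a - 1/a) := by
  set g := max (1-a) 0 with hg
  have hg0 : 0 ≤ g := le_max_right _ _
  refine run_rec G R S (fun q C => ((run G R S q C).2.card : ℝ) ≤
      max (R : ℝ) (g^q * ((C.card : ℝ) - b/a + 1/a) + b/a - 1/a)) ?_ ?_ ?_ q C
  · intro q C h
    rw [run_stop G R S h]
    rcases h with h | h
    · exact le_max_of_le_left (by exact_mod_cast h)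
    · subst h
      refine le_max_of_le_right ?_
      rw [pow_zero, one_mul]
      ring_nf
      exact le_rfl
  · intro q C hR hq hs ih
    rw [run_sel G R S hR hq hs]
    have hne : C.Nonempty := by rw [← Finset.card_pos]; omega
    set v := pickv G C with hv
    have hvC : v ∈ C := pickv_mem G hne
    set X := insert v (G.neighborFinset v) with hX
    have hXC : X ∩ C = insert v (G.neighborFinset v ∩ C) := by
      ext w
      simp only [hX, Finset.mem_inter, Finset.mem_insert]
      constructor
      · rintro ⟨(rfl | hw), hwC⟩
        · exact Or.inl rfl
        · exact Or.inr ⟨hw, hwC⟩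
      · rintro (rfl | ⟨h1, h2⟩)
        · exact ⟨Or.inl rfl, hvC⟩
        · exact ⟨Or.inr h1, h2⟩
    have hXCcard : (X ∩ C).card = (G.neighborFinset v ∩ C).card + 1 := by
      rw [hXC, Finset.card_insert_of_notMem (by
        simp [SimpleGraph.mem_neighborFinset])]
    have hsd : C \ X = C \ (X ∩ C) := by
      ext w; simp only [Finset.mem_sdiff, Finset.mem_inter]; tauto
    have hcard : (C \ X).card = C.card - (X ∩ C).card := by
      rw [hsd, Finset.card_sdiff_of_subset Finset.inter_subset_right]
    have hle : (X ∩ C).card ≤ C.card := Finset.card_le_card Finset.inter_subset_right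
    have hcR : ((C \ X).card : ℝ) = (C.card : ℝ) - ((G.neighborFinset v ∩ C).card : ℝ) - 1 := by
      rw [hcard, Nat.cast_sub hle, hXCcard]
      push_cast; ring
    have hdegC := hdeg C hne
    -- key inequality
    have key : ((C \ X).card : ℝ) - b/a + 1/a ≤ g * ((C.card : ℝ) - b/a + 1/a) := by
      rcases le_or_gt 0 (1 - a) with hga | hga
      · rw [hg, max_eq_left hga]
        have e1 : (1-a)*((C.card : ℝ) - b/a + 1/a) =
            (C.card : ℝ) - b/a + 1/a - a*(C.card : ℝ) + b - 1 := by
          field_simp; ring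
        rw [e1, hcR]
        linarith
      · rw [hg, max_eq_right (le_of_lt hga), zero_mul]
        have ha1 : 1 < a := by linarith
        have hcF : b/a < (C.card : ℝ) := by
          have : ((R : ℝ) + 1) ≤ (C.card : ℝ) := by exact_mod_cast hR
          linarith
        have h1 : (a - 1) * ((C.card : ℝ) - b/a) > 0 :=
          mul_pos (by linarith) (by linarith)
        have e2 : a * (b/a) = b := by field_simp
        have h2 : 1/a < 1 := by rw [div_lt_one (by linarith)]; exact ha1
        nlinarith [hdegC, hcR]
    have step : g^(q-1) * (((C \ X).card : ℝ) - b/a + 1/a) ≤ g^q * ((C.card : ℝ) - b/a + 1/a) := by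
      calc g^(q-1) * (((C \ X).card : ℝ) - b/a + 1/a)
          ≤ g^(q-1) * (g * ((C.card : ℝ) - b/a + 1/a)) := by
            exact mul_le_mul_of_nonneg_left key (pow_nonneg hg0 _)
        _ = g^q * ((C.card : ℝ) - b/a + 1/a) := by
            rw [← mul_assoc, ← pow_succ]
            congr 2
            omega
    calc ((run G R S (q-1) (C \ X)).2.card : ℝ)
        ≤ max (R : ℝ) (g^(q-1) * (((C \ X).card : ℝ) - b/a + 1/a) + b/a - 1/a) := ih
      _ ≤ max (R : ℝ) (g^q * ((C.card : ℝ) - b/a + 1/a) + b/a - 1/a) :=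
          max_le_max le_rfl (by linarith)
  · intro q C hR hq hs ih
    rw [run_rej G R S hR hq hs]
    have hne : C.Nonempty := by rw [← Finset.card_pos]; omega
    have hvC : pickv G C ∈ C := pickv_mem G hne
    have hcard : ((C.erase (pickv G C)).card : ℝ) = (C.card : ℝ) - 1 := by
      rw [Finset.card_erase_of_mem hvC]
      have : 1 ≤ C.card := by omega
      push_cast [Nat.cast_sub this]; ring
    refine ih.trans (max_le_max le_rfl ?_)
    have : g^q * (((C.erase (pickv G C)).card : ℝ) - b/a + 1/a) ≤
        g^q * ((C.card : ℝ) - b/a + 1/a) := by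
      apply mul_le_mul_of_nonneg_left _ (pow_nonneg hg0 _)
      rw [hcard]; linarith
    linarith


lemma pick_deg (G : SimpleGraph V) [DecidableRel G.Adj] (d : ℕ)
    (hreg : G.IsRegularOfDegree d) (lam : ℝ)
    (hquad : ∀ x : V → ℝ, -lam * (x ⬝ᵥ x) ≤ x ⬝ᵥ (G.adjMatrix ℝ *ᵥ x))
    (hN : 0 < Fintype.card V) {C : Finset V} (hC : C.Nonempty) :
    ((d:ℝ)+lam) * C.card / (Fintype.card V) - lam ≤
      ((G.neighborFinset (pickv G C) ∩ C).card : ℝ) := by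
  set c : ℝ := (C.card : ℝ) with hcdef
  have hc0 : (0:ℝ) < c := by
    rw [hcdef]; exact_mod_cast Finset.card_pos.2 hC
  set D : ℝ := ((G.neighborFinset (pickv G C) ∩ C).card : ℝ) with hDdef
  have hE : ∑ v ∈ C, ((G.neighborFinset v ∩ C).card : ℝ) ≤ c * D := by
    calc ∑ v ∈ C, ((G.neighborFinset v ∩ C).card : ℝ) ≤ ∑ _v ∈ C, D := by
          refine Finset.sum_le_sum fun v hv => ?_
          rw [hDdef]
          exact_mod_cast pickv_max G hC hv
      _ = c * D := by rw [Finset.sum_const, nsmul_eq_mul, hcdef]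
  have hmix := mixing G d hreg lam hquad hN C
  have h1 : c * (((d:ℝ)+lam) * c / (Fintype.card V) - lam) ≤ c * D := by
    calc c * (((d:ℝ)+lam) * c / (Fintype.card V) - lam)
        = ((d:ℝ)+lam) * c^2 / (Fintype.card V) - lam * c := by ring
      _ ≤ ∑ v ∈ C, ((G.neighborFinset v ∩ C).card : ℝ) := hmix
      _ ≤ c * D := hE
  exact le_of_mul_le_mul_left h1 hc0

lemma lam_ge_one (G : SimpleGraph V) [DecidableRel G.Adj] (d : ℕ) (hd : 1 ≤ d)
    (hreg : G.IsRegularOfDegree d) (lam : ℝ)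
    (hquad : ∀ x : V → ℝ, -lam * (x ⬝ᵥ x) ≤ x ⬝ᵥ (G.adjMatrix ℝ *ᵥ x)) :
    1 ≤ lam := by
  obtain ⟨v⟩ := ‹Nonempty V›
  have hnb : (G.neighborFinset v).Nonempty := by
    rw [← Finset.card_pos, SimpleGraph.card_neighborFinset_eq_degree, hreg v]; omega
  obtain ⟨w, hw⟩ := hnb
  have hadj : G.Adj v w := (SimpleGraph.mem_neighborFinset G v w).1 hw
  have hvw : v ≠ w := G.ne_of_adj hadj
  set x : V → ℝ := fun i => (if i = v then (1:ℝ) else 0) - (if i = w then 1 else 0) with hx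
  have hxx : x ⬝ᵥ x = 2 := by
    have hpt : ∀ i, x i * x i = (if i = v then (1:ℝ) else 0) + (if i = w then 1 else 0) := by
      intro i
      by_cases h1 : i = v
      · by_cases h2 : i = w
        · exact absurd (h1.symm.trans h2) hvw
        · norm_num [hx, h1, h2, hvw, hvw.symm] <;> split_ifs <;> norm_num
      · by_cases h2 : i = w
        · norm_num [hx, h1, h2, hvw, hvw.symm] <;> split_ifs <;> norm_num
        · norm_num [hx, h1, h2, hvw, hvw.symm] <;> split_ifs <;> norm_num
    rw [dotProduct]
    rw [Finset.sum_congr rfl (fun i _ => hpt i), Finset.sum_add_distrib,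
      Finset.sum_ite_eq' Finset.univ v (fun _ => (1:ℝ)),
      Finset.sum_ite_eq' Finset.univ w (fun _ => (1:ℝ))]
    simp
    norm_num
  have hMx : ∀ u : V, (G.adjMatrix ℝ *ᵥ x) u =
      (if v ∈ G.neighborFinset u then (1:ℝ) else 0) -
      (if w ∈ G.neighborFinset u then 1 else 0) := by
    intro u
    rw [SimpleGraph.adjMatrix_mulVec_apply]
    simp only [hx]
    rw [Finset.sum_sub_distrib,
      Finset.sum_ite_eq' (G.neighborFinset u) v (fun _ => (1:ℝ)),
      Finset.sum_ite_eq' (G.neighborFinset u) w (fun _ => (1:ℝ))]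
  have hxMx : x ⬝ᵥ (G.adjMatrix ℝ *ᵥ x) = -2 := by
    have hpt : ∀ i, x i * (G.adjMatrix ℝ *ᵥ x) i =
        (if i = v then (G.adjMatrix ℝ *ᵥ x) v else 0) -
        (if i = w then (G.adjMatrix ℝ *ᵥ x) w else 0) := by
      intro i
      by_cases h1 : i = v
      · by_cases h2 : i = w
        · exact absurd (h1.symm.trans h2) hvw
        · norm_num [hx, h1, h2, hvw, hvw.symm] <;> split_ifs <;> norm_num
      · by_cases h2 : i = w
        · norm_num [hx, h1, h2, hvw, hvw.symm] <;> split_ifs <;> norm_num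
        · norm_num [hx, h1, h2, hvw, hvw.symm] <;> split_ifs <;> norm_num
    rw [dotProduct, Finset.sum_congr rfl (fun i _ => hpt i), Finset.sum_sub_distrib,
      Finset.sum_ite_eq' Finset.univ v, Finset.sum_ite_eq' Finset.univ w]
    simp only [Finset.mem_univ, if_true]
    rw [hMx v, hMx w]
    have h1 : v ∉ G.neighborFinset v := by simp
    have h2 : w ∈ G.neighborFinset v := hw
    have h3 : v ∈ G.neighborFinset w := by
      rw [SimpleGraph.mem_neighborFinset]; exact hadj.symm
    have h4 : w ∉ G.neighborFinset w := by simp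
    rw [if_neg h1, if_pos h2, if_pos h3, if_neg h4]
    norm_num
  have := hquad x
  rw [hxx, hxMx] at this
  linarith

lemma card_powerset_filter_le {α : Type*} [DecidableEq α] (s : Finset α) (k : ℕ) :
    (s.powerset.filter (fun A => A.card ≤ k)).card
      = ∑ i ∈ Finset.range (k+1), s.card.choose i := by
  classical
  have h : s.powerset.filter (fun A => A.card ≤ k)
      = (Finset.range (k+1)).biUnion (fun i => s.powersetCard i) := by
    ext A
    simp only [Finset.mem_filter, Finset.mem_powerset, Finset.mem_biUnion, Finset.mem_range,
      Finset.mem_powersetCard, Nat.lt_succ_iff]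
    constructor
    · rintro ⟨h1, h2⟩; exact ⟨A.card, h2, h1, rfl⟩
    · rintro ⟨i, hi, h1, rfl⟩; exact ⟨h1, hi⟩
  rw [h, Finset.card_biUnion]
  · exact Finset.sum_congr rfl fun i _ => Finset.card_powersetCard i s
  · intro i _ j _ hij
    rw [Function.onFun, Finset.disjoint_left]
    intro A hA hA'
    rw [Finset.mem_powersetCard] at hA hA'
    exact hij (hA.2 ▸ hA'.2)

lemma rnk_lt (f : V → ℕ) (D : Finset V) {v : V} (hv : v ∈ D) :
    (D.filter (fun w => f w < f v)).card < D.card :=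
  Finset.card_lt_card (Finset.ssubset_iff_of_subset (Finset.filter_subset _ _) |>.2
    ⟨v, hv, by simp⟩)

lemma rnk_inj (f : V → ℕ) (hf : Function.Injective f) (D : Finset V) {v w : V}
    (hv : v ∈ D) (hw : w ∈ D)
    (h : (D.filter (fun u => f u < f v)).card = (D.filter (fun u => f u < f w)).card) :
    v = w := by
  by_contra hne
  have hfne : f v ≠ f w := fun hc => hne (hf hc)
  wlog hlt : f v < f w generalizing v w
  · exact this hw hv h.symm (Ne.symm hne) hfne.symm (hfne.lt_or_gt.resolve_left hlt)
  have hss : D.filter (fun u => f u < f v) ⊂ D.filter (fun u => f u < f w) := by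
    refine Finset.ssubset_iff_of_subset
      (Finset.monotone_filter_right D (fun u _ hu => lt_trans hu hlt)) |>.2
      ⟨v, Finset.mem_filter.2 ⟨hv, hlt⟩, by simp⟩
  exact absurd h (Nat.ne_of_lt (Finset.card_lt_card hss))

end Run

end KWAux

/-- For a `d`-regular graph `G` (`d ≥ 1`) on `N` vertices with smallest
adjacency eigenvalue `−λ`, the number `i(G,m)` of stable sets of cardinality at most `m`
satisfies `i(G,m) ≤ (Σ_{i=0}^{⌈σN⌉} C(N,i)) · (Σ_{j=0}^{m} C(⌊αN⌋,j))`, where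
`σ = (ln(d+1)+1)/(d+λ)` and `α = λ/(d+λ)`. -/
theorem count_small_stable_sets {V : Type*} [Fintype V] [DecidableEq V]
    (G : SimpleGraph V) [DecidableRel G.Adj] (d : ℕ) (hd : 1 ≤ d)
    (hreg : G.IsRegularOfDegree d) (lam : ℝ) (hlam : SmallestAdjEigenvalue G lam)
    (m : ℕ) :
    (({S : Set V | S.Pairwise (fun u v => ¬ G.Adj u v) ∧ S.ncard ≤ m}).ncard : ℝ) ≤
      (∑ i ∈ Finset.range
          (⌈(Real.log (d + 1) + 1) / (d + lam) * (Fintype.card V : ℝ)⌉₊ + 1),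
          ((Fintype.card V).choose i : ℝ)) *
        (∑ j ∈ Finset.range (m + 1),
          ((⌊lam / (d + lam) * (Fintype.card V : ℝ)⌋₊).choose j : ℝ)) := by
  classical
  rcases isEmpty_or_nonempty V with hV | hV
  · exfalso
    refine hlam.1 ?_
    haveI : Subsingleton (V → ℝ) := ⟨fun f g => funext fun v => (hV.elim v)⟩
    exact Submodule.eq_bot_of_subsingleton
  open KWAux in
  -- setup
  have hN : 0 < Fintype.card V := Fintype.card_pos
  have hN0 : (0:ℝ) < (Fintype.card V : ℝ) := by exact_mod_cast hN
  have herm : (G.adjMatrix ℝ).IsHermitian := by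
    show (G.adjMatrix ℝ)ᴴ = G.adjMatrix ℝ
    ext i j
    simp [Matrix.conjTranspose_apply, SimpleGraph.adj_comm]
  have hquad : ∀ x : V → ℝ, -lam * (dotProduct x x) ≤
      dotProduct x (Matrix.mulVec (G.adjMatrix ℝ) x) :=
    fun x => quad_lower_bound (G.adjMatrix ℝ) herm lam hlam.2 x
  have hlam1 : 1 ≤ lam := lam_ge_one G d hd hreg lam hquad
  have hdlam : (0:ℝ) < (d:ℝ) + lam := by
    have : (1:ℝ) ≤ (d:ℝ) := by exact_mod_cast hd
    linarith
  set q0 : ℕ := ⌈(Real.log (d + 1) + 1) / (d + lam) * (Fintype.card V : ℝ)⌉₊ with hq0def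
  set R : ℕ := ⌊lam / (d + lam) * (Fintype.card V : ℝ)⌋₊ with hRdef
  set a : ℝ := ((d:ℝ) + lam) / (Fintype.card V : ℝ) with hadef
  have ha : 0 < a := by rw [hadef]; positivity
  have hdeg : ∀ C : Finset V, C.Nonempty →
      a * C.card - lam ≤ ((G.neighborFinset (pickv G C) ∩ C).card : ℝ) := by
    intro C hC
    have := pick_deg G d hreg lam hquad hN hC
    have heq : a * (C.card : ℝ) - lam
        = ((d:ℝ)+lam) * C.card / (Fintype.card V : ℝ) - lam := by
      rw [hadef]; ring
    rw [heq]
    exact this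
  have hba : lam / a = lam / ((d:ℝ) + lam) * (Fintype.card V : ℝ) := by
    rw [hadef]
    field_simp
  have hRF : lam / a < (R:ℝ) + 1 := by
    rw [hba, hRdef]
    exact Nat.lt_floor_add_one _
  -- the container size bound
  have hcont : ∀ S : Finset V, ((run G R S q0 Finset.univ).2).card ≤ R := by
    intro S
    have h6 := run_snd_card G R S a lam ha hdeg hRF q0 Finset.univ
    set g : ℝ := max (1 - a) 0 with hg
    have hg0 : 0 ≤ g := le_max_right _ _
    have hge : g ≤ Real.exp (-a) :=
      max_le (by linarith [Real.add_one_le_exp (-a)]) (Real.exp_pos _).le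
    have hgq : g ^ q0 ≤ Real.exp (-(a * q0)) := by
      calc g ^ q0 ≤ Real.exp (-a) ^ q0 := pow_le_pow_left₀ hg0 hge q0
        _ = Real.exp ((q0:ℝ) * (-a)) := (Real.exp_nat_mul _ _).symm
        _ = Real.exp (-(a * q0)) := by ring_nf
    have hq0le : Real.log (d+1) + 1 ≤ a * q0 := by
      have h1 : ((Real.log (d+1) + 1)/((d:ℝ)+lam) * (Fintype.card V : ℝ)) ≤ (q0:ℝ) := by
        rw [hq0def]; exact Nat.le_ceil _
      have h2 : a * ((Real.log (d+1) + 1)/((d:ℝ)+lam) * (Fintype.card V : ℝ))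
          = Real.log (d+1) + 1 := by
        rw [hadef]; field_simp
      calc Real.log (d+1) + 1
          = a * ((Real.log (d+1) + 1)/((d:ℝ)+lam) * (Fintype.card V : ℝ)) := h2.symm
        _ ≤ a * q0 := mul_le_mul_of_nonneg_left h1 ha.le
    have hexp : Real.exp (-(a * q0)) ≤ 1 / (((d:ℝ)+1) * Real.exp 1) := by
      have he : Real.exp (-(Real.log (d+1) + 1)) = 1/(((d:ℝ)+1) * Real.exp 1) := by
        rw [Real.exp_neg, Real.exp_add, Real.exp_log (by positivity : (0:ℝ) < (d:ℝ)+1),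
          one_div]
      rw [← he]
      exact Real.exp_le_exp.2 (by linarith)
    have hKey : ((Finset.univ : Finset V).card : ℝ) - lam/a + 1/a = ((d:ℝ)+1) * (1/a) := by
      rw [Finset.card_univ, hadef]
      field_simp
      ring
    have hfinal : g ^ q0 * (((Finset.univ : Finset V).card : ℝ) - lam/a + 1/a)
        + lam/a - 1/a < (R:ℝ) + 1 := by
      have hb1 : g ^ q0 * (((d:ℝ)+1) * (1/a)) ≤
          (1/(((d:ℝ)+1) * Real.exp 1)) * (((d:ℝ)+1)*(1/a)) :=
        mul_le_mul_of_nonneg_right (le_trans hgq hexp) (by positivity)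
      have hb2 : (1/(((d:ℝ)+1) * Real.exp 1)) * (((d:ℝ)+1)*(1/a)) = 1/(Real.exp 1 * a) := by
        have hd1 : ((d:ℝ)+1) ≠ 0 := by positivity
        field_simp
      have he1 : (1:ℝ) < Real.exp 1 := by
        have := Real.exp_one_gt_d9
        linarith
      have hb3 : 1/(Real.exp 1 * a) < 1/a := by
        apply div_lt_div_of_pos_left one_pos ha
        nlinarith
      rw [hKey]
      calc g^q0 * (((d:ℝ)+1)*(1/a)) + lam/a - 1/a
          ≤ 1/(Real.exp 1 * a) + lam/a - 1/a := by rw [← hb2]; linarith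
        _ < lam/a := by linarith
        _ < (R:ℝ) + 1 := hRF
    have hlt : (((run G R S q0 Finset.univ).2).card : ℝ) < (R:ℝ) + 1 :=
      lt_of_le_of_lt h6 (max_lt (by linarith) hfinal)
    have : ((run G R S q0 Finset.univ).2).card < R + 1 := by exact_mod_cast hlt
    omega
  -- counting
  set 𝒮 : Finset (Finset V) := Finset.univ.filter
    (fun s : Finset V => (∀ u ∈ s, ∀ w ∈ s, ¬ G.Adj u w) ∧ s.card ≤ m) with h𝒮
  have step1 : ({S : Set V | S.Pairwise (fun u v => ¬ G.Adj u v) ∧ S.ncard ≤ m}).ncard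
      = 𝒮.card := by
    have himg : {S : Set V | S.Pairwise (fun u v => ¬ G.Adj u v) ∧ S.ncard ≤ m}
        = (fun s : Finset V => (s : Set V)) '' (𝒮 : Set (Finset V)) := by
      ext S
      simp only [Set.mem_setOf_eq, Set.mem_image, Finset.mem_coe, h𝒮, Finset.mem_filter,
        Finset.mem_univ, true_and]
      constructor
      · rintro ⟨hp, hm⟩
        refine ⟨S.toFinset, ⟨?_, ?_⟩, S.coe_toFinset⟩
        · intro u hu w hw
          rcases eq_or_ne u w with rfl | hne
          · exact fun h => G.irrefl h
          · exact hp (Set.mem_toFinset.1 hu) (Set.mem_toFinset.1 hw) hne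
        · rw [← Set.ncard_eq_toFinset_card']
          exact hm
      · rintro ⟨s, ⟨hst, hsc⟩, rfl⟩
        constructor
        · intro u hu w hw _
          exact hst u (by exact_mod_cast hu) w (by exact_mod_cast hw)
        · rw [Set.ncard_coe_finset]
          exact hsc
    rw [himg, Set.ncard_image_of_injective _ Finset.coe_injective, Set.ncard_coe_finset]
  set fV : V → ℕ := fun v => ((Fintype.equivFin V) v : ℕ) with hfVdef
  have hfV : Function.Injective fV := by
    intro u v h
    exact (Fintype.equivFin V).injective (Fin.ext h)
  set t1 : Finset (Finset V) := Finset.univ.powerset.filter (fun A : Finset V => A.card ≤ q0)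
    with ht1def
  set t2 : Finset (Finset ℕ) := (Finset.range R).powerset.filter (fun B : Finset ℕ => B.card ≤ m)
    with ht2def
  have step2 : 𝒮.card ≤ t1.card * t2.card := by
    rw [← Finset.card_product]
    apply Finset.card_le_card_of_injOn (fun s => ((run G R s q0 Finset.univ).1,
      ((s \ (run G R s q0 Finset.univ).1).image
        (fun v => (((run G R s q0 Finset.univ).2).filter
          (fun w => fV w < fV v)).card))))
    · intro s hs
      rw [h𝒮, Finset.mem_coe, Finset.mem_filter] at hs
      obtain ⟨-, hstab, hcard⟩ := hs
      rw [Finset.mem_coe, Finset.mem_product]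
      constructor
      · rw [ht1def, Finset.mem_filter, Finset.mem_powerset]
        exact ⟨Finset.subset_univ _, run_fst_card G R s q0 Finset.univ⟩
      · rw [ht2def, Finset.mem_filter, Finset.mem_powerset]
        constructor
        · intro x hx
          rw [Finset.mem_image] at hx
          obtain ⟨v, hv, rfl⟩ := hx
          rw [Finset.mem_sdiff] at hv
          have hvD : v ∈ (run G R s q0 Finset.univ).2 :=
            run_container G R s hstab q0 Finset.univ v (Finset.mem_univ v) hv.1 hv.2
          rw [Finset.mem_range]
          exact lt_of_lt_of_le (rnk_lt fV _ hvD) (hcont s)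
        · exact le_trans Finset.card_image_le
            (le_trans (Finset.card_le_card Finset.sdiff_subset) hcard)
    · intro s1 hs1 s2 hs2 heq
      simp only [Prod.mk.injEq] at heq
      obtain ⟨hA, hB⟩ := heq
      rw [h𝒮, Finset.mem_coe, Finset.mem_filter] at hs1 hs2
      obtain ⟨-, hstab1, -⟩ := hs1
      obtain ⟨-, hstab2, -⟩ := hs2
      have hD : (run G R s1 q0 Finset.univ).2 = (run G R s2 q0 Finset.univ).2 := by
        have h1 := run_reconstruct G R s1 q0 Finset.univ
        have h2 := run_reconstruct G R s2 q0 Finset.univ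
        calc (run G R s1 q0 Finset.univ).2
            = (run G R ((run G R s1 q0 Finset.univ).1) q0 Finset.univ).2 := by rw [h1]
          _ = (run G R ((run G R s2 q0 Finset.univ).1) q0 Finset.univ).2 := by rw [hA]
          _ = (run G R s2 q0 Finset.univ).2 := by rw [h2]
      rw [← hD] at hB
      have hsub1 : s1 \ (run G R s1 q0 Finset.univ).1 ⊆ (run G R s1 q0 Finset.univ).2 :=
        fun v hv => run_container G R s1 hstab1 q0 Finset.univ v (Finset.mem_univ v)
          (Finset.mem_sdiff.1 hv).1 (Finset.mem_sdiff.1 hv).2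
      have hsub2 : s2 \ (run G R s2 q0 Finset.univ).1 ⊆ (run G R s1 q0 Finset.univ).2 := by
        rw [hD]
        exact fun v hv => run_container G R s2 hstab2 q0 Finset.univ v (Finset.mem_univ v)
          (Finset.mem_sdiff.1 hv).1 (Finset.mem_sdiff.1 hv).2
      have hsd : s1 \ (run G R s1 q0 Finset.univ).1 = s2 \ (run G R s2 q0 Finset.univ).1 := by
        apply Finset.ext
        intro v
        constructor
        · intro hv
          have hmem : ((Finset.filter (fun w => fV w < fV v)
              (run G R s1 q0 Finset.univ).2).card) ∈
              (s2 \ (run G R s2 q0 Finset.univ).1).image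
                (fun v => (Finset.filter (fun w => fV w < fV v)
                  (run G R s1 q0 Finset.univ).2).card) := by
            rw [← hB]
            exact Finset.mem_image_of_mem _ hv
          rw [Finset.mem_image] at hmem
          obtain ⟨w, hw, hwe⟩ := hmem
          exact (rnk_inj fV hfV _ (hsub2 hw) (hsub1 hv) hwe) ▸ hw
        · intro hv
          have hmem : ((Finset.filter (fun w => fV w < fV v)
              (run G R s1 q0 Finset.univ).2).card) ∈
              (s1 \ (run G R s1 q0 Finset.univ).1).image
                (fun v => (Finset.filter (fun w => fV w < fV v)
                  (run G R s1 q0 Finset.univ).2).card) := by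
            rw [hB]
            exact Finset.mem_image_of_mem _ hv
          rw [Finset.mem_image] at hmem
          obtain ⟨w, hw, hwe⟩ := hmem
          exact (rnk_inj fV hfV _ (hsub1 hw) (hsub2 hv) hwe) ▸ hw
      have hA1 : (run G R s1 q0 Finset.univ).1 ⊆ s1 := (run_fst_subset G R s1 q0 Finset.univ).2
      have hA2 : (run G R s2 q0 Finset.univ).1 ⊆ s2 := (run_fst_subset G R s2 q0 Finset.univ).2
      calc s1 = (run G R s1 q0 Finset.univ).1 ∪ (s1 \ (run G R s1 q0 Finset.univ).1) :=
            (Finset.union_sdiff_of_subset hA1).symm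
        _ = (run G R s2 q0 Finset.univ).1 ∪ (s2 \ (run G R s2 q0 Finset.univ).1) := by
            rw [hsd, hA]
        _ = s2 := Finset.union_sdiff_of_subset hA2
  have ht1card : t1.card = ∑ i ∈ Finset.range (q0+1), (Fintype.card V).choose i := by
    rw [ht1def, card_powerset_filter_le, Finset.card_univ]
  have ht2card : t2.card = ∑ j ∈ Finset.range (m+1), R.choose j := by
    rw [ht2def, card_powerset_filter_le, Finset.card_range]
  rw [step1]
  calc (𝒮.card : ℝ) ≤ ((t1.card * t2.card : ℕ) : ℝ) := by exact_mod_cast step2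
    _ = (∑ i ∈ Finset.range (q0 + 1), ((Fintype.card V).choose i : ℝ)) *
        (∑ j ∈ Finset.range (m + 1), (R.choose j : ℝ)) := by
      rw [ht1card, ht2card]
      push_cast
      ring
end
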